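/- arXiv:2303.12522 — 7 statements merged into one kernel-verified Lean document; each statement's English description precedes it below -/
import Mathlib

section
/- Let $a<b$, $T>0$, $\mu\in\mathbb{R}$, and let $u\in C^2([0,T]\times[a,b])$, $\theta\in C^{1,2}([0,T]\times[a,b])$ satisfy $u_{tt}-u_{xx}=\mu\theta_x$ and $\theta_t-\theta_{xx}=\mu\theta u_{tx}$ on $(0,T)\times(a,b)$, with boundary conditions $u(\cdot,a)=u(\cdot,b)=0$ and $\theta_x(\cdot,a)=\theta_x(\cdot,b)=0$. Then for all $t\in[0,T]$, the total energy $\frac12\int_a^b u_t^2\,dx+\frac12\int_a^b u_x^2\,dx+\int_a^b\theta\,dx$ is constant in time, i.e. equals its value at $t=0$. -/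
open Set MeasureTheory Function

lemma swap_aux {g : ℝ → ℝ → ℝ} (hg : Continuous (uncurry g))
    {c d e f : ℝ} (hcd : c ≤ d) (hef : e ≤ f) :
    (∫ s in c..d, (∫ x in e..f, g s x)) = ∫ x in e..f, (∫ s in c..d, g s x) := by
  have h1 : IntegrableOn (uncurry g) (Icc c d ×ˢ Icc e f) (volume.prod volume) := by
    rw [← Measure.volume_eq_prod]
    exact hg.continuousOn.integrableOn_compact (isCompact_Icc.prod isCompact_Icc)
  have h2 : Integrable (uncurry g)
      ((volume.restrict (Ioc c d)).prod (volume.restrict (Ioc e f))) := by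
    rw [Measure.prod_restrict]
    exact h1.mono_set (Set.prod_mono Ioc_subset_Icc_self Ioc_subset_Icc_self)
  have := MeasureTheory.integral_integral_swap h2
  simpa only [intervalIntegral.integral_of_le hcd, intervalIntegral.integral_of_le hef] using this

lemma integral_congr_Ioo {c d : ℝ} (hcd : c ≤ d) {f g : ℝ → ℝ}
    (h : ∀ x ∈ Set.Ioo c d, f x = g x) :
    ∫ x in c..d, f x = ∫ x in c..d, g x := by
  apply intervalIntegral.integral_congr_ae
  have hd : ∀ᵐ x : ℝ, x ≠ d := by
    rw [MeasureTheory.ae_iff]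
    simpa using measure_singleton d
  filter_upwards [hd] with x hx hxI
  rw [uIoc_of_le hcd] at hxI
  exact h x ⟨hxI.1, lt_of_le_of_ne hxI.2 hx⟩

lemma ftc_within {c d : ℝ} {f f' : ℝ → ℝ} {e : ℝ} (he : e ∈ Set.Icc c d)
    (hd : ∀ s ∈ Set.Icc c d, HasDerivWithinAt f (f' s) (Set.Icc c d) s)
    (hint : IntervalIntegrable f' MeasureTheory.volume c e) :
    ∫ s in c..e, f' s = f e - f c := by
  apply intervalIntegral.integral_eq_sub_of_hasDeriv_right_of_le he.1
    (ContinuousOn.mono (fun s hs => (hd s hs).continuousWithinAt) (Icc_subset_Icc le_rfl he.2))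
    (fun s hs => ?_) hint
  have hmem : Set.Icc c d ∈ nhds s := Icc_mem_nhds hs.1 (lt_of_lt_of_le hs.2 he.2)
  exact ((hd s ⟨hs.1.le, hs.2.le.trans he.2⟩).hasDerivAt hmem).hasDerivWithinAt

theorem stmt_aux (a b T μ : ℝ) (hab : a < b) (hT : 0 < T)
    (u ut utt ux uxx utx θ θt θx θxx : ℝ → ℝ → ℝ)
    (hut : ∀ t ∈ Icc 0 T, ∀ x ∈ Icc a b,
      HasDerivWithinAt (fun s => u s x) (ut t x) (Icc 0 T) t)
    (hutt : ∀ t ∈ Icc 0 T, ∀ x ∈ Icc a b,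
      HasDerivWithinAt (fun s => ut s x) (utt t x) (Icc 0 T) t)
    (hux : ∀ t ∈ Icc 0 T, ∀ x ∈ Icc a b,
      HasDerivWithinAt (u t) (ux t x) (Icc a b) x)
    (huxx : ∀ t ∈ Icc 0 T, ∀ x ∈ Icc a b,
      HasDerivWithinAt (ux t) (uxx t x) (Icc a b) x)
    (hutx : ∀ t ∈ Icc 0 T, ∀ x ∈ Icc a b,
      HasDerivWithinAt (ut t) (utx t x) (Icc a b) x)
    (hθt : ∀ t ∈ Icc 0 T, ∀ x ∈ Icc a b,
      HasDerivWithinAt (fun s => θ s x) (θt t x) (Icc 0 T) t)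
    (hθx : ∀ t ∈ Icc 0 T, ∀ x ∈ Icc a b,
      HasDerivWithinAt (θ t) (θx t x) (Icc a b) x)
    (hθxx : ∀ t ∈ Icc 0 T, ∀ x ∈ Icc a b,
      HasDerivWithinAt (θx t) (θxx t x) (Icc a b) x)
    (cut : Continuous (uncurry ut)) (cutt : Continuous (uncurry utt))
    (cux : Continuous (uncurry ux)) (cuxx : Continuous (uncurry uxx))
    (cutx : Continuous (uncurry utx)) (cθ : Continuous (uncurry θ))
    (cθt : Continuous (uncurry θt)) (cθx : Continuous (uncurry θx))
    (cθxx : Continuous (uncurry θxx))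
    (hwave : ∀ t ∈ Ioo 0 T, ∀ x ∈ Ioo a b, utt t x - uxx t x = μ * θx t x)
    (hheat : ∀ t ∈ Ioo 0 T, ∀ x ∈ Ioo a b, θt t x - θxx t x = μ * θ t x * utx t x)
    (hbd : ∀ t ∈ Icc 0 T, u t a = 0 ∧ u t b = 0 ∧ θx t a = 0 ∧ θx t b = 0) :
    ∀ t ∈ Icc 0 T,
      (1/2) * (∫ x in a..b, (ut t x) ^ 2) + (1/2) * (∫ x in a..b, (ux t x) ^ 2)
          + (∫ x in a..b, θ t x)
        = (1/2) * (∫ x in a..b, (ut 0 x) ^ 2) + (1/2) * (∫ x in a..b, (ux 0 x) ^ 2)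
          + (∫ x in a..b, θ 0 x) := by
  intro t ht
  obtain ⟨ht0, htT⟩ := ht
  have h0T : (0:ℝ) ∈ Icc (0:ℝ) T := ⟨le_rfl, hT.le⟩
  have haJ : a ∈ Icc a b := ⟨le_rfl, hab.le⟩
  have hbJ : b ∈ Icc a b := ⟨hab.le, le_rfl⟩
  -- slice continuity helpers
  have cslt : ∀ (f : ℝ → ℝ → ℝ), Continuous (uncurry f) → ∀ x : ℝ,
      Continuous (fun s => f s x) :=
    fun f hf x => hf.comp (continuous_id.prodMk continuous_const)
  have cslx : ∀ (f : ℝ → ℝ → ℝ), Continuous (uncurry f) → ∀ s : ℝ,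
      Continuous (fun x => f s x) :=
    fun f hf s => hf.comp (continuous_const.prodMk continuous_id)
  -- Step A: ut vanishes on lateral boundary
  have huta : ∀ s ∈ Icc (0:ℝ) T, ut s a = 0 := by
    intro s hs
    have h1 := hut s hs a haJ
    have h2 : HasDerivWithinAt (fun r => u r a) 0 (Icc 0 T) s :=
      (hasDerivWithinAt_const s _ (0:ℝ)).congr (fun r hr => (hbd r hr).1) ((hbd s hs).1)
    rw [← h1.derivWithin (uniqueDiffOn_Icc hT s hs),
      h2.derivWithin (uniqueDiffOn_Icc hT s hs)]
  have hutb : ∀ s ∈ Icc (0:ℝ) T, ut s b = 0 := by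
    intro s hs
    have h1 := hut s hs b hbJ
    have h2 : HasDerivWithinAt (fun r => u r b) 0 (Icc 0 T) s :=
      (hasDerivWithinAt_const s _ (0:ℝ)).congr (fun r hr => (hbd r hr).2.1) ((hbd s hs).2.1)
    rw [← h1.derivWithin (uniqueDiffOn_Icc hT s hs),
      h2.derivWithin (uniqueDiffOn_Icc hT s hs)]
  -- FTC in x for ut
  have hutFTCx : ∀ s ∈ Icc (0:ℝ) T, ∀ y ∈ Icc a b, ut s y = ∫ z in a..y, utx s z := by
    intro s hs y hy
    have h := ftc_within hy (fun z hz => hutx s hs z hz)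
      ((cslx utx cutx s).intervalIntegrable a y)
    rw [h, huta s hs, sub_zero]
  -- Step B: integrated Schwarz identity
  have hB : ∀ x ∈ Icc a b, ∀ s ∈ Icc (0:ℝ) T,
      ux s x = ux 0 x + ∫ r in (0:ℝ)..s, utx r x := by
    intro x hx s hs
    have cΦ : Continuous (fun z => ∫ r in (0:ℝ)..s, utx r z) := by
      apply intervalIntegral.continuous_parametric_intervalIntegral_of_continuous'
        (f := fun z r => utx r z) _ 0 s
      exact cutx.comp continuous_swap
    have hLR : ∀ y ∈ Icc a b, u s y - u 0 y = ∫ z in a..y, ∫ r in (0:ℝ)..s, utx r z := by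
      intro y hy
      have l1 : ∫ r in (0:ℝ)..s, ut r y = u s y - u 0 y :=
        ftc_within hs (fun r hr => hut r hr y hy) ((cslt ut cut y).intervalIntegrable 0 s)
      have l2 : ∫ r in (0:ℝ)..s, ut r y = ∫ r in (0:ℝ)..s, ∫ z in a..y, utx r z := by
        apply intervalIntegral.integral_congr
        intro r hr
        rw [uIcc_of_le hs.1] at hr
        exact hutFTCx r ⟨hr.1, hr.2.trans hs.2⟩ y hy
      have l3 : (∫ r in (0:ℝ)..s, ∫ z in a..y, utx r z)
          = ∫ z in a..y, ∫ r in (0:ℝ)..s, utx r z := swap_aux cutx hs.1 hy.1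
      rw [← l1, l2, l3]
    have hL : HasDerivWithinAt (fun y => u s y - u 0 y) (ux s x - ux 0 x) (Icc a b) x :=
      (hux s hs x hx).sub (hux 0 h0T x hx)
    have hR : HasDerivWithinAt (fun y => ∫ z in a..y, ∫ r in (0:ℝ)..s, utx r z)
        (∫ r in (0:ℝ)..s, utx r x) (Icc a b) x :=
      (intervalIntegral.integral_hasDerivAt_right
        (cΦ.intervalIntegrable a x) (cΦ.stronglyMeasurableAtFilter volume _)
        cΦ.continuousAt).hasDerivWithinAt
    have hL' : HasDerivWithinAt (fun y => ∫ z in a..y, ∫ r in (0:ℝ)..s, utx r z)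
        (ux s x - ux 0 x) (Icc a b) x :=
      hL.congr (fun y hy => (hLR y hy).symm) ((hLR x hx).symm)
    have heq : (∫ r in (0:ℝ)..s, utx r x) = ux s x - ux 0 x := by
      rw [← hR.derivWithin (uniqueDiffOn_Icc hab x hx),
        hL'.derivWithin (uniqueDiffOn_Icc hab x hx)]
    rw [heq]; ring
  -- Step C: time derivative of ux
  have hC : ∀ x ∈ Icc a b, ∀ s ∈ Icc (0:ℝ) T,
      HasDerivWithinAt (fun r => ux r x) (utx s x) (Icc 0 T) s := by
    intro x hx s hs
    have hg : HasDerivAt (fun r => ux 0 x + ∫ r' in (0:ℝ)..r, utx r' x) (utx s x) s := by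
      have h := intervalIntegral.integral_hasDerivAt_right
        ((cslt utx cutx x).intervalIntegrable 0 s)
        ((cslt utx cutx x).stronglyMeasurableAtFilter volume _)
        (cslt utx cutx x).continuousAt
      simpa using h.const_add (ux 0 x)
    exact hg.hasDerivWithinAt.congr (fun r hr => hB x hx r hr) (hB x hx s hs)
  -- energy density and its time derivative
  have hD : ∀ x ∈ Icc a b, ∀ s ∈ Icc (0:ℝ) T,
      HasDerivWithinAt (fun r => (1/2) * ut r x ^ 2 + (1/2) * ux r x ^ 2 + θ r x)
        (ut s x * utt s x + ux s x * utx s x + θt s x) (Icc 0 T) s := by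
    intro x hx s hs
    have h1 := ((hutt s hs x hx).pow 2).const_mul (1/2 : ℝ)
    have h2 := ((hC x hx s hs).pow 2).const_mul (1/2 : ℝ)
    have h3 := hθt s hs x hx
    have h := (h1.add h2).add h3
    refine HasDerivWithinAt.congr_deriv h ?_
    simp only [Nat.cast_ofNat, show (2:ℕ) - 1 = 1 from rfl, pow_one]
    ring
  have cG : Continuous (uncurry (fun s x => ut s x * utt s x + ux s x * utx s x + θt s x)) :=
    ((cut.mul cutt).add (cux.mul cutx)).add cθt
  have hFTCt : ∀ x ∈ Icc a b,
      (∫ s in (0:ℝ)..t, (ut s x * utt s x + ux s x * utx s x + θt s x))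
        = ((1/2) * ut t x ^ 2 + (1/2) * ux t x ^ 2 + θ t x)
          - ((1/2) * ut 0 x ^ 2 + (1/2) * ux 0 x ^ 2 + θ 0 x) := by
    intro x hx
    exact ftc_within ⟨ht0, htT⟩ (fun s hs => hD x hx s hs)
      ((cslt _ cG x).intervalIntegrable 0 t)
  -- inner spatial integral vanishes at interior times
  have hinner : ∀ s ∈ Ioo (0:ℝ) t,
      (∫ x in a..b, (ut s x * utt s x + ux s x * utx s x + θt s x)) = 0 := by
    intro s hs
    have hsI : s ∈ Icc (0:ℝ) T := ⟨hs.1.le, hs.2.le.trans htT⟩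
    have hsO : s ∈ Ioo (0:ℝ) T := ⟨hs.1, lt_of_lt_of_le hs.2 htT⟩
    have hHx : ∀ x ∈ Icc a b,
        HasDerivWithinAt (fun y => ut s y * ux s y + μ * (ut s y * θ s y) + θx s y)
          (utx s x * ux s x + ut s x * uxx s x
            + μ * (utx s x * θ s x + ut s x * θx s x) + θxx s x) (Icc a b) x := by
      intro x hx
      have h1 := (hutx s hsI x hx).mul (huxx s hsI x hx)
      have h2 := ((hutx s hsI x hx).mul (hθx s hsI x hx)).const_mul μ
      have h3 := hθxx s hsI x hx
      exact (h1.add h2).add h3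
    have cD : Continuous (fun x => utx s x * ux s x + ut s x * uxx s x
        + μ * (utx s x * θ s x + ut s x * θx s x) + θxx s x) := by
      have := ((((cslx utx cutx s).mul (cslx ux cux s)).add
        ((cslx ut cut s).mul (cslx uxx cuxx s))).add
        (continuous_const.mul (((cslx utx cutx s).mul (cslx θ cθ s)).add
          ((cslx ut cut s).mul (cslx θx cθx s))) : Continuous fun x => μ * _)).add (cslx θxx cθxx s)
      exact this
    have e1 : (∫ x in a..b, (ut s x * utt s x + ux s x * utx s x + θt s x))
        = ∫ x in a..b, (utx s x * ux s x + ut s x * uxx s x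
            + μ * (utx s x * θ s x + ut s x * θx s x) + θxx s x) := by
      apply integral_congr_Ioo hab.le
      intro x hx
      have hw := hwave s hsO x hx
      have hh := hheat s hsO x hx
      linear_combination ut s x * hw + hh
    have e2 : (∫ x in a..b, (utx s x * ux s x + ut s x * uxx s x
          + μ * (utx s x * θ s x + ut s x * θx s x) + θxx s x))
        = (ut s b * ux s b + μ * (ut s b * θ s b) + θx s b)
          - (ut s a * ux s a + μ * (ut s a * θ s a) + θx s a) :=
      ftc_within hbJ hHx (cD.intervalIntegrable a b)
    rw [e1, e2, huta s hsI, hutb s hsI, (hbd s hsI).2.2.1, (hbd s hsI).2.2.2]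
    ring
  -- put it together
  have cF : ∀ s : ℝ, Continuous (fun x => (1/2) * ut s x ^ 2 + (1/2) * ux s x ^ 2 + θ s x) :=
    fun s => ((continuous_const.mul ((cslx ut cut s).pow 2)).add
      (continuous_const.mul ((cslx ux cux s).pow 2))).add (cslx θ cθ s)
  have hzero : (∫ x in a..b, (((1/2) * ut t x ^ 2 + (1/2) * ux t x ^ 2 + θ t x)
      - ((1/2) * ut 0 x ^ 2 + (1/2) * ux 0 x ^ 2 + θ 0 x))) = 0 := by
    have s1 : (∫ x in a..b, (((1/2) * ut t x ^ 2 + (1/2) * ux t x ^ 2 + θ t x)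
        - ((1/2) * ut 0 x ^ 2 + (1/2) * ux 0 x ^ 2 + θ 0 x)))
        = ∫ x in a..b, ∫ s in (0:ℝ)..t, (ut s x * utt s x + ux s x * utx s x + θt s x) := by
      apply intervalIntegral.integral_congr
      intro x hx
      rw [uIcc_of_le hab.le] at hx
      exact (hFTCt x hx).symm
    rw [s1, ← swap_aux cG ht0 hab.le]
    have s2 : (∫ s in (0:ℝ)..t,
        (∫ x in a..b, (ut s x * utt s x + ux s x * utx s x + θt s x)))
        = ∫ s in (0:ℝ)..t, (0:ℝ) :=
      integral_congr_Ioo ht0 (fun s hs => hinner s hs)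
    rw [s2]
    simp
  have hsub : (∫ x in a..b, (((1/2) * ut t x ^ 2 + (1/2) * ux t x ^ 2 + θ t x)
      - ((1/2) * ut 0 x ^ 2 + (1/2) * ux 0 x ^ 2 + θ 0 x)))
      = (∫ x in a..b, ((1/2) * ut t x ^ 2 + (1/2) * ux t x ^ 2 + θ t x))
        - ∫ x in a..b, ((1/2) * ut 0 x ^ 2 + (1/2) * ux 0 x ^ 2 + θ 0 x) :=
    intervalIntegral.integral_sub ((cF t).intervalIntegrable a b)
      ((cF 0).intervalIntegrable a b)
  have hsplit : ∀ s : ℝ, (∫ x in a..b, ((1/2) * ut s x ^ 2 + (1/2) * ux s x ^ 2 + θ s x))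
      = (1/2) * (∫ x in a..b, ut s x ^ 2) + (1/2) * (∫ x in a..b, ux s x ^ 2)
        + ∫ x in a..b, θ s x := by
    intro s
    have cA : Continuous (fun x => (1/2:ℝ) * ut s x ^ 2) :=
      continuous_const.mul ((cslx ut cut s).pow 2)
    have cB : Continuous (fun x => (1/2:ℝ) * ux s x ^ 2) :=
      continuous_const.mul ((cslx ux cux s).pow 2)
    rw [intervalIntegral.integral_add (show IntervalIntegrable (fun x => (1/2:ℝ) * ut s x ^ 2 + (1/2:ℝ) * ux s x ^ 2) volume a b from
          (cA.add cB).intervalIntegrable a b)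
        ((cslx θ cθ s).intervalIntegrable a b),
      intervalIntegral.integral_add (cA.intervalIntegrable a b) (cB.intervalIntegrable a b),
      intervalIntegral.integral_const_mul, intervalIntegral.integral_const_mul]
  rw [hsub, hsplit t, hsplit 0] at hzero
  linarith


theorem stmt_0 (a b T μ : ℝ) (hab : a < b) (hT : 0 < T)
    (u ut utt ux uxx utx θ θt θx θxx : ℝ → ℝ → ℝ)
    (hut : ∀ t ∈ Icc 0 T, ∀ x ∈ Icc a b,
      HasDerivWithinAt (fun s => u s x) (ut t x) (Icc 0 T) t)
    (hutt : ∀ t ∈ Icc 0 T, ∀ x ∈ Icc a b,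
      HasDerivWithinAt (fun s => ut s x) (utt t x) (Icc 0 T) t)
    (hux : ∀ t ∈ Icc 0 T, ∀ x ∈ Icc a b,
      HasDerivWithinAt (u t) (ux t x) (Icc a b) x)
    (huxx : ∀ t ∈ Icc 0 T, ∀ x ∈ Icc a b,
      HasDerivWithinAt (ux t) (uxx t x) (Icc a b) x)
    (hutx : ∀ t ∈ Icc 0 T, ∀ x ∈ Icc a b,
      HasDerivWithinAt (ut t) (utx t x) (Icc a b) x)
    (hθt : ∀ t ∈ Icc 0 T, ∀ x ∈ Icc a b,
      HasDerivWithinAt (fun s => θ s x) (θt t x) (Icc 0 T) t)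
    (hθx : ∀ t ∈ Icc 0 T, ∀ x ∈ Icc a b,
      HasDerivWithinAt (θ t) (θx t x) (Icc a b) x)
    (hθxx : ∀ t ∈ Icc 0 T, ∀ x ∈ Icc a b,
      HasDerivWithinAt (θx t) (θxx t x) (Icc a b) x)
    (hcont : ContinuousOn (fun p : ℝ × ℝ =>
      (utt p.1 p.2, uxx p.1 p.2, utx p.1 p.2, θt p.1 p.2, θxx p.1 p.2, θx p.1 p.2,
        ut p.1 p.2, ux p.1 p.2, θ p.1 p.2)) (Icc 0 T ×ˢ Icc a b))
    (hwave : ∀ t ∈ Ioo 0 T, ∀ x ∈ Ioo a b, utt t x - uxx t x = μ * θx t x)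
    (hheat : ∀ t ∈ Ioo 0 T, ∀ x ∈ Ioo a b, θt t x - θxx t x = μ * θ t x * utx t x)
    (hbd : ∀ t ∈ Icc 0 T, u t a = 0 ∧ u t b = 0 ∧ θx t a = 0 ∧ θx t b = 0) :
    ∀ t ∈ Icc 0 T,
      (1/2) * (∫ x in a..b, (ut t x) ^ 2) + (1/2) * (∫ x in a..b, (ux t x) ^ 2)
          + (∫ x in a..b, θ t x)
        = (1/2) * (∫ x in a..b, (ut 0 x) ^ 2) + (1/2) * (∫ x in a..b, (ux 0 x) ^ 2)
          + (∫ x in a..b, θ 0 x) := by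
  -- clamping maps
  set pt : ℝ → ℝ := fun s => max 0 (min T s) with hptdef
  set px : ℝ → ℝ := fun y => max a (min b y) with hpxdef
  have hptmem : ∀ s, pt s ∈ Icc (0:ℝ) T :=
    fun s => ⟨le_max_left _ _, max_le hT.le (min_le_left _ _)⟩
  have hpxmem : ∀ y, px y ∈ Icc a b :=
    fun y => ⟨le_max_left _ _, max_le hab.le (min_le_left _ _)⟩
  have hptid : ∀ s ∈ Icc (0:ℝ) T, pt s = s := by
    intro s hs
    simp only [hptdef]
    rw [min_eq_right hs.2, max_eq_right hs.1]
  have hpxid : ∀ y ∈ Icc a b, px y = y := by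
    intro y hy
    simp only [hpxdef]
    rw [min_eq_right hy.2, max_eq_right hy.1]
  have cpt : Continuous pt := continuous_const.max (continuous_const.min continuous_id)
  have cpx : Continuous px := continuous_const.max (continuous_const.min continuous_id)
  have hclamp : Continuous (fun p : ℝ × ℝ => (pt p.1, px p.2)) :=
    (cpt.comp continuous_fst).prodMk (cpx.comp continuous_snd)
  have hbig : Continuous (fun p : ℝ × ℝ =>
      (utt (pt p.1) (px p.2), uxx (pt p.1) (px p.2), utx (pt p.1) (px p.2),
        θt (pt p.1) (px p.2), θxx (pt p.1) (px p.2), θx (pt p.1) (px p.2),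
        ut (pt p.1) (px p.2), ux (pt p.1) (px p.2), θ (pt p.1) (px p.2))) :=
    hcont.comp_continuous hclamp (fun p => ⟨hptmem _, hpxmem _⟩)
  have cutt' : Continuous (uncurry (fun s y => utt (pt s) (px y))) := hbig.fst
  have cuxx' : Continuous (uncurry (fun s y => uxx (pt s) (px y))) := hbig.snd.fst
  have cutx' : Continuous (uncurry (fun s y => utx (pt s) (px y))) := hbig.snd.snd.fst
  have cθt' : Continuous (uncurry (fun s y => θt (pt s) (px y))) := hbig.snd.snd.snd.fst
  have cθxx' : Continuous (uncurry (fun s y => θxx (pt s) (px y))) := hbig.snd.snd.snd.snd.fst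
  have cθx' : Continuous (uncurry (fun s y => θx (pt s) (px y))) :=
    hbig.snd.snd.snd.snd.snd.fst
  have cut' : Continuous (uncurry (fun s y => ut (pt s) (px y))) :=
    hbig.snd.snd.snd.snd.snd.snd.fst
  have cux' : Continuous (uncurry (fun s y => ux (pt s) (px y))) :=
    hbig.snd.snd.snd.snd.snd.snd.snd.fst
  have cθ' : Continuous (uncurry (fun s y => θ (pt s) (px y))) :=
    hbig.snd.snd.snd.snd.snd.snd.snd.snd
  -- transfer of derivative hypotheses
  have trT : ∀ (f g : ℝ → ℝ → ℝ),
      (∀ s ∈ Icc (0:ℝ) T, ∀ x ∈ Icc a b,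
        HasDerivWithinAt (fun r => f r x) (g s x) (Icc 0 T) s) →
      ∀ s ∈ Icc (0:ℝ) T, ∀ x ∈ Icc a b,
        HasDerivWithinAt (fun r => f (pt r) (px x)) (g (pt s) (px x)) (Icc 0 T) s := by
    intro f g hf s hs x hx
    rw [hpxid x hx, hptid s hs]
    exact (hf s hs x hx).congr (fun r hr => by rw [hptid r hr]) (by rw [hptid s hs])
  have trX : ∀ (f g : ℝ → ℝ → ℝ),
      (∀ s ∈ Icc (0:ℝ) T, ∀ x ∈ Icc a b,
        HasDerivWithinAt (f s) (g s x) (Icc a b) x) →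
      ∀ s ∈ Icc (0:ℝ) T, ∀ x ∈ Icc a b,
        HasDerivWithinAt (fun y => f (pt s) (px y)) (g (pt s) (px x)) (Icc a b) x := by
    intro f g hf s hs x hx
    rw [hptid s hs, hpxid x hx]
    exact (hf s hs x hx).congr (fun y hy => by rw [hpxid y hy]) (by rw [hpxid x hx])
  have key := stmt_aux a b T μ hab hT
    (fun s y => u (pt s) (px y)) (fun s y => ut (pt s) (px y)) (fun s y => utt (pt s) (px y))
    (fun s y => ux (pt s) (px y)) (fun s y => uxx (pt s) (px y)) (fun s y => utx (pt s) (px y))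
    (fun s y => θ (pt s) (px y)) (fun s y => θt (pt s) (px y)) (fun s y => θx (pt s) (px y))
    (fun s y => θxx (pt s) (px y))
    (trT u ut hut) (trT ut utt hutt) (trX u ux hux) (trX ux uxx huxx) (trX ut utx hutx)
    (trT θ θt hθt) (trX θ θx hθx) (trX θx θxx hθxx)
    cut' cutt' cux' cuxx' cutx' cθ' cθt' cθx' cθxx'
    (fun s hs x hx => by
      simp only [hptid s (Ioo_subset_Icc_self hs), hpxid x (Ioo_subset_Icc_self hx)]
      exact hwave s hs x hx)
    (fun s hs x hx => by
      simp only [hptid s (Ioo_subset_Icc_self hs), hpxid x (Ioo_subset_Icc_self hx)]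
      exact hheat s hs x hx)
    (fun s hs => by
      simp only [hptid s hs, hpxid a ⟨le_rfl, hab.le⟩, hpxid b ⟨hab.le, le_rfl⟩]
      exact hbd s hs)
  intro t ht
  have h0T : (0:ℝ) ∈ Icc (0:ℝ) T := ⟨le_rfl, hT.le⟩
  have conv2 : ∀ (f : ℝ → ℝ → ℝ) (s : ℝ), s ∈ Icc (0:ℝ) T →
      (∫ x in a..b, f (pt s) (px x) ^ 2) = ∫ x in a..b, f s x ^ 2 := by
    intro f s hs
    apply intervalIntegral.integral_congr
    intro x hx
    rw [uIcc_of_le hab.le] at hx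
    simp only [hptid s hs, hpxid x hx]
  have conv1 : ∀ (f : ℝ → ℝ → ℝ) (s : ℝ), s ∈ Icc (0:ℝ) T →
      (∫ x in a..b, f (pt s) (px x)) = ∫ x in a..b, f s x := by
    intro f s hs
    apply intervalIntegral.integral_congr
    intro x hx
    rw [uIcc_of_le hab.le] at hx
    simp only [hptid s hs, hpxid x hx]
  have := key t ht
  rwa [conv2 ut t ht, conv2 ux t ht, conv1 θ t ht, conv2 ut 0 h0T, conv2 ux 0 h0T,
    conv1 θ 0 h0T] at this
end

section
/- Let $a<b$ and let $\psi\in C^2([a,b])$ be a positive function with $\psi'(a)=\psi'(b)=0$. Then $\int_a^b \left[(\psi^{1/2})''\right]^2\,dx \le \frac{13}{8}\int_a^b \psi\left[(\log\psi)''\right]^2\,dx$. -/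
open Set MeasureTheory

theorem stmt_1 (a b : ℝ) (hab : a < b) (ψ ψ' ψ'' : ℝ → ℝ)
    (hpos : ∀ x ∈ Icc a b, 0 < ψ x)
    (hψ' : ∀ x ∈ Icc a b, HasDerivWithinAt ψ (ψ' x) (Icc a b) x)
    (hψ'' : ∀ x ∈ Icc a b, HasDerivWithinAt ψ' (ψ'' x) (Icc a b) x)
    (hcont : ContinuousOn ψ'' (Icc a b))
    (hba : ψ' a = 0) (hbb : ψ' b = 0) :
    (∫ x in a..b,
        (derivWithin (derivWithin (fun y => Real.sqrt (ψ y)) (Icc a b)) (Icc a b) x) ^ 2)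
      ≤ (13/8) * ∫ x in a..b,
          ψ x * (derivWithin (derivWithin (fun y => Real.log (ψ y)) (Icc a b)) (Icc a b) x) ^ 2 := by
  have hU : UniqueDiffOn ℝ (Icc a b) := uniqueDiffOn_Icc hab
  have hne : ∀ x ∈ Icc a b, ψ x ≠ 0 := fun x hx => (hpos x hx).ne'
  have hsp : ∀ x ∈ Icc a b, 0 < Real.sqrt (ψ x) := fun x hx => Real.sqrt_pos.2 (hpos x hx)
  have hcψ : ContinuousOn ψ (Icc a b) := fun x hx => (hψ' x hx).continuousWithinAt
  have hcψ' : ContinuousOn ψ' (Icc a b) := fun x hx => (hψ'' x hx).continuousWithinAt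
  set g2 : ℝ → ℝ := fun x => ψ'' x / (2 * Real.sqrt (ψ x)) - (ψ' x)^2 / (4 * ψ x * Real.sqrt (ψ x)) with hg2def
  set l2 : ℝ → ℝ := fun x => ψ'' x / ψ x - (ψ' x)^2 / (ψ x)^2 with hl2def
  set F' : ℝ → ℝ := fun x => (3 * (ψ' x)^2 * ψ'' x * ψ x - 2 * (ψ' x)^4) / (ψ x)^3 with hF'def
  -- first derivative of sqrt ∘ ψ
  have hg1 : ∀ x ∈ Icc a b, HasDerivWithinAt (fun y => Real.sqrt (ψ y))
      (ψ' x / (2 * Real.sqrt (ψ x))) (Icc a b) x :=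
    fun x hx => (hψ' x hx).sqrt (hne x hx)
  -- second derivative of sqrt ∘ ψ
  have hg2 : ∀ x ∈ Icc a b, HasDerivWithinAt (fun y => ψ' y / (2 * Real.sqrt (ψ y)))
      (g2 x) (Icc a b) x := by
    intro x hx
    have h := (hψ'' x hx).div ((hg1 x hx).const_mul 2)
      (by have := hsp x hx; positivity)
    refine h.congr_deriv (Eq.symm ?_)
    have hs0 : Real.sqrt (ψ x) ≠ 0 := (hsp x hx).ne'
    simp only [hg2def]
    set s := Real.sqrt (ψ x) with hsdef
    have hs : s ^ 2 = ψ x := Real.sq_sqrt (hpos x hx).le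
    rw [← hs]
    field_simp
    ring
  -- first derivative of log ∘ ψ
  have hl1 : ∀ x ∈ Icc a b, HasDerivWithinAt (fun y => Real.log (ψ y))
      (ψ' x / ψ x) (Icc a b) x :=
    fun x hx => (hψ' x hx).log (hne x hx)
  -- second derivative of log ∘ ψ
  have hl2 : ∀ x ∈ Icc a b, HasDerivWithinAt (fun y => ψ' y / ψ y)
      (l2 x) (Icc a b) x := by
    intro x hx
    have h := (hψ'' x hx).div (hψ' x hx) (hne x hx)
    refine h.congr_deriv (Eq.symm ?_)
    simp only [hl2def]
    field_simp [hne x hx]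
  -- identify the derivWithin expressions
  have hd2 : ∀ x ∈ Icc a b,
      derivWithin (derivWithin (fun y => Real.sqrt (ψ y)) (Icc a b)) (Icc a b) x = g2 x := by
    intro x hx
    have heq : EqOn (derivWithin (fun y => Real.sqrt (ψ y)) (Icc a b))
        (fun y => ψ' y / (2 * Real.sqrt (ψ y))) (Icc a b) :=
      fun y hy => (hg1 y hy).derivWithin (hU y hy)
    rw [derivWithin_congr heq (heq hx)]
    exact (hg2 x hx).derivWithin (hU x hx)
  have hd2l : ∀ x ∈ Icc a b,
      derivWithin (derivWithin (fun y => Real.log (ψ y)) (Icc a b)) (Icc a b) x = l2 x := by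
    intro x hx
    have heq : EqOn (derivWithin (fun y => Real.log (ψ y)) (Icc a b))
        (fun y => ψ' y / ψ y) (Icc a b) :=
      fun y hy => (hl1 y hy).derivWithin (hU y hy)
    rw [derivWithin_congr heq (heq hx)]
    exact (hl2 x hx).derivWithin (hU x hx)
  -- rewrite integrals
  have huIcc : uIcc a b = Icc a b := uIcc_of_le hab.le
  have hint1 : (∫ x in a..b,
      (derivWithin (derivWithin (fun y => Real.sqrt (ψ y)) (Icc a b)) (Icc a b) x) ^ 2)
      = ∫ x in a..b, (g2 x) ^ 2 := by
    apply intervalIntegral.integral_congr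
    intro x hx
    rw [huIcc] at hx
    simp [hd2 x hx]
  have hint2 : (∫ x in a..b,
      ψ x * (derivWithin (derivWithin (fun y => Real.log (ψ y)) (Icc a b)) (Icc a b) x) ^ 2)
      = ∫ x in a..b, ψ x * (l2 x) ^ 2 := by
    apply intervalIntegral.integral_congr
    intro x hx
    rw [huIcc] at hx
    simp [hd2l x hx]
  rw [hint1, hint2]
  -- continuity facts
  have hcs : ContinuousOn (fun y => Real.sqrt (ψ y)) (Icc a b) :=
    Real.continuous_sqrt.comp_continuousOn hcψ
  have hcg2 : ContinuousOn g2 (Icc a b) := by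
    apply ContinuousOn.sub
    · exact hcont.div (continuousOn_const.mul hcs)
        (fun x hx => by have := hsp x hx; positivity)
    · exact (hcψ'.pow 2).div ((continuousOn_const.mul hcψ).mul hcs)
        (fun x hx => by have := hpos x hx; have := hsp x hx; positivity)
  have hcl2 : ContinuousOn l2 (Icc a b) := by
    apply ContinuousOn.sub
    · exact hcont.div hcψ (fun x hx => hne x hx)
    · exact (hcψ'.pow 2).div (hcψ.pow 2) (fun x hx => pow_ne_zero _ (hne x hx))
  have hcF' : ContinuousOn F' (Icc a b) := by
    apply ContinuousOn.div
    · exact (((continuousOn_const.mul (hcψ'.pow 2)).mul hcont).mul hcψ).sub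
        (continuousOn_const.mul (hcψ'.pow 4))
    · exact hcψ.pow 3
    · exact fun x hx => pow_ne_zero _ (hne x hx)
  -- integrability
  have hI1 : IntervalIntegrable (fun x => (g2 x) ^ 2) volume a b :=
    ((hcg2.pow 2).mono (by rw [huIcc])).intervalIntegrable
  have hI2 : IntervalIntegrable (fun x => ψ x * (l2 x) ^ 2) volume a b :=
    ((hcψ.mul (hcl2.pow 2)).mono (by rw [huIcc])).intervalIntegrable
  have hI3 : IntervalIntegrable F' volume a b :=
    (hcF'.mono (by rw [huIcc])).intervalIntegrable
  -- integration by parts: ∫ F' = 0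
  have hF0 : (∫ x in a..b, F' x) = 0 := by
    have hF : ∀ x ∈ Icc a b, HasDerivWithinAt (fun y => (ψ' y)^3 / (ψ y)^2)
        (F' x) (Icc a b) x := by
      intro x hx
      have h := ((hψ'' x hx).pow 3).div ((hψ' x hx).pow 2) (pow_ne_zero _ (hne x hx))
      refine h.congr_deriv (Eq.symm ?_)
      change F' x = (((3:ℕ):ℝ) * ψ' x ^ (3 - 1) * ψ'' x * ψ x ^ 2 - ψ' x ^ 3 * (((2:ℕ):ℝ) * ψ x ^ (2 - 1) * ψ' x)) / (ψ x ^ 2) ^ 2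
      simp only [hF'def]
      field_simp [hne x hx]
      ring
    have hcF : ContinuousOn (fun y => (ψ' y)^3 / (ψ y)^2) (Icc a b) :=
      (hcψ'.pow 3).div (hcψ.pow 2) (fun x hx => pow_ne_zero _ (hne x hx))
    have := intervalIntegral.integral_eq_sub_of_hasDeriv_right_of_le hab.le hcF
      (fun x hx => ((hF x (Ioo_subset_Icc_self hx)).hasDerivAt
        (Icc_mem_nhds hx.1 hx.2)).hasDerivWithinAt) hI3
    rw [this, hba, hbb]
    norm_num
  -- pointwise nonnegativity of the combined integrand
  have hpt : ∀ x ∈ Icc a b,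
      0 ≤ 13/8 * (ψ x * (l2 x)^2) - (g2 x)^2 + (1/2) * F' x := by
    intro x hx
    have hs : Real.sqrt (ψ x) ^ 2 = ψ x := Real.sq_sqrt (hpos x hx).le
    have hs0 : 0 < Real.sqrt (ψ x) := hsp x hx
    have hp0 : 0 < ψ x := hpos x hx
    have key : 13/8 * (ψ x * (l2 x)^2) - (g2 x)^2 + (1/2) * F' x
        = (22 * (ψ'' x * ψ x)^2 - 24 * (ψ'' x * ψ x) * (ψ' x)^2 + 9 * (ψ' x)^4)
          / (16 * (ψ x)^3) := by
      simp only [hg2def, hl2def, hF'def]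
      set s := Real.sqrt (ψ x) with hsdef
      have hs' : s ^ 2 = ψ x := Real.sq_sqrt (hpos x hx).le
      have hs0' : s ≠ 0 := hs0.ne'
      rw [← hs']
      field_simp
      ring
    rw [key]
    apply div_nonneg
    · nlinarith [sq_nonneg (11 * (ψ'' x * ψ x) - 6 * (ψ' x)^2), sq_nonneg ((ψ' x)^2)]
    · positivity
  -- conclude
  have hsum : (∫ x in a..b, (13/8 * (ψ x * (l2 x)^2) - (g2 x)^2 + (1/2) * F' x))
      = 13/8 * (∫ x in a..b, ψ x * (l2 x)^2) - (∫ x in a..b, (g2 x)^2)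
        + (1/2) * (∫ x in a..b, F' x) := by
    rw [intervalIntegral.integral_add (((hI2.const_mul _).sub hI1)) (hI3.const_mul _),
      intervalIntegral.integral_sub (hI2.const_mul _) hI1,
      intervalIntegral.integral_const_mul, intervalIntegral.integral_const_mul]
  have hnn : 0 ≤ ∫ x in a..b, (13/8 * (ψ x * (l2 x)^2) - (g2 x)^2 + (1/2) * F' x) :=
    intervalIntegral.integral_nonneg hab.le (fun x hx => hpt x hx)
  rw [hsum, hF0] at hnn
  linarith
end

section
/- Let $a<b$ and $\theta\in C^2([a,b])$ be positive with $\theta'(a)=\theta'(b)=0$ and $\int_a^b\theta\,dx\le E$ for some constant $E>0$. Then $\left(\int_a^b\left((\theta^{1/2})'\right)^2dx\right)^2 \le \frac{13}{8}\,E\int_a^b\theta\left[(\log\theta)''\right]^2dx$. -/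
open Set

theorem stmt_5 (a b E : ℝ) (hab : a < b) (hE : 0 < E) (θ θ' θ'' : ℝ → ℝ)
    (hpos : ∀ x ∈ Icc a b, 0 < θ x)
    (hθ' : ∀ x ∈ Icc a b, HasDerivWithinAt θ (θ' x) (Icc a b) x)
    (hθ'' : ∀ x ∈ Icc a b, HasDerivWithinAt θ' (θ'' x) (Icc a b) x)
    (hcont : ContinuousOn θ'' (Icc a b))
    (hba : θ' a = 0) (hbb : θ' b = 0)
    (hmass : (∫ x in a..b, θ x) ≤ E) :
    (∫ x in a..b, (derivWithin (fun y => Real.sqrt (θ y)) (Icc a b) x) ^ 2) ^ 2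
      ≤ (13/8) * E * ∫ x in a..b,
          θ x * (derivWithin (derivWithin (fun y => Real.log (θ y)) (Icc a b)) (Icc a b) x) ^ 2 := by
  have hle : a ≤ b := hab.le
  have huIcc : uIcc a b = Icc a b := uIcc_of_le hle
  have hus : UniqueDiffOn ℝ (Icc a b) := uniqueDiffOn_Icc hab
  have hθc : ContinuousOn θ (Icc a b) := fun x hx => (hθ' x hx).continuousWithinAt
  have hθ'c : ContinuousOn θ' (Icc a b) := fun x hx => (hθ'' x hx).continuousWithinAt
  have hne : ∀ x ∈ Icc a b, θ x ≠ 0 := fun x hx => (hpos x hx).ne'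
  set h : ℝ → ℝ := fun x => θ'' x - (θ' x) ^ 2 / θ x with hh
  have hhc : ContinuousOn h (Icc a b) := hcont.sub ((hθ'c.pow 2).div hθc hne)
  -- basic integrabilities
  have intθ : IntervalIntegrable θ MeasureTheory.volume a b := by
    apply ContinuousOn.intervalIntegrable; rwa [huIcc]
  have intθ'' : IntervalIntegrable θ'' MeasureTheory.volume a b := by
    apply ContinuousOn.intervalIntegrable; rwa [huIcc]
  have intJ : IntervalIntegrable (fun x => (θ' x) ^ 2 / θ x) MeasureTheory.volume a b := by
    apply ContinuousOn.intervalIntegrable; rw [huIcc]; exact (hθ'c.pow 2).div hθc hne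
  have inth : IntervalIntegrable h MeasureTheory.volume a b := by
    apply ContinuousOn.intervalIntegrable; rwa [huIcc]
  have intK : IntervalIntegrable (fun x => (h x) ^ 2 / θ x) MeasureTheory.volume a b := by
    apply ContinuousOn.intervalIntegrable; rw [huIcc]; exact (hhc.pow 2).div hθc hne
  set J : ℝ := ∫ x in a..b, (θ' x) ^ 2 / θ x with hJ
  set K : ℝ := ∫ x in a..b, (h x) ^ 2 / θ x with hK
  set M : ℝ := ∫ x in a..b, θ x with hM
  -- LHS integral equals J / 4
  have hLHS : (∫ x in a..b, (derivWithin (fun y => Real.sqrt (θ y)) (Icc a b) x) ^ 2) = J / 4 := by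
    have heq : EqOn (fun x => (derivWithin (fun y => Real.sqrt (θ y)) (Icc a b) x) ^ 2)
        (fun x => (θ' x) ^ 2 / θ x / 4) (uIcc a b) := by
      rw [huIcc]
      intro x hx
      have hd : HasDerivWithinAt (fun y => Real.sqrt (θ y)) (1 / (2 * Real.sqrt (θ x)) * θ' x)
          (Icc a b) x := (Real.hasDerivAt_sqrt (hne x hx)).comp_hasDerivWithinAt x (hθ' x hx)
      have hdw := hd.derivWithin (hus x hx)
      simp only [hdw]
      have hsq : Real.sqrt (θ x) ^ 2 = θ x := Real.sq_sqrt (hpos x hx).le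
      have hsne : Real.sqrt (θ x) ≠ 0 := (Real.sqrt_pos.mpr (hpos x hx)).ne'
      rw [mul_pow, div_pow, one_pow, mul_pow, hsq]
      ring
    rw [intervalIntegral.integral_congr heq, intervalIntegral.integral_div]
  -- RHS integrand equals h^2/θ
  have hRHS : (∫ x in a..b,
      θ x * (derivWithin (derivWithin (fun y => Real.log (θ y)) (Icc a b)) (Icc a b) x) ^ 2) = K := by
    have hd1 : EqOn (derivWithin (fun y => Real.log (θ y)) (Icc a b))
        (fun x => θ' x / θ x) (Icc a b) := by
      intro x hx
      have hd : HasDerivWithinAt (fun y => Real.log (θ y)) ((θ x)⁻¹ * θ' x) (Icc a b) x :=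
        (Real.hasDerivAt_log (hne x hx)).comp_hasDerivWithinAt x (hθ' x hx)
      have := hd.derivWithin (hus x hx)
      rw [this]; field_simp
    have heq : EqOn (fun x =>
        θ x * (derivWithin (derivWithin (fun y => Real.log (θ y)) (Icc a b)) (Icc a b) x) ^ 2)
        (fun x => (h x) ^ 2 / θ x) (uIcc a b) := by
      rw [huIcc]
      intro x hx
      have hd2 : derivWithin (derivWithin (fun y => Real.log (θ y)) (Icc a b)) (Icc a b) x
          = (θ'' x * θ x - θ' x * θ' x) / θ x ^ 2 := by
        rw [derivWithin_congr hd1 (hd1 hx)]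
        exact ((hθ'' x hx).div (hθ' x hx) (hne x hx)).derivWithin (hus x hx)
      have key : (θ'' x * θ x - θ' x * θ' x) / θ x ^ 2 = h x / θ x := by
        rw [hh]
        field_simp [hne x hx]
      simp only [hd2, key, div_pow]
      field_simp [hne x hx]
    rw [intervalIntegral.integral_congr heq]
  -- ∫ θ'' = 0
  have hFTC : (∫ x in a..b, θ'' x) = 0 := by
    have : (∫ x in a..b, θ'' x) = θ' b - θ' a := by
      apply intervalIntegral.integral_eq_sub_of_hasDeriv_right_of_le hle hθ'c _ intθ''
      intro x hx
      have hmem : Icc a b ∈ nhds x := Icc_mem_nhds hx.1 hx.2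
      exact ((hθ'' x (Ioo_subset_Icc_self hx)).hasDerivAt hmem).hasDerivWithinAt
    rw [this, hba, hbb, sub_zero]
  -- ∫ h = -J
  have hinth : (∫ x in a..b, h x) = -J := by
    have : (∫ x in a..b, h x) = (∫ x in a..b, θ'' x) - ∫ x in a..b, (θ' x) ^ 2 / θ x :=
      intervalIntegral.integral_sub intθ'' intJ
    rw [this, hFTC, hJ]; ring
  -- Cauchy–Schwarz via discriminant: J^2 ≤ M * K
  have hCS : J ^ 2 ≤ M * K := by
    have hquad : ∀ t : ℝ, 0 ≤ M * (t * t) + (-2 * J) * t + K := by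
      intro t
      have hptwise : ∀ x ∈ Icc a b, 0 ≤ t ^ 2 * θ x + 2 * t * h x + (h x) ^ 2 / θ x := by
        intro x hx
        have hθx := hpos x hx
        have : t ^ 2 * θ x + 2 * t * h x + (h x) ^ 2 / θ x = θ x * (t + h x / θ x) ^ 2 := by
          field_simp; ring
        rw [this]; positivity
      have hInt : (∫ x in a..b, (t ^ 2 * θ x + 2 * t * h x + (h x) ^ 2 / θ x))
          = t ^ 2 * M + 2 * t * (∫ x in a..b, h x) + K := by
        rw [intervalIntegral.integral_add ((intθ.const_mul _).add (inth.const_mul _)) intK,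
            intervalIntegral.integral_add (intθ.const_mul _) (inth.const_mul _),
            intervalIntegral.integral_const_mul, intervalIntegral.integral_const_mul]
      have h0 : 0 ≤ ∫ x in a..b, (t ^ 2 * θ x + 2 * t * h x + (h x) ^ 2 / θ x) :=
        intervalIntegral.integral_nonneg hle hptwise
      rw [hInt, hinth] at h0
      nlinarith [h0]
    have hd := discrim_le_zero hquad
    rw [discrim] at hd
    nlinarith [hd]
  have hK0 : 0 ≤ K := by
    apply intervalIntegral.integral_nonneg hle
    intro x hx
    have := hpos x hx
    positivity
  have hMK : M * K ≤ E * K := mul_le_mul_of_nonneg_right hmass hK0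
  rw [hLHS, hRHS]
  nlinarith [hCS, hMK, hK0, hE.le]
end

section
/- Let $a<b$, $T>0$, $\mu\in\mathbb{R}$, and let $u\in C^3([0,T]\times[a,b])$, $\theta\in C^{1,2}([0,T]\times[a,b])$ with $\theta>0$ solve $u_{tt}-u_{xx}=\mu\theta_x$, $\theta_t-\theta_{xx}=\mu\theta u_{tx}$ on $(0,T)\times(a,b)$ with boundary conditions $u(\cdot,a)=u(\cdot,b)=0$, $\theta_x(\cdot,a)=\theta_x(\cdot,b)=0$. Then for all $t\in(0,T)$: $\frac12\frac{d}{dt}\left(\int_a^b\frac{\theta_x^2}{\theta}dx+\int_a^b u_{tx}^2dx+\int_a^b u_{xx}^2dx\right) = -\int_a^b\theta\left[(\log\theta)_{xx}\right]^2dx + \frac{\mu}{2}\int_a^b\frac{\theta_x^2}{\theta}u_{tx}\,dx$. -/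
open Set Filter Topology MeasureTheory
open scoped Interval

/-- Clairaut-type theorem on symmetry of mixed partial derivatives. -/
lemma clairaut_aux {f ft ftx : ℝ → ℝ → ℝ} {fx : ℝ → ℝ} {t0 x0 : ℝ} {U : Set (ℝ × ℝ)}
    (hU : U ∈ 𝓝 (t0, x0))
    (hft : ∀ p ∈ U, HasDerivAt (fun s => f s p.2) (ft p.1 p.2) p.1)
    (hftx : ∀ p ∈ U, HasDerivAt (fun y => ft p.1 y) (ftx p.1 p.2) p.2)
    (hcont : ContinuousAt (fun p : ℝ × ℝ => ftx p.1 p.2) (t0, x0))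
    (hfx : ∀ᶠ t in 𝓝 t0, HasDerivAt (fun y => f t y) (fx t) x0) :
    HasDerivAt fx (ftx t0 x0) t0 := by
  rw [hasDerivAt_iff_isLittleO, Asymptotics.isLittleO_iff]
  intro c hc
  have hev : ∀ᶠ p in 𝓝 (t0, x0), p ∈ U ∧ ‖ftx p.1 p.2 - ftx t0 x0‖ ≤ c := by
    filter_upwards [hU, hcont (Metric.closedBall_mem_nhds _ hc)] with p h1 h2
    exact ⟨h1, by simpa [Real.norm_eq_abs, Real.dist_eq] using h2⟩
  obtain ⟨δ, hδ, hball⟩ := Metric.mem_nhds_iff.1 hev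
  have key : ∀ t, dist t t0 < δ → ∀ x, dist x x0 < δ →
      ‖f t x - f t0 x - f t x0 + f t0 x0 - (t - t0) * ((x - x0) * ftx t0 x0)‖
        ≤ c * ‖x - x0‖ * ‖t - t0‖ := by
    intro t ht x hx
    have hmem : ∀ s ∈ uIcc t0 t, ∀ y ∈ uIcc x0 x, (s, y) ∈ Metric.ball (t0, x0) δ := by
      intro s hs y hy
      have h1 : dist s t0 ≤ dist t0 t :=
        Real.dist_le_of_mem_uIcc hs (left_mem_uIcc)
      have h2 : dist y x0 ≤ dist x0 x :=
        Real.dist_le_of_mem_uIcc hy (left_mem_uIcc)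
      rw [Metric.mem_ball, Prod.dist_eq]
      exact max_lt (lt_of_le_of_lt h1 (by rwa [dist_comm]))
        (lt_of_le_of_lt h2 (by rwa [dist_comm]))
    have inner : ∀ s ∈ uIcc t0 t,
        ‖(ft s x - x * ftx t0 x0) - (ft s x0 - x0 * ftx t0 x0)‖ ≤ c * ‖x - x0‖ := by
      intro s hs
      have : ∀ y ∈ uIcc x0 x, HasDerivWithinAt (fun y => ft s y - y * ftx t0 x0)
          (ftx s y - ftx t0 x0) (uIcc x0 x) y := by
        intro y hy
        have h1 := (hftx (s, y) (hball (hmem s hs y hy)).1).sub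
          ((hasDerivAt_id y).mul_const (ftx t0 x0))
        have h2 := h1.hasDerivWithinAt (s := uIcc x0 x)
        simp only [one_mul] at h2
        exact h2
      have hb : ∀ y ∈ uIcc x0 x, ‖ftx s y - ftx t0 x0‖ ≤ c := fun y hy =>
        (hball (hmem s hs y hy)).2
      simpa using (convex_uIcc x0 x).norm_image_sub_le_of_norm_hasDerivWithin_le
        this hb (left_mem_uIcc) (right_mem_uIcc)
    have outer : ∀ s ∈ uIcc t0 t, HasDerivWithinAt
        (fun s => f s x - f s x0 - s * ((x - x0) * ftx t0 x0))
        ((ft s x - ft s x0) - (x - x0) * ftx t0 x0) (uIcc t0 t) s := by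
      intro s hs
      have h1 := (((hft (s, x) (hball (hmem s hs x right_mem_uIcc)).1).sub
        (hft (s, x0) (hball (hmem s hs x0 left_mem_uIcc)).1)).sub
        ((hasDerivAt_id s).mul_const ((x - x0) * ftx t0 x0)))
      have h2 := h1.hasDerivWithinAt (s := uIcc t0 t)
      simp only [one_mul] at h2
      exact h2
    have hb2 : ∀ s ∈ uIcc t0 t, ‖(ft s x - ft s x0) - (x - x0) * ftx t0 x0‖ ≤ c * ‖x - x0‖ := by
      intro s hs
      have := inner s hs
      have e : (ft s x - x * ftx t0 x0) - (ft s x0 - x0 * ftx t0 x0)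
          = (ft s x - ft s x0) - (x - x0) * ftx t0 x0 := by ring
      rwa [e] at this
    have := (convex_uIcc t0 t).norm_image_sub_le_of_norm_hasDerivWithin_le
      outer hb2 (left_mem_uIcc) (right_mem_uIcc)
    calc ‖f t x - f t0 x - f t x0 + f t0 x0 - (t - t0) * ((x - x0) * ftx t0 x0)‖
        = ‖(f t x - f t x0 - t * ((x - x0) * ftx t0 x0))
            - (f t0 x - f t0 x0 - t0 * ((x - x0) * ftx t0 x0))‖ := by congr 1; ring
      _ ≤ c * ‖x - x0‖ * ‖t - t0‖ := this
  filter_upwards [hfx, Metric.ball_mem_nhds t0 hδ] with t hfxt htδ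
  rcases eq_or_ne t t0 with rfl | hne
  · simp
  have hslope : Tendsto (fun x => slope (f t) x0 x - slope (f t0) x0 x) (𝓝[≠] x0)
      (𝓝 (fx t - fx t0)) :=
    (hasDerivAt_iff_tendsto_slope.1 hfxt).sub
      (hasDerivAt_iff_tendsto_slope.1 hfx.self_of_nhds)
  have hbd : ∀ᶠ x in 𝓝[≠] x0,
      ‖(slope (f t) x0 x - slope (f t0) x0 x) - (t - t0) * ftx t0 x0‖ ≤ c * ‖t - t0‖ := by
    filter_upwards [self_mem_nhdsWithin,
      eventually_nhdsWithin_of_eventually_nhds (Metric.ball_mem_nhds x0 hδ)] with x hx hxδ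
    have hx0 : x - x0 ≠ 0 := sub_ne_zero.2 hx
    have := key t htδ x hxδ
    rw [slope_def_field, slope_def_field]
    have e : (f t x - f t x0) / (x - x0) - (f t0 x - f t0 x0) / (x - x0) - (t - t0) * ftx t0 x0
        = (f t x - f t0 x - f t x0 + f t0 x0 - (t - t0) * ((x - x0) * ftx t0 x0)) / (x - x0) := by
      field_simp; ring
    rw [e, norm_div]
    rw [div_le_iff₀ (norm_pos_iff.mpr hx0)]
    calc ‖f t x - f t0 x - f t x0 + f t0 x0 - (t - t0) * ((x - x0) * ftx t0 x0)‖
        ≤ c * ‖x - x0‖ * ‖t - t0‖ := this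
      _ = c * ‖t - t0‖ * ‖x - x0‖ := by ring
  have : ‖(fx t - fx t0) - (t - t0) * ftx t0 x0‖ ≤ c * ‖t - t0‖ :=
    le_of_tendsto (Tendsto.norm (hslope.sub_const _)) hbd
  simpa [Real.norm_eq_abs, smul_eq_mul, abs_sub_comm] using this

lemma integral_congr_Ioo_s6 {a b : ℝ} (hab : a ≤ b) {f g : ℝ → ℝ}
    (h : ∀ x ∈ Ioo a b, f x = g x) :
    ∫ x in a..b, f x = ∫ x in a..b, g x := by
  rw [intervalIntegral.integral_of_le hab, intervalIntegral.integral_of_le hab,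
    MeasureTheory.integral_Ioc_eq_integral_Ioo, MeasureTheory.integral_Ioc_eq_integral_Ioo]
  exact MeasureTheory.setIntegral_congr_fun measurableSet_Ioo h

lemma hasDerivAt_integral_of_slope_repr {I : ℝ → ℝ} {g : ℝ → ℝ → ℝ} {φ : ℝ → ℝ}
    {t a b C : ℝ}
    (hrepr : ∀ᶠ s in 𝓝[≠] t, slope I t s = ∫ x in a..b, g s x)
    (hmeas : ∀ᶠ s in 𝓝[≠] t, AEStronglyMeasurable (g s) (volume.restrict (Ι a b)))
    (hbound : ∀ᶠ s in 𝓝[≠] t, ∀ᵐ x ∂(volume : Measure ℝ), x ∈ Ι a b → ‖g s x‖ ≤ C)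
    (hlim : ∀ᵐ x ∂(volume : Measure ℝ), x ∈ Ι a b →
      Tendsto (fun s => g s x) (𝓝[≠] t) (𝓝 (φ x))) :
    HasDerivAt I (∫ x in a..b, φ x) t := by
  rw [hasDerivAt_iff_tendsto_slope]
  have h := intervalIntegral.tendsto_integral_filter_of_dominated_convergence
    (μ := volume) (F := g) (fun _ => C) hmeas hbound intervalIntegrable_const hlim
  exact Tendsto.congr' (hrepr.mono fun s hs => hs.symm) h

theorem stmt_6 (a b T μ : ℝ) (hab : a < b) (hT : 0 < T)
    (u ut utt ux uxx utx utxx θ θt θx θxx θtx : ℝ → ℝ → ℝ)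
    (hut : ∀ t ∈ Icc 0 T, ∀ x ∈ Icc a b,
      HasDerivWithinAt (fun s => u s x) (ut t x) (Icc 0 T) t)
    (hutt : ∀ t ∈ Icc 0 T, ∀ x ∈ Icc a b,
      HasDerivWithinAt (fun s => ut s x) (utt t x) (Icc 0 T) t)
    (hux : ∀ t ∈ Icc 0 T, ∀ x ∈ Icc a b,
      HasDerivWithinAt (u t) (ux t x) (Icc a b) x)
    (huxx : ∀ t ∈ Icc 0 T, ∀ x ∈ Icc a b,
      HasDerivWithinAt (ux t) (uxx t x) (Icc a b) x)
    (hutx : ∀ t ∈ Icc 0 T, ∀ x ∈ Icc a b,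
      HasDerivWithinAt (ut t) (utx t x) (Icc a b) x)
    (hutxx : ∀ t ∈ Icc 0 T, ∀ x ∈ Icc a b,
      HasDerivWithinAt (utx t) (utxx t x) (Icc a b) x)
    (hθt : ∀ t ∈ Icc 0 T, ∀ x ∈ Icc a b,
      HasDerivWithinAt (fun s => θ s x) (θt t x) (Icc 0 T) t)
    (hθx : ∀ t ∈ Icc 0 T, ∀ x ∈ Icc a b,
      HasDerivWithinAt (θ t) (θx t x) (Icc a b) x)
    (hθxx : ∀ t ∈ Icc 0 T, ∀ x ∈ Icc a b,
      HasDerivWithinAt (θx t) (θxx t x) (Icc a b) x)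
    (hθtx : ∀ t ∈ Icc 0 T, ∀ x ∈ Icc a b,
      HasDerivWithinAt (fun s => θx s x) (θtx t x) (Icc 0 T) t)
    (hcont : ContinuousOn (fun p : ℝ × ℝ =>
      (utt p.1 p.2, uxx p.1 p.2, utx p.1 p.2, utxx p.1 p.2, θt p.1 p.2, θxx p.1 p.2,
        θtx p.1 p.2, θx p.1 p.2, θ p.1 p.2)) (Icc 0 T ×ˢ Icc a b))
    (hpos : ∀ t ∈ Icc 0 T, ∀ x ∈ Icc a b, 0 < θ t x)
    (hwave : ∀ t ∈ Ioo 0 T, ∀ x ∈ Ioo a b, utt t x - uxx t x = μ * θx t x)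
    (hheat : ∀ t ∈ Ioo 0 T, ∀ x ∈ Ioo a b, θt t x - θxx t x = μ * θ t x * utx t x)
    (hbd : ∀ t ∈ Icc 0 T, u t a = 0 ∧ u t b = 0 ∧ θx t a = 0 ∧ θx t b = 0) :
    ∀ t ∈ Ioo 0 T,
      HasDerivAt (fun s =>
          (∫ x in a..b, (θx s x) ^ 2 / θ s x) + (∫ x in a..b, (utx s x) ^ 2)
            + (∫ x in a..b, (uxx s x) ^ 2))
        (2 * (-(∫ x in a..b,
            θ t x * (derivWithin (derivWithin (fun y => Real.log (θ t y)) (Icc a b)) (Icc a b) x) ^ 2)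
          + μ / 2 * ∫ x in a..b, (θx t x) ^ 2 / θ t x * utx t x)) t := by
  intro t ht
  obtain ⟨ht0, htT⟩ := ht
  have htIoo : t ∈ Ioo 0 T := ⟨ht0, htT⟩
  have hab' : a ≤ b := hab.le
  have htIcc : t ∈ Icc 0 T := ⟨ht0.le, htT.le⟩
  have hIccT : Icc (0:ℝ) T ∈ 𝓝 t := Icc_mem_nhds ht0 htT
  have hKc : IsCompact (Icc (0:ℝ) T ×ˢ Icc a b) := isCompact_Icc.prod isCompact_Icc
  -- component continuity
  have c_utt : ContinuousOn (fun p : ℝ × ℝ => utt p.1 p.2) (Icc 0 T ×ˢ Icc a b) :=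
    continuous_fst.comp_continuousOn hcont
  have c_uxx : ContinuousOn (fun p : ℝ × ℝ => uxx p.1 p.2) (Icc 0 T ×ˢ Icc a b) :=
    (continuous_fst.comp continuous_snd).comp_continuousOn hcont
  have c_utx : ContinuousOn (fun p : ℝ × ℝ => utx p.1 p.2) (Icc 0 T ×ˢ Icc a b) :=
    (continuous_fst.comp (continuous_snd.comp continuous_snd)).comp_continuousOn hcont
  have c_utxx : ContinuousOn (fun p : ℝ × ℝ => utxx p.1 p.2) (Icc 0 T ×ˢ Icc a b) :=
    (continuous_fst.comp (continuous_snd.comp (continuous_snd.comp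
      continuous_snd))).comp_continuousOn hcont
  have c_θt : ContinuousOn (fun p : ℝ × ℝ => θt p.1 p.2) (Icc 0 T ×ˢ Icc a b) :=
    (continuous_fst.comp (continuous_snd.comp (continuous_snd.comp (continuous_snd.comp
      continuous_snd)))).comp_continuousOn hcont
  have c_θxx : ContinuousOn (fun p : ℝ × ℝ => θxx p.1 p.2) (Icc 0 T ×ˢ Icc a b) :=
    (continuous_fst.comp (continuous_snd.comp (continuous_snd.comp (continuous_snd.comp
      (continuous_snd.comp continuous_snd))))).comp_continuousOn hcont
  have c_θtx : ContinuousOn (fun p : ℝ × ℝ => θtx p.1 p.2) (Icc 0 T ×ˢ Icc a b) :=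
    (continuous_fst.comp (continuous_snd.comp (continuous_snd.comp (continuous_snd.comp
      (continuous_snd.comp (continuous_snd.comp continuous_snd)))))).comp_continuousOn hcont
  have c_θx : ContinuousOn (fun p : ℝ × ℝ => θx p.1 p.2) (Icc 0 T ×ˢ Icc a b) :=
    (continuous_fst.comp (continuous_snd.comp (continuous_snd.comp (continuous_snd.comp
      (continuous_snd.comp (continuous_snd.comp (continuous_snd.comp
      continuous_snd))))))).comp_continuousOn hcont
  have c_θ : ContinuousOn (fun p : ℝ × ℝ => θ p.1 p.2) (Icc 0 T ×ˢ Icc a b) :=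
    (continuous_snd.comp (continuous_snd.comp (continuous_snd.comp (continuous_snd.comp
      (continuous_snd.comp (continuous_snd.comp (continuous_snd.comp
      continuous_snd))))))).comp_continuousOn hcont
  have hne : ∀ s ∈ Icc (0:ℝ) T, ∀ x ∈ Icc a b, θ s x ≠ 0 :=
    fun s hs x hx => (hpos s hs x hx).ne'
  have sliceX : ∀ {F : ℝ × ℝ → ℝ}, ContinuousOn F (Icc 0 T ×ˢ Icc a b) →
      ∀ s ∈ Icc (0:ℝ) T, ContinuousOn (fun x => F (s, x)) (Icc a b) := by
    intro F hF s hs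
    exact hF.comp ((continuous_const.prodMk continuous_id).continuousOn)
      (fun x hx => ⟨hs, hx⟩)
  have tendT : ∀ {F : ℝ × ℝ → ℝ}, ContinuousOn F (Icc 0 T ×ˢ Icc a b) →
      ∀ x ∈ Icc a b, Tendsto (fun s => F (s, x)) (𝓝 t) (𝓝 (F (t, x))) := by
    intro F hF x hx
    have h1 : ContinuousWithinAt F (Icc 0 T ×ˢ Icc a b) (t, x) := hF (t, x) ⟨htIcc, hx⟩
    have h2 : Tendsto (fun s : ℝ => (s, x)) (𝓝 t) (𝓝[Icc 0 T ×ˢ Icc a b] (t, x)) := by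
      rw [tendsto_nhdsWithin_iff]
      refine ⟨(continuous_id.prodMk continuous_const).tendsto t, ?_⟩
      filter_upwards [hIccT] with s hs
      exact ⟨hs, hx⟩
    exact h1.tendsto.comp h2
  have intInt : ∀ {f : ℝ → ℝ}, ContinuousOn f (Icc a b) → IntervalIntegrable f volume a b := by
    intro f hf
    apply ContinuousOn.intervalIntegrable
    rwa [uIcc_of_le hab']
  -- bounds
  obtain ⟨C1, hC1⟩ := hKc.exists_bound_of_continuousOn c_utt
  obtain ⟨C2, hC2⟩ := hKc.exists_bound_of_continuousOn c_utxx
  obtain ⟨C3, hC3⟩ := hKc.exists_bound_of_continuousOn c_uxx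
  -- interior upgrades in time
  have Hθt : ∀ s ∈ Ioo (0:ℝ) T, ∀ x ∈ Icc a b, HasDerivAt (fun r => θ r x) (θt s x) s :=
    fun s hs x hx => (hθt s (Ioo_subset_Icc_self hs) x hx).hasDerivAt (Icc_mem_nhds hs.1 hs.2)
  have Hθtx : ∀ s ∈ Ioo (0:ℝ) T, ∀ x ∈ Icc a b, HasDerivAt (fun r => θx r x) (θtx s x) s :=
    fun s hs x hx => (hθtx s (Ioo_subset_Icc_self hs) x hx).hasDerivAt (Icc_mem_nhds hs.1 hs.2)
  have Hut : ∀ s ∈ Ioo (0:ℝ) T, ∀ x ∈ Icc a b, HasDerivAt (fun r => u r x) (ut s x) s :=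
    fun s hs x hx => (hut s (Ioo_subset_Icc_self hs) x hx).hasDerivAt (Icc_mem_nhds hs.1 hs.2)
  have Hutt : ∀ s ∈ Ioo (0:ℝ) T, ∀ x ∈ Icc a b, HasDerivAt (fun r => ut r x) (utt s x) s :=
    fun s hs x hx => (hutt s (Ioo_subset_Icc_self hs) x hx).hasDerivAt (Icc_mem_nhds hs.1 hs.2)
  -- interior upgrades in space
  have Hθx : ∀ s ∈ Icc (0:ℝ) T, ∀ x ∈ Ioo a b, HasDerivAt (θ s) (θx s x) x :=
    fun s hs x hx => (hθx s hs x (Ioo_subset_Icc_self hx)).hasDerivAt (Icc_mem_nhds hx.1 hx.2)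
  have Hθxx : ∀ s ∈ Icc (0:ℝ) T, ∀ x ∈ Ioo a b, HasDerivAt (θx s) (θxx s x) x :=
    fun s hs x hx => (hθxx s hs x (Ioo_subset_Icc_self hx)).hasDerivAt (Icc_mem_nhds hx.1 hx.2)
  have Hux : ∀ s ∈ Icc (0:ℝ) T, ∀ x ∈ Ioo a b, HasDerivAt (u s) (ux s x) x :=
    fun s hs x hx => (hux s hs x (Ioo_subset_Icc_self hx)).hasDerivAt (Icc_mem_nhds hx.1 hx.2)
  have Huxx : ∀ s ∈ Icc (0:ℝ) T, ∀ x ∈ Ioo a b, HasDerivAt (ux s) (uxx s x) x :=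
    fun s hs x hx => (huxx s hs x (Ioo_subset_Icc_self hx)).hasDerivAt (Icc_mem_nhds hx.1 hx.2)
  have Hutx : ∀ s ∈ Icc (0:ℝ) T, ∀ x ∈ Ioo a b, HasDerivAt (ut s) (utx s x) x :=
    fun s hs x hx => (hutx s hs x (Ioo_subset_Icc_self hx)).hasDerivAt (Icc_mem_nhds hx.1 hx.2)
  have Hutxx : ∀ s ∈ Icc (0:ℝ) T, ∀ x ∈ Ioo a b, HasDerivAt (utx s) (utxx s x) x :=
    fun s hs x hx => (hutxx s hs x (Ioo_subset_Icc_self hx)).hasDerivAt (Icc_mem_nhds hx.1 hx.2)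
  -- boundary values of ut
  have h_ut0 : ∀ s ∈ Ioo (0:ℝ) T, ut s a = 0 ∧ ut s b = 0 := by
    intro s hs
    constructor
    · have d1 := Hut s hs a (left_mem_Icc.2 hab')
      have d2 : HasDerivAt (fun r => u r a) 0 s := by
        refine (hasDerivAt_const s (0:ℝ)).congr_of_eventuallyEq ?_
        filter_upwards [Icc_mem_nhds hs.1 hs.2] with r hr
        exact (hbd r hr).1
      exact d1.unique d2
    · have d1 := Hut s hs b (right_mem_Icc.2 hab')
      have d2 : HasDerivAt (fun r => u r b) 0 s := by
        refine (hasDerivAt_const s (0:ℝ)).congr_of_eventuallyEq ?_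
        filter_upwards [Icc_mem_nhds hs.1 hs.2] with r hr
        exact (hbd r hr).2.1
      exact d1.unique d2
  -- Clairaut instances
  have hKnhds : ∀ s ∈ Ioo (0:ℝ) T, ∀ y ∈ Ioo a b,
      Icc (0:ℝ) T ×ˢ Icc a b ∈ 𝓝 ((s : ℝ), (y : ℝ)) := fun s hs y hy =>
    prod_mem_nhds (Icc_mem_nhds hs.1 hs.2) (Icc_mem_nhds hy.1 hy.2)
  have hA : ∀ s ∈ Ioo (0:ℝ) T, ∀ y ∈ Ioo a b, HasDerivAt (fun z => θt s z) (θtx s y) y := by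
    intro s hs y hy
    refine clairaut_aux (f := fun y s => θ s y) (ft := fun y s => θx s y)
      (ftx := fun y s => θtx s y) (fx := fun z => θt s z)
      (U := Ioo a b ×ˢ Ioo 0 T) ?_ ?_ ?_ ?_ ?_
    · exact prod_mem_nhds (Ioo_mem_nhds hy.1 hy.2) (Ioo_mem_nhds hs.1 hs.2)
    · exact fun p hp => Hθx p.2 (Ioo_subset_Icc_self hp.2) p.1 hp.1
    · exact fun p hp => Hθtx p.2 hp.2 p.1 (Ioo_subset_Icc_self hp.1)
    · have h1 : ContinuousAt (fun p : ℝ × ℝ => θtx p.1 p.2) (s, y) :=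
        c_θtx.continuousAt (hKnhds s hs y hy)
      have h2 : ContinuousAt ((fun p : ℝ × ℝ => θtx p.1 p.2) ∘ Prod.swap) (y, s) :=
        ContinuousAt.comp (f := (Prod.swap : ℝ × ℝ → ℝ × ℝ)) h1
          continuous_swap.continuousAt
      exact h2
    · filter_upwards [Ioo_mem_nhds hy.1 hy.2] with z hz
      exact Hθt s hs z (Ioo_subset_Icc_self hz)
  have hB : ∀ s ∈ Ioo (0:ℝ) T, ∀ y ∈ Ioo a b, HasDerivAt (fun r => ux r y) (utx s y) s := by
    intro s hs y hy
    refine clairaut_aux (f := u) (ft := ut) (ftx := utx) (fx := fun r => ux r y)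
      (U := Ioo 0 T ×ˢ Ioo a b) ?_ ?_ ?_ ?_ ?_
    · exact prod_mem_nhds (Ioo_mem_nhds hs.1 hs.2) (Ioo_mem_nhds hy.1 hy.2)
    · exact fun p hp => Hut p.1 hp.1 p.2 (Ioo_subset_Icc_self hp.2)
    · exact fun p hp => Hutx p.1 (Ioo_subset_Icc_self hp.1) p.2 hp.2
    · exact c_utx.continuousAt (hKnhds s hs y hy)
    · filter_upwards [Ioo_mem_nhds hs.1 hs.2] with r hr
      exact Hux r (Ioo_subset_Icc_self hr) y hy
  have hC : ∀ s ∈ Ioo (0:ℝ) T, ∀ y ∈ Ioo a b, HasDerivAt (fun r => uxx r y) (utxx s y) s := by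
    intro s hs y hy
    refine clairaut_aux (f := ux) (ft := utx) (ftx := utxx) (fx := fun r => uxx r y)
      (U := Ioo 0 T ×ˢ Ioo a b) ?_ ?_ ?_ ?_ ?_
    · exact prod_mem_nhds (Ioo_mem_nhds hs.1 hs.2) (Ioo_mem_nhds hy.1 hy.2)
    · exact fun p hp => hB p.1 hp.1 p.2 hp.2
    · exact fun p hp => Hutxx p.1 (Ioo_subset_Icc_self hp.1) p.2 hp.2
    · exact c_utxx.continuousAt (hKnhds s hs y hy)
    · filter_upwards [Ioo_mem_nhds hs.1 hs.2] with r hr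
      exact Huxx r (Ioo_subset_Icc_self hr) y hy
  have hIoc : Ι a b = Ioc a b := uIoc_of_le hab'
  have hae_b : ∀ᵐ x : ℝ ∂(volume : Measure ℝ), x ≠ b := by
    rw [MeasureTheory.ae_iff]
    simp only [not_not, Set.setOf_eq_eq_singleton]
    exact Real.volume_singleton
  have memIcc_of_uIoc : ∀ {x : ℝ}, x ∈ Ι a b → x ∈ Icc a b := by
    intro x hx
    rw [hIoc] at hx
    exact Ioc_subset_Icc_self hx
  -- F part : time derivative of ∫ θx²/θ
  have hFt : ∀ s ∈ Icc (0:ℝ) T, ∀ x ∈ Icc a b,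
      HasDerivWithinAt (fun r => θx r x ^ 2 / θ r x)
        ((2 * θx s x * θtx s x * θ s x - θx s x ^ 2 * θt s x) / θ s x ^ 2) (Icc 0 T) s := by
    intro s hs x hx
    have h1 : HasDerivWithinAt (fun r => θx r x ^ 2) (2 * θx s x * θtx s x) (Icc 0 T) s := by
      have h := (hθtx s hs x hx).pow 2
      exact h.congr_deriv (by push_cast; ring)
    have h2 := h1.div (hθt s hs x hx) (hne s hs x hx)
    exact h2.congr_deriv (by ring)
  have cF : ContinuousOn (fun p : ℝ × ℝ =>
      (2 * θx p.1 p.2 * θtx p.1 p.2 * θ p.1 p.2 - θx p.1 p.2 ^ 2 * θt p.1 p.2) / θ p.1 p.2 ^ 2)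
      (Icc 0 T ×ˢ Icc a b) :=
    ((((continuousOn_const.mul c_θx).mul c_θtx).mul c_θ).sub
      ((c_θx.pow 2).mul c_θt)).div (c_θ.pow 2)
      (fun p hp => pow_ne_zero 2 (hne p.1 hp.1 p.2 hp.2))
  obtain ⟨C4, hC4⟩ := hKc.exists_bound_of_continuousOn cF
  have hFlip : ∀ s ∈ Icc (0:ℝ) T, ∀ x ∈ Icc a b,
      ‖θx s x ^ 2 / θ s x - θx t x ^ 2 / θ t x‖ ≤ C4 * ‖s - t‖ := by
    intro s hs x hx
    exact (convex_Icc 0 T).norm_image_sub_le_of_norm_hasDerivWithin_le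
      (fun r hr => hFt r hr x hx) (fun r hr => hC4 (r, x) ⟨hr, hx⟩) htIcc hs
  have iiF : ∀ s ∈ Icc (0:ℝ) T, IntervalIntegrable (fun x => θx s x ^ 2 / θ s x) volume a b :=
    fun s hs => intInt (((sliceX c_θx s hs).pow 2).div (sliceX c_θ s hs)
      (fun x hx => hne s hs x hx))
  have hF : HasDerivAt (fun s => ∫ x in a..b, θx s x ^ 2 / θ s x)
      (∫ x in a..b, (2 * θx t x * θtx t x * θ t x - θx t x ^ 2 * θt t x) / θ t x ^ 2) t := by
    apply hasDerivAt_integral_of_slope_repr (C := C4)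
      (g := fun s x => slope (fun r => θx r x ^ 2 / θ r x) t s)
    · filter_upwards [self_mem_nhdsWithin, eventually_nhdsWithin_of_eventually_nhds hIccT]
        with s hsne hsIcc
      rw [slope_def_field, ← intervalIntegral.integral_sub (iiF s hsIcc) (iiF t htIcc),
        ← intervalIntegral.integral_div]
      exact intervalIntegral.integral_congr (fun x _ => by rw [slope_def_field])
    · filter_upwards [self_mem_nhdsWithin, eventually_nhdsWithin_of_eventually_nhds hIccT]
        with s hsne hsIcc
      have heq : (fun x => slope (fun r => θx r x ^ 2 / θ r x) t s)
          = fun x => (θx s x ^ 2 / θ s x - θx t x ^ 2 / θ t x) / (s - t) := by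
        funext x; rw [slope_def_field]
      rw [heq, hIoc]
      exact (((((sliceX c_θx s hsIcc).pow 2).div (sliceX c_θ s hsIcc)
        (fun x hx => hne s hsIcc x hx)).sub
        (((sliceX c_θx t htIcc).pow 2).div (sliceX c_θ t htIcc)
        (fun x hx => hne t htIcc x hx))).div_const _).mono Ioc_subset_Icc_self
        |>.aestronglyMeasurable measurableSet_Ioc
    · filter_upwards [self_mem_nhdsWithin, eventually_nhdsWithin_of_eventually_nhds hIccT]
        with s hsne hsIcc
      refine ae_of_all _ (fun x hxI => ?_)
      have hx : x ∈ Icc a b := memIcc_of_uIoc hxI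
      rw [slope_def_field, norm_div, div_le_iff₀ (norm_pos_iff.mpr (sub_ne_zero.2 hsne))]
      exact hFlip s hsIcc x hx
    · refine ae_of_all _ (fun x hxI => ?_)
      have hx : x ∈ Icc a b := memIcc_of_uIoc hxI
      exact hasDerivAt_iff_tendsto_slope.1 ((hFt t htIcc x hx).hasDerivAt hIccT)
  -- slice continuity from derivatives
  have c_ut_slice : ∀ s ∈ Icc (0:ℝ) T, ContinuousOn (ut s) (Icc a b) :=
    fun s hs x hx => (hutx s hs x hx).continuousWithinAt
  have c_utx_slice : ∀ s ∈ Icc (0:ℝ) T, ContinuousOn (utx s) (Icc a b) :=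
    fun s hs x hx => (hutxx s hs x hx).continuousWithinAt
  have iiG : ∀ s ∈ Icc (0:ℝ) T, IntervalIntegrable (fun x => utx s x ^ 2) volume a b :=
    fun s hs => intInt ((c_utx_slice s hs).pow 2)
  -- G part : integration by parts representation
  have hGrepr : ∀ s ∈ Ioo (0:ℝ) T, (∫ x in a..b, utx s x ^ 2) - (∫ x in a..b, utx t x ^ 2)
      = - ∫ x in a..b, ((ut s x - ut t x) * (utxx s x + utxx t x)) := by
    intro s hs
    have hsIcc := Ioo_subset_Icc_self hs
    have iiA : IntervalIntegrable
        (fun x => (utx s x - utx t x) * (utx s x + utx t x)) volume a b :=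
      intInt (((c_utx_slice s hsIcc).sub (c_utx_slice t htIcc)).mul
        ((c_utx_slice s hsIcc).add (c_utx_slice t htIcc)))
    have iiB : IntervalIntegrable
        (fun x => (ut s x - ut t x) * (utxx s x + utxx t x)) volume a b :=
      intInt (((c_ut_slice s hsIcc).sub (c_ut_slice t htIcc)).mul
        ((sliceX c_utxx s hsIcc).add (sliceX c_utxx t htIcc)))
    have hkey : ∫ x in a..b, ((utx s x - utx t x) * (utx s x + utx t x)
        + (ut s x - ut t x) * (utxx s x + utxx t x)) = 0 := by
      rw [intervalIntegral.integral_eq_sub_of_hasDerivAt_of_le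
        (f := fun x => (ut s x - ut t x) * (utx s x + utx t x))
        (f' := fun x => (utx s x - utx t x) * (utx s x + utx t x)
          + (ut s x - ut t x) * (utxx s x + utxx t x)) hab'
        (((c_ut_slice s hsIcc).sub (c_ut_slice t htIcc)).mul
          ((c_utx_slice s hsIcc).add (c_utx_slice t htIcc)))
        (fun x hx => ((Hutx s hsIcc x hx).sub (Hutx t htIcc x hx)).mul
          ((Hutxx s hsIcc x hx).add (Hutxx t htIcc x hx)))
        (iiA.add iiB)]
      simp [(h_ut0 s hs).1, (h_ut0 s hs).2, (h_ut0 t htIoo).1, (h_ut0 t htIoo).2]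
    have h2 : ∫ x in a..b, (utx s x ^ 2 - utx t x ^ 2)
        = ∫ x in a..b, (utx s x - utx t x) * (utx s x + utx t x) :=
      intervalIntegral.integral_congr (fun x _ => by ring)
    have h3 := intervalIntegral.integral_add iiA iiB
    have h4 := intervalIntegral.integral_sub (iiG s hsIcc) (iiG t htIcc)
    linarith [hkey, h2, h3, h4]
  have hG : HasDerivAt (fun s => ∫ x in a..b, utx s x ^ 2)
      (∫ x in a..b, -(utt t x * (utxx t x + utxx t x))) t := by
    apply hasDerivAt_integral_of_slope_repr (C := C1 * (C2 + C2))
      (g := fun s x => -(slope (fun r => ut r x) t s * (utxx s x + utxx t x)))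
    · filter_upwards [self_mem_nhdsWithin,
        eventually_nhdsWithin_of_eventually_nhds (Ioo_mem_nhds ht0 htT)] with s hsne hsIoo
      rw [slope_def_field, hGrepr s hsIoo, ← intervalIntegral.integral_neg,
        ← intervalIntegral.integral_div]
      refine intervalIntegral.integral_congr (fun x _ => ?_)
      rw [slope_def_field]
      ring
    · filter_upwards [self_mem_nhdsWithin, eventually_nhdsWithin_of_eventually_nhds hIccT]
        with s hsne hsIcc
      have heq : (fun x => -(slope (fun r => ut r x) t s * (utxx s x + utxx t x)))
          = fun x => -(((ut s x - ut t x) / (s - t)) * (utxx s x + utxx t x)) := by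
        funext x; rw [slope_def_field]
      rw [heq, hIoc]
      exact (((((c_ut_slice s hsIcc).sub (c_ut_slice t htIcc)).div_const _).mul
        ((sliceX c_utxx s hsIcc).add (sliceX c_utxx t htIcc))).neg).mono Ioc_subset_Icc_self
        |>.aestronglyMeasurable measurableSet_Ioc
    · filter_upwards [self_mem_nhdsWithin, eventually_nhdsWithin_of_eventually_nhds hIccT]
        with s hsne hsIcc
      refine ae_of_all _ (fun x hxI => ?_)
      have hx : x ∈ Icc a b := memIcc_of_uIoc hxI
      rw [norm_neg, norm_mul]
      have hb1 : ‖slope (fun r => ut r x) t s‖ ≤ C1 := by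
        rw [slope_def_field, norm_div, div_le_iff₀ (norm_pos_iff.mpr (sub_ne_zero.2 hsne))]
        exact (convex_Icc 0 T).norm_image_sub_le_of_norm_hasDerivWithin_le
          (fun r hr => hutt r hr x hx) (fun r hr => hC1 (r, x) ⟨hr, hx⟩) htIcc hsIcc
      have hb2 : ‖utxx s x + utxx t x‖ ≤ C2 + C2 :=
        (norm_add_le _ _).trans (add_le_add (hC2 (s, x) ⟨hsIcc, hx⟩) (hC2 (t, x) ⟨htIcc, hx⟩))
      exact mul_le_mul hb1 hb2 (norm_nonneg _) ((norm_nonneg _).trans hb1)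
    · refine ae_of_all _ (fun x hxI => ?_)
      have hx : x ∈ Icc a b := memIcc_of_uIoc hxI
      have l1 : Tendsto (fun s => slope (fun r => ut r x) t s) (𝓝[≠] t) (𝓝 (utt t x)) :=
        hasDerivAt_iff_tendsto_slope.1 (Hutt t htIoo x hx)
      have l2 : Tendsto (fun s => utxx s x + utxx t x) (𝓝[≠] t) (𝓝 (utxx t x + utxx t x)) :=
        ((tendT c_utxx x hx).mono_left nhdsWithin_le_nhds).add tendsto_const_nhds
      exact (l1.mul l2).neg
  -- H part
  have hτ1 : t / 2 < t := by linarith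
  have hτ2 : t < (t + T) / 2 := by linarith
  have hτsub : Icc (t / 2) ((t + T) / 2) ⊆ Ioo (0:ℝ) T := by
    intro z hz
    constructor
    · linarith [hz.1]
    · linarith [hz.2]
  have hτmem : Icc (t / 2) ((t + T) / 2) ∈ 𝓝 t := Icc_mem_nhds hτ1 hτ2
  have htτ : t ∈ Icc (t / 2) ((t + T) / 2) := ⟨hτ1.le, hτ2.le⟩
  have iiH : ∀ s ∈ Icc (0:ℝ) T, IntervalIntegrable (fun x => uxx s x ^ 2) volume a b :=
    fun s hs => intInt ((sliceX c_uxx s hs).pow 2)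
  have hH : HasDerivAt (fun s => ∫ x in a..b, uxx s x ^ 2)
      (∫ x in a..b, utxx t x * (uxx t x + uxx t x)) t := by
    apply hasDerivAt_integral_of_slope_repr (C := C2 * (C3 + C3))
      (g := fun s x => slope (fun r => uxx r x) t s * (uxx s x + uxx t x))
    · filter_upwards [self_mem_nhdsWithin, eventually_nhdsWithin_of_eventually_nhds hIccT]
        with s hsne hsIcc
      rw [slope_def_field, ← intervalIntegral.integral_sub (iiH s hsIcc) (iiH t htIcc),
        ← intervalIntegral.integral_div]
      refine intervalIntegral.integral_congr (fun x _ => ?_)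
      rw [slope_def_field]
      ring
    · filter_upwards [self_mem_nhdsWithin, eventually_nhdsWithin_of_eventually_nhds hIccT]
        with s hsne hsIcc
      have heq : (fun x => slope (fun r => uxx r x) t s * (uxx s x + uxx t x))
          = fun x => ((uxx s x - uxx t x) / (s - t)) * (uxx s x + uxx t x) := by
        funext x; rw [slope_def_field]
      rw [heq, hIoc]
      exact ((((sliceX c_uxx s hsIcc).sub (sliceX c_uxx t htIcc)).div_const _).mul
        ((sliceX c_uxx s hsIcc).add (sliceX c_uxx t htIcc))).mono Ioc_subset_Icc_self
        |>.aestronglyMeasurable measurableSet_Ioc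
    · filter_upwards [self_mem_nhdsWithin, eventually_nhdsWithin_of_eventually_nhds hτmem]
        with s hsne hsτ
      have hsIcc : s ∈ Icc (0:ℝ) T := Ioo_subset_Icc_self (hτsub hsτ)
      filter_upwards [hae_b] with x hxb hxI
      have hx : x ∈ Ioo a b := by
        rw [hIoc] at hxI
        exact ⟨hxI.1, lt_of_le_of_ne hxI.2 hxb⟩
      have hxIcc : x ∈ Icc a b := Ioo_subset_Icc_self hx
      rw [norm_mul]
      have hb1 : ‖slope (fun r => uxx r x) t s‖ ≤ C2 := by
        rw [slope_def_field, norm_div, div_le_iff₀ (norm_pos_iff.mpr (sub_ne_zero.2 hsne))]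
        exact (convex_Icc (t / 2) ((t + T) / 2)).norm_image_sub_le_of_norm_hasDerivWithin_le
          (fun r hr => (hC r (hτsub hr) x hx).hasDerivWithinAt)
          (fun r hr => hC2 (r, x) ⟨Ioo_subset_Icc_self (hτsub hr), hxIcc⟩) htτ hsτ
      have hb2 : ‖uxx s x + uxx t x‖ ≤ C3 + C3 :=
        (norm_add_le _ _).trans (add_le_add (hC3 (s, x) ⟨hsIcc, hxIcc⟩)
          (hC3 (t, x) ⟨htIcc, hxIcc⟩))
      exact mul_le_mul hb1 hb2 (norm_nonneg _) ((norm_nonneg _).trans hb1)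
    · filter_upwards [hae_b] with x hxb hxI
      have hx : x ∈ Ioo a b := by
        rw [hIoc] at hxI
        exact ⟨hxI.1, lt_of_le_of_ne hxI.2 hxb⟩
      have l1 : Tendsto (fun s => slope (fun r => uxx r x) t s) (𝓝[≠] t) (𝓝 (utxx t x)) :=
        hasDerivAt_iff_tendsto_slope.1 (hC t htIoo x hx)
      have l2 : Tendsto (fun s => uxx s x + uxx t x) (𝓝[≠] t) (𝓝 (uxx t x + uxx t x)) :=
        ((tendT c_uxx x (Ioo_subset_Icc_self hx)).mono_left nhdsWithin_le_nhds).add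
          tendsto_const_nhds
      exact l1.mul l2
  -- value identity at time t
  have hne' : ∀ x ∈ Icc a b, θ t x ≠ 0 := fun x hx => hne t htIcc x hx
  have hne2 : ∀ x ∈ Icc a b, θ t x ^ 2 ≠ 0 := fun x hx => pow_ne_zero 2 (hne' x hx)
  have sθ := sliceX c_θ t htIcc
  have sθx := sliceX c_θx t htIcc
  have sθxx := sliceX c_θxx t htIcc
  have sθt := sliceX c_θt t htIcc
  have sθtx := sliceX c_θtx t htIcc
  have sutx := c_utx_slice t htIcc
  have sutxx := sliceX c_utxx t htIcc
  have sutt := sliceX c_utt t htIcc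
  have suxx := sliceX c_uxx t htIcc
  have hUD : UniqueDiffOn ℝ (Icc a b) := uniqueDiffOn_Icc hab
  have hL : ∀ x ∈ Icc a b,
      derivWithin (derivWithin (fun y => Real.log (θ t y)) (Icc a b)) (Icc a b) x
        = θxx t x / θ t x - θx t x ^ 2 / θ t x ^ 2 := by
    intro x hx
    have hinner : EqOn (derivWithin (fun y => Real.log (θ t y)) (Icc a b))
        (fun y => θx t y / θ t y) (Icc a b) := by
      intro y hy
      exact ((hθx t htIcc y hy).log (hne t htIcc y hy)).derivWithin (hUD y hy)
    rw [derivWithin_congr hinner (hinner hx)]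
    have h2 : HasDerivWithinAt (fun y => θx t y / θ t y)
        ((θxx t x * θ t x - θx t x * θx t x) / θ t x ^ 2) (Icc a b) x :=
      (hθxx t htIcc x hx).div (hθx t htIcc x hx) (hne t htIcc x hx)
    rw [h2.derivWithin (hUD x hx)]
    have h0 : θ t x ≠ 0 := hne t htIcc x hx
    field_simp
  have hLcongr : (∫ x in a..b, θ t x * (derivWithin (derivWithin (fun y => Real.log (θ t y))
        (Icc a b)) (Icc a b) x) ^ 2)
      = ∫ x in a..b, θ t x * (θxx t x / θ t x - θx t x ^ 2 / θ t x ^ 2) ^ 2 := by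
    refine intervalIntegral.integral_congr (fun x hx => ?_)
    rw [hL x (by rwa [uIcc_of_le hab'] at hx)]
  -- three fundamental-theorem identities
  have hQ : ∫ x in a..b, (θxx t x * utx t x + θx t x * utxx t x) = 0 := by
    have h := intervalIntegral.integral_eq_sub_of_hasDerivAt_of_le
      (f := fun x => θx t x * utx t x)
      (f' := fun x => θxx t x * utx t x + θx t x * utxx t x) hab'
      (sθx.mul sutx)
      (fun x hx => (Hθxx t htIcc x hx).mul (Hutxx t htIcc x hx))
      (intInt ((sθxx.mul sutx).add (sθx.mul sutxx)))
    rw [h]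
    beta_reduce
    rw [(hbd t htIcc).2.2.1, (hbd t htIcc).2.2.2]
    ring
  have hP : ∫ x in a..b,
      ((θtx t x * θx t x + θt t x * θxx t x) * θ t x - θt t x * θx t x * θx t x) / θ t x ^ 2
        = 0 := by
    have h := intervalIntegral.integral_eq_sub_of_hasDerivAt_of_le
      (f := fun x => θt t x * θx t x / θ t x)
      (f' := fun x => ((θtx t x * θx t x + θt t x * θxx t x) * θ t x
        - θt t x * θx t x * θx t x) / θ t x ^ 2) hab'
      ((sθt.mul sθx).div sθ hne')
      (fun x hx => ((hA t htIoo x hx).mul (Hθxx t htIcc x hx)).div (Hθx t htIcc x hx)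
        (hne t htIcc x (Ioo_subset_Icc_self hx)))
      (intInt (((((sθtx.mul sθx).add (sθt.mul sθxx)).mul sθ).sub
        ((sθt.mul sθx).mul sθx)).div (sθ.pow 2) hne2))
    rw [h]
    beta_reduce
    rw [(hbd t htIcc).2.2.1, (hbd t htIcc).2.2.2]
    ring
  have hR : ∫ x in a..b,
      (3 * θx t x ^ 2 * θxx t x * θ t x ^ 2 - θx t x ^ 3 * (2 * θ t x * θx t x))
        / (θ t x ^ 2) ^ 2 = 0 := by
    have hder : ∀ x ∈ Ioo a b, HasDerivAt (fun y => θx t y ^ 3 / θ t y ^ 2)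
        ((3 * θx t x ^ 2 * θxx t x * θ t x ^ 2 - θx t x ^ 3 * (2 * θ t x * θx t x))
          / (θ t x ^ 2) ^ 2) x := by
      intro x hx
      have h1 : HasDerivAt (fun y => θx t y ^ 3) (3 * θx t x ^ 2 * θxx t x) x := by
        have h := (Hθxx t htIcc x hx).pow 3
        exact h.congr_deriv (by push_cast; ring)
      have h2 : HasDerivAt (fun y => θ t y ^ 2) (2 * θ t x * θx t x) x := by
        have h := (Hθx t htIcc x hx).pow 2
        exact h.congr_deriv (by push_cast; ring)
      exact h1.div h2 (hne2 x (Ioo_subset_Icc_self hx))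
    have h := intervalIntegral.integral_eq_sub_of_hasDerivAt_of_le
      (f := fun x => θx t x ^ 3 / θ t x ^ 2)
      (f' := fun x => (3 * θx t x ^ 2 * θxx t x * θ t x ^ 2
        - θx t x ^ 3 * (2 * θ t x * θx t x)) / (θ t x ^ 2) ^ 2) hab'
      ((sθx.pow 3).div (sθ.pow 2) hne2) hder
      (intInt (((((continuousOn_const.mul (sθx.pow 2)).mul sθxx).mul (sθ.pow 2)).sub
        ((sθx.pow 3).mul ((continuousOn_const.mul sθ).mul sθx))).div
        ((sθ.pow 2).pow 2) (fun x hx => pow_ne_zero 2 (hne2 x hx))))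
    rw [h]
    beta_reduce
    rw [(hbd t htIcc).2.2.1, (hbd t htIcc).2.2.2]
    ring
  -- integrability of all pieces
  have iiφF : IntervalIntegrable
      (fun x => (2 * θx t x * θtx t x * θ t x - θx t x ^ 2 * θt t x) / θ t x ^ 2)
      volume a b := intInt (sliceX cF t htIcc)
  have iiφG : IntervalIntegrable (fun x => -(utt t x * (utxx t x + utxx t x))) volume a b :=
    intInt ((sutt.mul (sutxx.add sutxx)).neg)
  have iiφH : IntervalIntegrable (fun x => utxx t x * (uxx t x + uxx t x)) volume a b :=
    intInt (sutxx.mul (suxx.add suxx))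
  have iic1 : IntervalIntegrable
      (fun x => θ t x * (θxx t x / θ t x - θx t x ^ 2 / θ t x ^ 2) ^ 2) volume a b :=
    intInt (sθ.mul (((sθxx.div sθ hne').sub ((sθx.pow 2).div (sθ.pow 2) hne2)).pow 2))
  have iic2 : IntervalIntegrable (fun x => θx t x ^ 2 / θ t x * utx t x) volume a b :=
    intInt (((sθx.pow 2).div sθ hne').mul sutx)
  have iiPF : IntervalIntegrable (fun x =>
      ((θtx t x * θx t x + θt t x * θxx t x) * θ t x - θt t x * θx t x * θx t x) / θ t x ^ 2)
      volume a b :=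
    intInt (((((sθtx.mul sθx).add (sθt.mul sθxx)).mul sθ).sub
      ((sθt.mul sθx).mul sθx)).div (sθ.pow 2) hne2)
  have iiQF : IntervalIntegrable (fun x => θxx t x * utx t x + θx t x * utxx t x) volume a b :=
    intInt ((sθxx.mul sutx).add (sθx.mul sutxx))
  have iiRF : IntervalIntegrable (fun x =>
      (3 * θx t x ^ 2 * θxx t x * θ t x ^ 2 - θx t x ^ 3 * (2 * θ t x * θx t x))
        / (θ t x ^ 2) ^ 2) volume a b :=
    intInt (((((continuousOn_const.mul (sθx.pow 2)).mul sθxx).mul (sθ.pow 2)).sub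
      ((sθx.pow 3).mul ((continuousOn_const.mul sθ).mul sθx))).div
      ((sθ.pow 2).pow 2) (fun x hx => pow_ne_zero 2 (hne2 x hx)))
  -- pointwise identity via the PDEs
  have hptws : ∀ x ∈ Ioo a b,
      (2 * θx t x * θtx t x * θ t x - θx t x ^ 2 * θt t x) / θ t x ^ 2
        + (-(utt t x * (utxx t x + utxx t x))
        + (utxx t x * (uxx t x + uxx t x)
        + (2 * (θ t x * (θxx t x / θ t x - θx t x ^ 2 / θ t x ^ 2) ^ 2)
          - μ * (θx t x ^ 2 / θ t x * utx t x))))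
      = 2 * (((θtx t x * θx t x + θt t x * θxx t x) * θ t x - θt t x * θx t x * θx t x)
          / θ t x ^ 2)
        - (3 * θx t x ^ 2 * θxx t x * θ t x ^ 2 - θx t x ^ 3 * (2 * θ t x * θx t x))
          / (θ t x ^ 2) ^ 2
        - 2 * μ * (θxx t x * utx t x + θx t x * utxx t x) := by
    intro x hx
    have hθ0 := hne t htIcc x (Ioo_subset_Icc_self hx)
    have e1 : θt t x = θxx t x + μ * θ t x * utx t x := by linarith [hheat t htIoo x hx]
    have e2 : utt t x = uxx t x + μ * θx t x := by linarith [hwave t htIoo x hx]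
    rw [e1, e2]
    field_simp
    ring
  have hcomb := integral_congr_Ioo_s6 hab' hptws
  have e_split_L : ∫ x in a..b,
      ((2 * θx t x * θtx t x * θ t x - θx t x ^ 2 * θt t x) / θ t x ^ 2
        + (-(utt t x * (utxx t x + utxx t x))
        + (utxx t x * (uxx t x + uxx t x)
        + (2 * (θ t x * (θxx t x / θ t x - θx t x ^ 2 / θ t x ^ 2) ^ 2)
          - μ * (θx t x ^ 2 / θ t x * utx t x)))))
      = (∫ x in a..b, (2 * θx t x * θtx t x * θ t x - θx t x ^ 2 * θt t x) / θ t x ^ 2)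
        + ((∫ x in a..b, -(utt t x * (utxx t x + utxx t x)))
        + ((∫ x in a..b, utxx t x * (uxx t x + uxx t x))
        + (2 * (∫ x in a..b, θ t x * (θxx t x / θ t x - θx t x ^ 2 / θ t x ^ 2) ^ 2)
          - μ * (∫ x in a..b, θx t x ^ 2 / θ t x * utx t x)))) := by
    rw [intervalIntegral.integral_add iiφF (iiφG.add (iiφH.add
        ((iic1.const_mul 2).sub (iic2.const_mul μ)))),
      intervalIntegral.integral_add iiφG (iiφH.add ((iic1.const_mul 2).sub (iic2.const_mul μ))),
      intervalIntegral.integral_add iiφH ((iic1.const_mul 2).sub (iic2.const_mul μ)),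
      intervalIntegral.integral_sub (iic1.const_mul 2) (iic2.const_mul μ),
      intervalIntegral.integral_const_mul, intervalIntegral.integral_const_mul]
  have e_split_R : ∫ x in a..b,
      (2 * (((θtx t x * θx t x + θt t x * θxx t x) * θ t x - θt t x * θx t x * θx t x)
          / θ t x ^ 2)
        - (3 * θx t x ^ 2 * θxx t x * θ t x ^ 2 - θx t x ^ 3 * (2 * θ t x * θx t x))
          / (θ t x ^ 2) ^ 2
        - 2 * μ * (θxx t x * utx t x + θx t x * utxx t x)) = 0 := by
    rw [intervalIntegral.integral_sub ((iiPF.const_mul 2).sub iiRF)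
        (iiQF.const_mul (2 * μ)),
      intervalIntegral.integral_sub (iiPF.const_mul 2) iiRF,
      intervalIntegral.integral_const_mul, intervalIntegral.integral_const_mul,
      hP, hQ, hR]
    ring
  have heq0 : (∫ x in a..b, (2 * θx t x * θtx t x * θ t x - θx t x ^ 2 * θt t x) / θ t x ^ 2)
        + ((∫ x in a..b, -(utt t x * (utxx t x + utxx t x)))
        + ((∫ x in a..b, utxx t x * (uxx t x + uxx t x))
        + (2 * (∫ x in a..b, θ t x * (θxx t x / θ t x - θx t x ^ 2 / θ t x ^ 2) ^ 2)
          - μ * (∫ x in a..b, θx t x ^ 2 / θ t x * utx t x)))) = 0 := by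
    rw [← e_split_L, hcomb, e_split_R]
  have hval : 2 * (-(∫ x in a..b,
        θ t x * (derivWithin (derivWithin (fun y => Real.log (θ t y)) (Icc a b))
          (Icc a b) x) ^ 2)
      + μ / 2 * ∫ x in a..b, θx t x ^ 2 / θ t x * utx t x)
      = (∫ x in a..b, (2 * θx t x * θtx t x * θ t x - θx t x ^ 2 * θt t x) / θ t x ^ 2)
        + (∫ x in a..b, -(utt t x * (utxx t x + utxx t x)))
        + (∫ x in a..b, utxx t x * (uxx t x + uxx t x)) := by
    rw [hLcongr]
    linear_combination -heq0
  rw [hval]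
  exact (hF.add hG).add hH
end

section
/- Let $a<b$, $\theta\in C^2([a,b])$ positive with $\theta'(a)=\theta'(b)=0$, $w\in C^1([a,b])$, $\mu\in\mathbb{R}$, and $\varepsilon>0$. Then $\frac{\mu}{2}\int_a^b\frac{(\theta')^2}{\theta}\,w'\,dx \le \varepsilon\int_a^b\theta\left[(\log\theta)''\right]^2dx + \frac{13\mu^2}{8\varepsilon}\,\|w\|_{L^\infty(a,b)}^2\int_a^b\left((\theta^{1/2})'\right)^2dx$. -/
open Set

private lemma aux_young (μ ε v f g M : ℝ) (hε : 0 < ε) (hw2 : v ^ 2 ≤ M ^ 2) :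
    (-4 * μ) * (v * (f * g)) ≤ 4 * ε * g ^ 2 + 13 * μ ^ 2 / (8 * ε) * M ^ 2 * f ^ 2 := by
  have hmain : (-4 * μ) * (v * (f * g)) * ε
      ≤ (4 * ε * g ^ 2 + 13 * μ ^ 2 / (8 * ε) * M ^ 2 * f ^ 2) * ε := by
    have expand : (4 * ε * g ^ 2 + 13 * μ ^ 2 / (8 * ε) * M ^ 2 * f ^ 2) * ε
        = 4 * ε ^ 2 * g ^ 2 + 13 * μ ^ 2 * M ^ 2 / 8 * f ^ 2 := by
      field_simp
    rw [expand]
    nlinarith [sq_nonneg (2 * ε * g + μ * v * f),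
      mul_nonneg (sq_nonneg (μ * f)) (sub_nonneg.2 hw2),
      sq_nonneg (μ * M * f)]
  exact le_of_mul_le_mul_right hmain hε

set_option maxHeartbeats 1000000 in
theorem stmt_11 (a b μ ε : ℝ) (hab : a < b) (hε : 0 < ε) (θ θ' θ'' w w' : ℝ → ℝ)
    (hpos : ∀ x ∈ Icc a b, 0 < θ x)
    (hθ' : ∀ x ∈ Icc a b, HasDerivWithinAt θ (θ' x) (Icc a b) x)
    (hθ'' : ∀ x ∈ Icc a b, HasDerivWithinAt θ' (θ'' x) (Icc a b) x)
    (hθcont : ContinuousOn θ'' (Icc a b))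
    (hba : θ' a = 0) (hbb : θ' b = 0)
    (hw' : ∀ x ∈ Icc a b, HasDerivWithinAt w (w' x) (Icc a b) x)
    (hwcont : ContinuousOn w' (Icc a b)) :
    μ / 2 * (∫ x in a..b, (θ' x) ^ 2 / θ x * w' x)
      ≤ ε * (∫ x in a..b,
          θ x * (derivWithin (derivWithin (fun y => Real.log (θ y)) (Icc a b)) (Icc a b) x) ^ 2)
        + 13 * μ ^ 2 / (8 * ε) * (⨆ x : Icc a b, |w x|) ^ 2
          * ∫ x in a..b, (derivWithin (fun y => Real.sqrt (θ y)) (Icc a b) x) ^ 2 := by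
  have hs : UniqueDiffOn ℝ (Icc a b) := uniqueDiffOn_Icc hab
  have ha : a ∈ Icc a b := left_mem_Icc.2 hab.le
  have hb : b ∈ Icc a b := right_mem_Icc.2 hab.le
  -- continuity
  have cθ : ContinuousOn θ (Icc a b) := fun x hx => (hθ' x hx).continuousWithinAt
  have cθ' : ContinuousOn θ' (Icc a b) := fun x hx => (hθ'' x hx).continuousWithinAt
  have cw : ContinuousOn w (Icc a b) := fun x hx => (hw' x hx).continuousWithinAt
  set r : ℝ → ℝ := fun x => Real.sqrt (θ x) with hr
  have hrpos : ∀ x ∈ Icc a b, 0 < r x := fun x hx => Real.sqrt_pos.2 (hpos x hx)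
  have hrsq : ∀ x ∈ Icc a b, r x ^ 2 = θ x := fun x hx => Real.sq_sqrt (hpos x hx).le
  have cr : ContinuousOn r (Icc a b) := Real.continuous_sqrt.comp_continuousOn cθ
  set F : ℝ → ℝ := fun x => θ' x / (2 * r x) with hF
  set G : ℝ → ℝ := fun x => (θ'' x * (2 * r x) - θ' x * (2 * F x)) / (2 * r x) ^ 2 with hG
  set L : ℝ → ℝ := fun x => (θ'' x * θ x - θ' x * θ' x) / (θ x) ^ 2 with hL
  have c2r : ∀ x ∈ Icc a b, (2 : ℝ) * r x ≠ 0 := fun x hx => by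
    have := hrpos x hx; positivity
  -- derivative facts
  have hdr : ∀ x ∈ Icc a b, HasDerivWithinAt r (F x) (Icc a b) x := by
    intro x hx
    have h1 : HasDerivAt Real.sqrt (1 / (2 * Real.sqrt (θ x))) (θ x) :=
      Real.hasDerivAt_sqrt (hpos x hx).ne'
    have h2 := h1.comp_hasDerivWithinAt x (hθ' x hx)
    refine h2.congr_deriv ?_
    simp only [hF, hr]
    ring
  have hdF : ∀ x ∈ Icc a b, HasDerivWithinAt F (G x) (Icc a b) x := by
    intro x hx
    exact (hθ'' x hx).div ((hdr x hx).const_mul 2) (c2r x hx)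
  have hdlog : ∀ x ∈ Icc a b,
      HasDerivWithinAt (fun y => Real.log (θ y)) (θ' x / θ x) (Icc a b) x := by
    intro x hx
    have h1 : HasDerivAt Real.log (θ x)⁻¹ (θ x) := Real.hasDerivAt_log (hpos x hx).ne'
    have h2 := h1.comp_hasDerivWithinAt x (hθ' x hx)
    refine h2.congr_deriv ?_
    ring
  have hdL : ∀ x ∈ Icc a b, HasDerivWithinAt (fun y => θ' y / θ y) (L x) (Icc a b) x := by
    intro x hx
    exact (hθ'' x hx).div (hθ' x hx) (hpos x hx).ne'
  -- derivWithin identifications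
  have dsq : ∀ x ∈ Icc a b, derivWithin (fun y => Real.sqrt (θ y)) (Icc a b) x = F x :=
    fun x hx => (hdr x hx).derivWithin (hs x hx)
  have dlog2 : ∀ x ∈ Icc a b,
      derivWithin (derivWithin (fun y => Real.log (θ y)) (Icc a b)) (Icc a b) x = L x := by
    intro x hx
    have e1 : EqOn (derivWithin (fun y => Real.log (θ y)) (Icc a b))
        (fun y => θ' y / θ y) (Icc a b) :=
      fun y hy => (hdlog y hy).derivWithin (hs y hy)
    rw [derivWithin_congr e1 (e1 hx)]
    exact (hdL x hx).derivWithin (hs x hx)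
  -- continuity of F, G, L
  have cF : ContinuousOn F (Icc a b) :=
    cθ'.div (continuousOn_const.mul cr) c2r
  have cG : ContinuousOn G (Icc a b) := by
    apply ContinuousOn.div
    · exact (hθcont.mul (continuousOn_const.mul cr)).sub (cθ'.mul (continuousOn_const.mul cF))
    · exact (continuousOn_const.mul cr).pow 2
    · intro x hx
      have := c2r x hx
      positivity
  have cL : ContinuousOn L (Icc a b) := by
    apply ContinuousOn.div
    · exact (hθcont.mul cθ).sub (cθ'.mul cθ')
    · exact cθ.pow 2
    · intro x hx; have := hpos x hx; positivity
  -- integrability helper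
  have II : ∀ {f : ℝ → ℝ}, ContinuousOn f (Icc a b) →
      IntervalIntegrable f MeasureTheory.volume a b := by
    intro f hf
    exact ContinuousOn.intervalIntegrable (by rwa [uIcc_of_le hab.le])
  -- IBP helper: integrate a derivative
  have ibp : ∀ (Φ Φd : ℝ → ℝ), (∀ x ∈ Icc a b, HasDerivWithinAt Φ (Φd x) (Icc a b) x) →
      ContinuousOn Φd (Icc a b) → (∫ x in a..b, Φd x) = Φ b - Φ a := by
    intro Φ Φd hd hc
    apply intervalIntegral.integral_eq_sub_of_hasDeriv_right_of_le hab.le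
    · exact fun x hx => (hd x hx).continuousWithinAt
    · intro x hx
      exact (((hd x (Ioo_subset_Icc_self hx)).hasDerivAt (Icc_mem_nhds hx.1 hx.2)).hasDerivWithinAt)
    · exact II hc
  have hFa : F a = 0 := by simp [hF, hba]
  have hFb : F b = 0 := by simp [hF, hbb]
  -- IBP 1 : ∫ (w' F² + 2 w F G) = 0
  have ibp1 : (∫ x in a..b, (w' x * F x ^ 2 + 2 * (w x * (F x * G x)))) = 0 := by
    have hd : ∀ x ∈ Icc a b, HasDerivWithinAt (fun y => w y * F y ^ 2)
        (w' x * F x ^ 2 + 2 * (w x * (F x * G x))) (Icc a b) x := by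
      intro x hx
      have := (hw' x hx).mul ((hdF x hx).pow 2)
      refine this.congr_deriv ?_
      simp only [Pi.pow_apply]
      ring
    have hc : ContinuousOn (fun x => w' x * F x ^ 2 + 2 * (w x * (F x * G x))) (Icc a b) :=
      (hwcont.mul (cF.pow 2)).add (continuousOn_const.mul (cw.mul (cF.mul cG)))
    rw [ibp _ _ hd hc, hFa, hFb]
    ring
  -- IBP 2 : ∫ (3 F² G / r - F⁴ / θ) = 0
  have ibp2 : (∫ x in a..b, (3 * F x ^ 2 * G x / r x - F x ^ 4 / θ x)) = 0 := by
    have hd : ∀ x ∈ Icc a b, HasDerivWithinAt (fun y => F y ^ 3 / r y)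
        (3 * F x ^ 2 * G x / r x - F x ^ 4 / θ x) (Icc a b) x := by
      intro x hx
      have := ((hdF x hx).pow 3).div (hdr x hx) (hrpos x hx).ne'
      refine this.congr_deriv ?_
      simp only [Pi.pow_apply]
      have h2 := hrsq x hx
      have h3 := (hrpos x hx).ne'
      rw [← h2]
      field_simp
      ring
    have hc : ContinuousOn (fun x => 3 * F x ^ 2 * G x / r x - F x ^ 4 / θ x) (Icc a b) := by
      apply ContinuousOn.sub
      · exact ((continuousOn_const.mul (cF.pow 2)).mul cG).div cr
          (fun x hx => (hrpos x hx).ne')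
      · exact (cF.pow 4).div cθ (fun x hx => (hpos x hx).ne')
    rw [ibp _ _ hd hc, hFa, hFb]
    simp
  -- pointwise identity: θ L² = 4 G² - (8/3)(3F²G/r - F⁴/θ) + (4/3) F⁴/θ
  have key : ∀ x ∈ Icc a b, θ x * L x ^ 2
      = 4 * G x ^ 2 - (8 / 3) * (3 * F x ^ 2 * G x / r x - F x ^ 4 / θ x)
        + (4 / 3) * (F x ^ 4 / θ x) := by
    intro x hx
    have h2 := hrsq x hx
    have h3 := (hrpos x hx).ne'
    simp only [hL, hG, hF]
    rw [← h2]
    field_simp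
    ring
  -- supremum bound
  set M : ℝ := ⨆ x : Icc a b, |w x| with hM
  have hbdd : BddAbove (range fun x : Icc a b => |w x|) := by
    obtain ⟨C, hC⟩ := isCompact_Icc.exists_bound_of_continuousOn cw
    exact ⟨C, by rintro _ ⟨x, rfl⟩; simpa [Real.norm_eq_abs] using hC x x.2⟩
  have hMle : ∀ x ∈ Icc a b, |w x| ≤ M := fun x hx => le_ciSup hbdd ⟨x, hx⟩
  have hMsq : ∀ x ∈ Icc a b, (w x) ^ 2 ≤ M ^ 2 := by
    intro x hx
    have h1 := hMle x hx
    have h2 := abs_nonneg (w x)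
    nlinarith [sq_abs (w x)]
  -- Rewrite goal integrals
  have eqI2 : (∫ x in a..b,
      θ x * (derivWithin (derivWithin (fun y => Real.log (θ y)) (Icc a b)) (Icc a b) x) ^ 2)
      = ∫ x in a..b, θ x * L x ^ 2 := by
    apply intervalIntegral.integral_congr
    intro x hx
    rw [uIcc_of_le hab.le] at hx
    simp only [dlog2 x hx]
  have eqI3 : (∫ x in a..b, (derivWithin (fun y => Real.sqrt (θ y)) (Icc a b) x) ^ 2)
      = ∫ x in a..b, F x ^ 2 := by
    apply intervalIntegral.integral_congr
    intro x hx
    rw [uIcc_of_le hab.le] at hx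
    simp only [dsq x hx]
  have eqI1 : (∫ x in a..b, (θ' x) ^ 2 / θ x * w' x)
      = ∫ x in a..b, 4 * (w' x * F x ^ 2) := by
    apply intervalIntegral.integral_congr
    intro x hx
    rw [uIcc_of_le hab.le] at hx
    have h2 := hrsq x hx
    have h3 := (hrpos x hx).ne'
    simp only [hF]
    rw [← h2]
    field_simp
    ring
  rw [eqI1, eqI2, eqI3]
  -- abbreviate integrals
  set A : ℝ := ∫ x in a..b, w' x * F x ^ 2 with hA
  set B : ℝ := ∫ x in a..b, w x * (F x * G x) with hB
  have hAB : A + 2 * B = 0 := by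
    rw [hA, hB, ← intervalIntegral.integral_const_mul,
      ← intervalIntegral.integral_add (f := fun x => w' x * F x ^ 2)
        (g := fun x => 2 * (w x * (F x * G x))) (II (hwcont.mul (cF.pow 2)))
        (II (continuousOn_const.mul (cw.mul (cF.mul cG))))]
    exact ibp1
  have e4A : (∫ x in a..b, 4 * (w' x * F x ^ 2)) = 4 * A := by
    rw [hA, intervalIntegral.integral_const_mul]
  -- LHS = -4 μ B
  have eLHS : μ / 2 * (∫ x in a..b, 4 * (w' x * F x ^ 2)) = ∫ x in a..b,
      (-4 * μ) * (w x * (F x * G x)) := by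
    rw [e4A, intervalIntegral.integral_const_mul, ← hB]
    linear_combination (2 * μ) * hAB
  rw [eLHS]
  -- Young / pointwise bound
  set c : ℝ := 13 * μ ^ 2 / (8 * ε) * M ^ 2 with hc
  clear_value r F G L M c
  have young : ∀ x ∈ Icc a b, (-4 * μ) * (w x * (F x * G x))
      ≤ 4 * ε * G x ^ 2 + c * F x ^ 2 := by
    intro x hx
    rw [hc]
    exact aux_young μ ε (w x) (F x) (G x) M hε (hMsq x hx)
  have step2 : (∫ x in a..b, (-4 * μ) * (w x * (F x * G x)))
      ≤ ∫ x in a..b, (4 * ε * G x ^ 2 + c * F x ^ 2) := by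
    apply intervalIntegral.integral_mono_on hab.le
    · exact II (continuousOn_const.mul (cw.mul (cF.mul cG)))
    · exact II ((continuousOn_const.mul (cG.pow 2)).add (continuousOn_const.mul (cF.pow 2)))
    · exact young
  refine step2.trans ?_
  rw [intervalIntegral.integral_add (f := fun x => 4 * ε * G x ^ 2) (g := fun x => c * F x ^ 2) (II (continuousOn_const.mul (cG.pow 2)))
    (II (continuousOn_const.mul (cF.pow 2))),
    intervalIntegral.integral_const_mul, intervalIntegral.integral_const_mul]
  -- 4 ε ∫ G² ≤ ε ∫ θ L²
  have hG2 : 4 * (∫ x in a..b, G x ^ 2) ≤ ∫ x in a..b, θ x * L x ^ 2 := by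
    have e1 : (∫ x in a..b, θ x * L x ^ 2)
        = ∫ x in a..b, (4 * G x ^ 2 - (8 / 3) * (3 * F x ^ 2 * G x / r x - F x ^ 4 / θ x)
          + (4 / 3) * (F x ^ 4 / θ x)) := by
      apply intervalIntegral.integral_congr
      intro x hx
      rw [uIcc_of_le hab.le] at hx
      exact key x hx
    have cΨd : ContinuousOn (fun x => 3 * F x ^ 2 * G x / r x - F x ^ 4 / θ x) (Icc a b) := by
      apply ContinuousOn.sub
      · exact ((continuousOn_const.mul (cF.pow 2)).mul cG).div cr
          (fun x hx => (hrpos x hx).ne')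
      · exact (cF.pow 4).div cθ (fun x hx => (hpos x hx).ne')
    have cF4 : ContinuousOn (fun x => F x ^ 4 / θ x) (Icc a b) :=
      (cF.pow 4).div cθ (fun x hx => (hpos x hx).ne')
    rw [e1, intervalIntegral.integral_add
      (f := fun x => 4 * G x ^ 2 - (8 / 3) * (3 * F x ^ 2 * G x / r x - F x ^ 4 / θ x))
      (g := fun x => (4 / 3) * (F x ^ 4 / θ x))
      ((II (continuousOn_const.mul (cG.pow 2))).sub (II (continuousOn_const.mul cΨd)))
      (II (continuousOn_const.mul cF4)),
      intervalIntegral.integral_sub (f := fun x => 4 * G x ^ 2)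
        (g := fun x => (8 / 3) * (3 * F x ^ 2 * G x / r x - F x ^ 4 / θ x))
        (II (continuousOn_const.mul (cG.pow 2)))
        (II (continuousOn_const.mul cΨd)),
      intervalIntegral.integral_const_mul, intervalIntegral.integral_const_mul,
      intervalIntegral.integral_const_mul, ibp2]
    have hnn : 0 ≤ ∫ x in a..b, F x ^ 4 / θ x := by
      apply intervalIntegral.integral_nonneg hab.le
      intro x hx
      have := hpos x hx
      positivity
    linarith
  have hFnn : 0 ≤ ∫ x in a..b, F x ^ 2 := by
    apply intervalIntegral.integral_nonneg hab.le
    intro x hx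
    positivity
  nlinarith [hG2, hε.le, hFnn]
end

section
/- Let $a<b$, $T>0$, $\mu\in\mathbb{R}$, and let $u\in C^3([0,T]\times[a,b])$, $\theta\in C^{1,2}([0,T]\times[a,b])$ with $\theta>0$ solve the system $u_{tt}-u_{xx}=\mu\theta_x$, $\theta_t-\theta_{xx}=\mu\theta u_{tx}$ with $u(\cdot,a)=u(\cdot,b)=0$, $\theta_x(\cdot,a)=\theta_x(\cdot,b)=0$. Set $\tau=\log\theta$. Then for all $t\in[0,T]$: $\frac12\int_a^b u_t^2\,dx + \frac12\int_a^b u_x^2\,dx + \int_a^b(\theta-\tau)\,dx + \int_0^t\int_a^b\tau_x^2\,dx\,ds = \frac12\int_a^b u_t(0,\cdot)^2dx + \frac12\int_a^b u_x(0,\cdot)^2dx + \int_a^b(\theta(0,\cdot)-\tau(0,\cdot))\,dx$. -/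
open Set MeasureTheory intervalIntegral

-- Tietze extension helper
lemma exists_ext {K : Set (ℝ × ℝ)} (hK : IsClosed K) {F : ℝ × ℝ → ℝ}
    (hF : ContinuousOn F K) :
    ∃ G : ℝ × ℝ → ℝ, Continuous G ∧ ∀ p ∈ K, G p = F p := by
  obtain ⟨g, hg⟩ := ContinuousMap.exists_restrict_eq hK ⟨K.restrict F, hF.restrict⟩
  refine ⟨g, g.continuous, fun p hp => ?_⟩
  exact congrFun (congrArg ContinuousMap.toFun hg) ⟨p, hp⟩

-- FTC on a closed interval with derivatives within the interval
lemma ftc_Icc {c d : ℝ} (hcd : c ≤ d) {f f' : ℝ → ℝ}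
    (hf : ∀ x ∈ Icc c d, HasDerivWithinAt f (f' x) (Icc c d) x)
    (hint : IntervalIntegrable f' volume c d) :
    ∫ x in c..d, f' x = f d - f c := by
  refine integral_eq_sub_of_hasDeriv_right_of_le hcd
    (fun x hx => (hf x hx).continuousWithinAt) (fun x hx => ?_) hint
  exact ((hf x ⟨hx.1.le, hx.2.le⟩).hasDerivAt (Icc_mem_nhds hx.1 hx.2)).hasDerivWithinAt

-- FTC derivative of primitive of a continuous function
lemma primitive_hasDerivAt {g : ℝ → ℝ} (hg : Continuous g) (c x : ℝ) :
    HasDerivAt (fun y => ∫ s in c..y, g s) (g x) x :=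
  integral_hasDerivAt_right (hg.intervalIntegrable _ _)
    (hg.stronglyMeasurable.stronglyMeasurableAtFilter) hg.continuousAt

-- Fubini for a continuous function on rectangles
lemma fubini_cont {p q c d : ℝ} (hpq : p ≤ q) (hcd : c ≤ d) {G : ℝ × ℝ → ℝ}
    (hG : Continuous G) :
    ∫ s in p..q, (∫ x in c..d, G (s, x)) = ∫ x in c..d, (∫ s in p..q, G (s, x)) := by
  rw [intervalIntegral.integral_of_le hpq, intervalIntegral.integral_of_le hcd]
  simp_rw [intervalIntegral.integral_of_le hcd, intervalIntegral.integral_of_le hpq]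
  have hint : Integrable (Function.uncurry (fun s x => G (s, x)))
      ((volume.restrict (Ioc p q)).prod (volume.restrict (Ioc c d))) := by
    rw [Measure.prod_restrict]
    have : IntegrableOn G (Icc p q ×ˢ Icc c d) :=
      hG.continuousOn.integrableOn_compact (isCompact_Icc.prod isCompact_Icc)
    exact (this.mono_set (prod_mono Ioc_subset_Icc_self Ioc_subset_Icc_self))
  exact MeasureTheory.integral_integral_swap hint

theorem stmt_13 (a b T μ : ℝ) (hab : a < b) (hT : 0 < T)
    (u ut utt ux uxx utx θ θt θx θxx : ℝ → ℝ → ℝ)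
    (hpos : ∀ t ∈ Icc 0 T, ∀ x ∈ Icc a b, 0 < θ t x)
    (hut : ∀ t ∈ Icc 0 T, ∀ x ∈ Icc a b,
      HasDerivWithinAt (fun s => u s x) (ut t x) (Icc 0 T) t)
    (hutt : ∀ t ∈ Icc 0 T, ∀ x ∈ Icc a b,
      HasDerivWithinAt (fun s => ut s x) (utt t x) (Icc 0 T) t)
    (hux : ∀ t ∈ Icc 0 T, ∀ x ∈ Icc a b,
      HasDerivWithinAt (u t) (ux t x) (Icc a b) x)
    (huxx : ∀ t ∈ Icc 0 T, ∀ x ∈ Icc a b,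
      HasDerivWithinAt (ux t) (uxx t x) (Icc a b) x)
    (hutx : ∀ t ∈ Icc 0 T, ∀ x ∈ Icc a b,
      HasDerivWithinAt (ut t) (utx t x) (Icc a b) x)
    (hθt : ∀ t ∈ Icc 0 T, ∀ x ∈ Icc a b,
      HasDerivWithinAt (fun s => θ s x) (θt t x) (Icc 0 T) t)
    (hθx : ∀ t ∈ Icc 0 T, ∀ x ∈ Icc a b,
      HasDerivWithinAt (θ t) (θx t x) (Icc a b) x)
    (hθxx : ∀ t ∈ Icc 0 T, ∀ x ∈ Icc a b,
      HasDerivWithinAt (θx t) (θxx t x) (Icc a b) x)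
    (hcont : ContinuousOn (fun p : ℝ × ℝ =>
      (utt p.1 p.2, uxx p.1 p.2, utx p.1 p.2, θt p.1 p.2, θxx p.1 p.2, θx p.1 p.2,
        ut p.1 p.2, ux p.1 p.2, θ p.1 p.2)) (Icc 0 T ×ˢ Icc a b))
    (hwave : ∀ t ∈ Ioo 0 T, ∀ x ∈ Ioo a b, utt t x - uxx t x = μ * θx t x)
    (hheat : ∀ t ∈ Ioo 0 T, ∀ x ∈ Ioo a b, θt t x - θxx t x = μ * θ t x * utx t x)
    (hbd : ∀ t ∈ Icc 0 T, u t a = 0 ∧ u t b = 0 ∧ θx t a = 0 ∧ θx t b = 0) :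
    ∀ t ∈ Icc 0 T,
      (1/2) * (∫ x in a..b, (ut t x) ^ 2) + (1/2) * (∫ x in a..b, (ux t x) ^ 2)
          + (∫ x in a..b, (θ t x - Real.log (θ t x)))
          + (∫ s in (0:ℝ)..t, ∫ x in a..b, (θx s x / θ s x) ^ 2)
        = (1/2) * (∫ x in a..b, (ut 0 x) ^ 2) + (1/2) * (∫ x in a..b, (ux 0 x) ^ 2)
          + (∫ x in a..b, (θ 0 x - Real.log (θ 0 x))) := by
  set K : Set (ℝ × ℝ) := Icc 0 T ×ˢ Icc a b with hK
  have hab' : a ≤ b := hab.le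
  have h0T : (0:ℝ) ∈ Icc 0 T := ⟨le_refl 0, hT.le⟩
  have haI : a ∈ Icc a b := ⟨le_refl a, hab'⟩
  have hbI : b ∈ Icc a b := ⟨hab', le_refl b⟩
  -- continuity of the components
  have cutt : ContinuousOn (fun p : ℝ × ℝ => utt p.1 p.2) K :=
    continuous_fst.comp_continuousOn hcont
  have cuxx : ContinuousOn (fun p : ℝ × ℝ => uxx p.1 p.2) K :=
    (continuous_fst.comp continuous_snd).comp_continuousOn hcont
  have cutx : ContinuousOn (fun p : ℝ × ℝ => utx p.1 p.2) K :=
    (continuous_fst.comp (continuous_snd.comp continuous_snd)).comp_continuousOn hcont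
  have cθt : ContinuousOn (fun p : ℝ × ℝ => θt p.1 p.2) K :=
    (continuous_fst.comp (continuous_snd.comp (continuous_snd.comp
      continuous_snd))).comp_continuousOn hcont
  have cθxx : ContinuousOn (fun p : ℝ × ℝ => θxx p.1 p.2) K :=
    (continuous_fst.comp (continuous_snd.comp (continuous_snd.comp (continuous_snd.comp
      continuous_snd)))).comp_continuousOn hcont
  have cθx : ContinuousOn (fun p : ℝ × ℝ => θx p.1 p.2) K :=
    (continuous_fst.comp (continuous_snd.comp (continuous_snd.comp (continuous_snd.comp
      (continuous_snd.comp continuous_snd))))).comp_continuousOn hcont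
  have cut : ContinuousOn (fun p : ℝ × ℝ => ut p.1 p.2) K :=
    (continuous_fst.comp (continuous_snd.comp (continuous_snd.comp (continuous_snd.comp
      (continuous_snd.comp (continuous_snd.comp continuous_snd)))))).comp_continuousOn hcont
  have cux : ContinuousOn (fun p : ℝ × ℝ => ux p.1 p.2) K :=
    (continuous_fst.comp (continuous_snd.comp (continuous_snd.comp (continuous_snd.comp
      (continuous_snd.comp (continuous_snd.comp (continuous_snd.comp
        continuous_snd))))))).comp_continuousOn hcont
  have cθ : ContinuousOn (fun p : ℝ × ℝ => θ p.1 p.2) K :=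
    ((continuous_snd.comp (continuous_snd.comp (continuous_snd.comp (continuous_snd.comp
      (continuous_snd.comp (continuous_snd.comp (continuous_snd.comp
        continuous_snd))))))).comp_continuousOn hcont)
  have hθne : ∀ p ∈ K, θ p.1 p.2 ≠ 0 := fun p hp => ne_of_gt (hpos p.1 hp.1 p.2 hp.2)
  -- slices
  have tslice : ∀ {F : ℝ → ℝ → ℝ}, ContinuousOn (fun p : ℝ × ℝ => F p.1 p.2) K →
      ∀ x ∈ Icc a b, ContinuousOn (fun s => F s x) (Icc 0 T) := by
    intro F hF x hx
    exact hF.comp ((continuous_id.prodMk continuous_const).continuousOn)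
      (fun s hs => ⟨hs, hx⟩)
  have xslice : ∀ {F : ℝ → ℝ → ℝ}, ContinuousOn (fun p : ℝ × ℝ => F p.1 p.2) K →
      ∀ t ∈ Icc 0 T, ContinuousOn (fun x => F t x) (Icc a b) := by
    intro F hF t ht
    exact hF.comp ((continuous_const.prodMk continuous_id).continuousOn)
      (fun x hx => ⟨ht, hx⟩)
  -- integrability helpers
  have intX : ∀ g : ℝ → ℝ, ContinuousOn g (Icc a b) → IntervalIntegrable g volume a b :=
    fun g hg => (hg.mono (uIcc_of_le hab').subset).intervalIntegrable
  have intXsub : ∀ y, a ≤ y → y ≤ b → ∀ g : ℝ → ℝ, ContinuousOn g (Icc a b) →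
      IntervalIntegrable g volume a y := fun y hy1 hy2 g hg =>
    ((hg.mono (Icc_subset_Icc le_rfl hy2)).mono (uIcc_of_le hy1).subset).intervalIntegrable
  have intT : ∀ t', 0 ≤ t' → t' ≤ T → ∀ g : ℝ → ℝ, ContinuousOn g (Icc 0 T) →
      IntervalIntegrable g volume 0 t' := fun t' h0 hT' g hg =>
    ((hg.mono (Icc_subset_Icc le_rfl hT')).mono (uIcc_of_le h0).subset).intervalIntegrable
  -- uniqueness of derivatives
  have uniq : ∀ {g : ℝ → ℝ} {d1 d2 : ℝ} {s : Set ℝ} {x : ℝ}, UniqueDiffWithinAt ℝ s x →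
      HasDerivWithinAt g d1 s x → HasDerivWithinAt g d2 s x → d1 = d2 := by
    intro g d1 d2 s x hu h1 h2
    rw [← h1.derivWithin hu, ← h2.derivWithin hu]
  -- boundary values of ut
  have hbdut : ∀ t ∈ Icc 0 T, ut t a = 0 ∧ ut t b = 0 := by
    intro t ht
    constructor
    · refine uniq ((uniqueDiffOn_Icc hT) t ht) (hut t ht a haI) ?_
      exact (hasDerivWithinAt_const t _ (0:ℝ)).congr
        (fun s hs => (hbd s hs).1) (hbd t ht).1
    · refine uniq ((uniqueDiffOn_Icc hT) t ht) (hut t ht b hbI) ?_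
      exact (hasDerivWithinAt_const t _ (0:ℝ)).congr
        (fun s hs => (hbd s hs).2.1) (hbd t ht).2.1
  -- extension of utx
  obtain ⟨Utx, hUtxc, hUtxe⟩ := exists_ext (isClosed_Icc.prod isClosed_Icc) cutx
  -- representation of ux
  have hrep : ∀ t' ∈ Icc 0 T, ∀ x ∈ Icc a b,
      ux t' x = ux 0 x + ∫ s in (0:ℝ)..t', Utx (s, x) := by
    intro t' ht' x hx
    set H : ℝ → ℝ := fun y => ∫ s in (0:ℝ)..t', Utx (s, y) with hHdef
    have hHcont : Continuous H := by
      have : Continuous (Function.uncurry (fun y s => Utx (s, y))) :=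
        hUtxc.comp continuous_swap
      exact continuous_parametric_intervalIntegral_of_continuous' this 0 t'
    set ψ : ℝ → ℝ := fun y => u 0 y + (∫ s in (0:ℝ)..t', ut s a) + ∫ y' in a..y, H y'
      with hψdef
    have heq : ∀ y ∈ Icc a b, u t' y = ψ y := by
      intro y hy
      have hsub : Icc (0:ℝ) t' ⊆ Icc 0 T := Icc_subset_Icc le_rfl ht'.2
      have hstep : ∫ s in (0:ℝ)..t', ut s y = u t' y - u 0 y := by
        refine ftc_Icc ht'.1 (fun s hs => (hut s (hsub hs) y hy).mono hsub) ?_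
        exact intT t' ht'.1 ht'.2 _ (tslice cut y hy)
      have hinner : ∀ s ∈ Icc 0 T, ∫ y' in a..y, Utx (s, y') = ut s y - ut s a := by
        intro s hs
        have h1 : ∫ y' in a..y, utx s y' = ut s y - ut s a := by
          have hsub2 : Icc a y ⊆ Icc a b := Icc_subset_Icc le_rfl hy.2
          refine ftc_Icc hy.1 (fun y' hy' => (hutx s hs y' (hsub2 hy')).mono hsub2) ?_
          exact intXsub y hy.1 hy.2 _ (xslice cutx s hs)
        rw [← h1]
        refine integral_congr (fun y' hy' => ?_)
        have : y' ∈ Icc a b := Icc_subset_Icc le_rfl hy.2 ((uIcc_of_le hy.1).subset hy')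
        exact hUtxe (s, y') ⟨hs, this⟩
      have e1 : ∫ s in (0:ℝ)..t', ut s y
          = ∫ s in (0:ℝ)..t', (ut s a + ∫ y' in a..y, Utx (s, y')) := by
        refine integral_congr (fun s hs => ?_)
        have hsI : s ∈ Icc 0 T := (Icc_subset_Icc le_rfl ht'.2) ((uIcc_of_le ht'.1).subset hs)
        rw [hinner s hsI]; ring
      have e2 : ∫ s in (0:ℝ)..t', (ut s a + ∫ y' in a..y, Utx (s, y'))
          = (∫ s in (0:ℝ)..t', ut s a) + ∫ s in (0:ℝ)..t', ∫ y' in a..y, Utx (s, y') := by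
        refine integral_add (intT t' ht'.1 ht'.2 _ (tslice cut a haI)) ?_
        have hc : Continuous (fun s => ∫ y' in a..y, Utx (s, y')) := by
          have : Continuous (Function.uncurry (fun s y' => Utx (s, y'))) := hUtxc
          exact continuous_parametric_intervalIntegral_of_continuous' this a y
        exact hc.intervalIntegrable _ _
      have e3 : ∫ s in (0:ℝ)..t', ∫ y' in a..y, Utx (s, y')
          = ∫ y' in a..y, H y' := fubini_cont ht'.1 hy.1 hUtxc
      have : u t' y - u 0 y = (∫ s in (0:ℝ)..t', ut s a) + ∫ y' in a..y, H y' := by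
        rw [← hstep, e1, e2, e3]
      simp only [hψdef]; linarith
    have hψ : HasDerivWithinAt ψ (ux 0 x + H x) (Icc a b) x := by
      have h1 := (hux 0 h0T x hx).add_const (∫ s in (0:ℝ)..t', ut s a)
      have h2 := (primitive_hasDerivAt hHcont a x).hasDerivWithinAt (s := Icc a b)
      exact h1.add h2
    have hudW : HasDerivWithinAt (u t') (ux 0 x + H x) (Icc a b) x :=
      hψ.congr (fun y hy => heq y hy) (heq x hx)
    exact uniq ((uniqueDiffOn_Icc hab) x hx) (hux t' ht' x hx) hudW
  -- the time derivative of ux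
  have huxt : ∀ t' ∈ Icc 0 T, ∀ x ∈ Icc a b,
      HasDerivWithinAt (fun s => ux s x) (utx t' x) (Icc 0 T) t' := by
    intro t' ht' x hx
    have hc : Continuous (fun r => Utx (r, x)) :=
      hUtxc.comp (continuous_id.prodMk continuous_const)
    have h2 : HasDerivAt (fun s => ux 0 x + ∫ r in (0:ℝ)..s, Utx (r, x)) (Utx (t', x)) t' :=
      (primitive_hasDerivAt hc 0 t').const_add (ux 0 x)
    have h3 := (h2.hasDerivWithinAt (s := Icc 0 T)).congr
      (fun s hs => hrep s hs x hx) (hrep t' ht' x hx)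
    rwa [hUtxe (t', x) ⟨ht', hx⟩] at h3
  -- continue from huxt
  set f : ℝ → ℝ → ℝ := fun s x =>
    (1/2)*(ut s x)^2 + (1/2)*(ux s x)^2 + (θ s x - Real.log (θ s x)) with hfdef
  set d : ℝ → ℝ → ℝ := fun s x =>
    (ut s x * utt s x + ux s x * utx s x) + (θt s x - θt s x / θ s x) with hddef
  set G : ℝ → ℝ → ℝ := fun s x => (θx s x / θ s x)^2 with hGdef
  -- two-variable continuity of d and G
  have cd : ContinuousOn (fun p : ℝ × ℝ => d p.1 p.2) K := by
    exact ((cut.mul cutt).add (cux.mul cutx)).add (cθt.sub (cθt.div cθ hθne))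
  have cG : ContinuousOn (fun p : ℝ × ℝ => G p.1 p.2) K := (cθx.div cθ hθne).pow 2
  -- time derivative of f
  have hfd : ∀ s ∈ Icc 0 T, ∀ x ∈ Icc a b,
      HasDerivWithinAt (fun r => f r x) (d s x) (Icc 0 T) s := by
    intro s hs x hx
    have h1 : HasDerivWithinAt (fun r => (1/2:ℝ)*(ut r x)^2) (ut s x * utt s x)
        (Icc 0 T) s := by
      have := ((hutt s hs x hx).fun_pow 2).const_mul (1/2:ℝ)
      exact this.congr_deriv (by push_cast; ring)
    have h2 : HasDerivWithinAt (fun r => (1/2:ℝ)*(ux r x)^2) (ux s x * utx s x)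
        (Icc 0 T) s := by
      have := ((huxt s hs x hx).fun_pow 2).const_mul (1/2:ℝ)
      exact this.congr_deriv (by push_cast; ring)
    have h3 : HasDerivWithinAt (fun r => θ r x - Real.log (θ r x))
        (θt s x - θt s x / θ s x) (Icc 0 T) s :=
      (hθt s hs x hx).sub ((hθt s hs x hx).log (ne_of_gt (hpos s hs x hx)))
    exact (h1.add h2).add h3
  -- splitting of the energy integral
  have splitA : ∀ t ∈ Icc 0 T, ∫ x in a..b, f t x
      = (1/2) * (∫ x in a..b, (ut t x) ^ 2) + (1/2) * (∫ x in a..b, (ux t x) ^ 2)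
        + (∫ x in a..b, (θ t x - Real.log (θ t x))) := by
    intro t ht
    have i1 : IntervalIntegrable (fun x => (1/2:ℝ)*(ut t x)^2) volume a b :=
      intX _ (continuousOn_const.mul ((xslice cut t ht).pow 2))
    have i2 : IntervalIntegrable (fun x => (1/2:ℝ)*(ux t x)^2) volume a b :=
      intX _ (continuousOn_const.mul ((xslice cux t ht).pow 2))
    have i3 : IntervalIntegrable (fun x => θ t x - Real.log (θ t x)) volume a b :=
      intX _ ((xslice cθ t ht).sub ((xslice cθ t ht).log
        (fun x hx => ne_of_gt (hpos t ht x hx))))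
    rw [hfdef]
    rw [integral_add (i1.add i2) i3, integral_add i1 i2,
      intervalIntegral.integral_const_mul, intervalIntegral.integral_const_mul]
  -- Fubini on K
  have fubiniK : ∀ {F : ℝ × ℝ → ℝ}, ContinuousOn F K → ∀ t ∈ Icc 0 T,
      (∫ x in a..b, ∫ s in (0:ℝ)..t, F (s, x)) = ∫ s in (0:ℝ)..t, ∫ x in a..b, F (s, x) := by
    intro F hF t ht
    obtain ⟨G', hG'c, hG'e⟩ := exists_ext (isClosed_Icc.prod isClosed_Icc) hF
    have hmem : ∀ s ∈ uIcc (0:ℝ) t, ∀ x ∈ uIcc a b, (s, x) ∈ K := by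
      intro s hs x hx
      refine ⟨(Icc_subset_Icc le_rfl ht.2) ((uIcc_of_le ht.1).subset hs),
        (uIcc_of_le hab').subset hx⟩
    calc (∫ x in a..b, ∫ s in (0:ℝ)..t, F (s, x))
        = ∫ x in a..b, ∫ s in (0:ℝ)..t, G' (s, x) := by
          refine integral_congr (fun x hx => ?_)
          exact integral_congr (fun s hs => (hG'e (s, x) (hmem s hs x hx)).symm)
      _ = ∫ s in (0:ℝ)..t, ∫ x in a..b, G' (s, x) := (fubini_cont ht.1 hab' hG'c).symm
      _ = ∫ s in (0:ℝ)..t, ∫ x in a..b, F (s, x) := by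
          refine integral_congr (fun s hs => ?_)
          exact integral_congr (fun x hx => hG'e (s, x) (hmem s hs x hx))
  -- space identity
  have space_id : ∀ s ∈ Ioo 0 T, (∫ x in a..b, (d s x + G s x)) = 0 := by
    intro s hs
    have hsI : s ∈ Icc 0 T := ⟨hs.1.le, hs.2.le⟩
    set Φ : ℝ → ℝ := fun x =>
      ut s x * ux s x + μ * (ut s x * θ s x) + θx s x - θx s x / θ s x
        - μ * ut s x with hΦdef
    have hΦc : ContinuousOn Φ (Icc a b) := by
      have hne : ∀ x ∈ Icc a b, θ s x ≠ 0 := fun x hx => ne_of_gt (hpos s hsI x hx)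
      exact (((((xslice cut s hsI).mul (xslice cux s hsI)).add
        (continuousOn_const.mul ((xslice cut s hsI).mul (xslice cθ s hsI)))).add
        (xslice cθx s hsI)).sub ((xslice cθx s hsI).div (xslice cθ s hsI) hne)).sub
        (continuousOn_const.mul (xslice cut s hsI))
    have hderiv : ∀ x ∈ Ioo a b, HasDerivWithinAt Φ (d s x + G s x) (Ioi x) x := by
      intro x hx
      have hxI : x ∈ Icc a b := ⟨hx.1.le, hx.2.le⟩
      have hnh : Icc a b ∈ nhds x := Icc_mem_nhds hx.1 hx.2
      have Hut : HasDerivAt (ut s) (utx s x) x := (hutx s hsI x hxI).hasDerivAt hnh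
      have Hux : HasDerivAt (ux s) (uxx s x) x := (huxx s hsI x hxI).hasDerivAt hnh
      have Hθ : HasDerivAt (θ s) (θx s x) x := (hθx s hsI x hxI).hasDerivAt hnh
      have Hθx : HasDerivAt (θx s) (θxx s x) x := (hθxx s hsI x hxI).hasDerivAt hnh
      have hne : θ s x ≠ 0 := ne_of_gt (hpos s hsI x hxI)
      have HΦ : HasDerivAt Φ ((utx s x * ux s x + ut s x * uxx s x)
          + μ * (utx s x * θ s x + ut s x * θx s x)
          + θxx s x - (θxx s x * θ s x - θx s x * θx s x) / (θ s x)^2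
          - μ * utx s x) x := by
        exact ((((Hut.mul Hux).add ((Hut.mul Hθ).const_mul μ)).add Hθx).sub
          (Hθx.div Hθ hne)).sub (Hut.const_mul μ)
      have heq : (utx s x * ux s x + ut s x * uxx s x)
          + μ * (utx s x * θ s x + ut s x * θx s x)
          + θxx s x - (θxx s x * θ s x - θx s x * θx s x) / (θ s x)^2
          - μ * utx s x
          = d s x + G s x := by
        have e1 : utt s x = uxx s x + μ * θx s x := by
          have := hwave s hs x hx; linarith
        have e2 : θt s x = θxx s x + μ * θ s x * utx s x := by
          have := hheat s hs x hx; linarith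
        rw [hddef, hGdef]
        simp only [e1, e2]
        field_simp
        ring
      rw [heq] at HΦ
      exact HΦ.hasDerivWithinAt
    have hint : IntervalIntegrable (fun x => d s x + G s x) volume a b :=
      intX _ ((xslice cd s hsI).add (xslice cG s hsI))
    have := integral_eq_sub_of_hasDeriv_right_of_le hab' hΦc hderiv hint
    rw [this, hΦdef]
    have hba := hbdut s hsI
    have hbθ := hbd s hsI
    simp [hba.1, hba.2, hbθ.2.2.1, hbθ.2.2.2]
  -- final assembly
  have cf : ContinuousOn (fun p : ℝ × ℝ => f p.1 p.2) K := by
    exact ((continuousOn_const.mul (cut.pow 2)).add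
      (continuousOn_const.mul (cux.pow 2))).add (cθ.sub (cθ.log hθne))
  intro t ht
  have h0t : (0:ℝ) ≤ t := ht.1
  have htT : t ≤ T := ht.2
  have hsub : Icc (0:ℝ) t ⊆ Icc 0 T := Icc_subset_Icc le_rfl htT
  have intf : ∀ r ∈ Icc 0 T, IntervalIntegrable (fun x => f r x) volume a b :=
    fun r hr => intX _ (xslice cf r hr)
  have step2 : EqOn (fun x => f t x - f 0 x) (fun x => ∫ s in (0:ℝ)..t, d s x)
      (uIcc a b) := by
    intro x hx
    have hxI : x ∈ Icc a b := (uIcc_of_le hab').subset hx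
    have := ftc_Icc h0t (fun s hs => (hfd s (hsub hs) x hxI).mono hsub)
      (intT t h0t htT _ (tslice cd x hxI))
    simpa using this.symm
  have step4 : (∫ s in (0:ℝ)..t, (∫ x in a..b, d s x))
      = ∫ s in (0:ℝ)..t, (- ∫ x in a..b, G s x) := by
    refine integral_congr_ae ?_
    have hae : ∀ᵐ s : ℝ, s ≠ t := by
      rw [MeasureTheory.ae_iff]
      simpa using measure_singleton t
    filter_upwards [hae] with s hsne hsmem
    have hsm : s ∈ Ioc 0 t := by rwa [uIoc_of_le h0t] at hsmem
    have hsIoo : s ∈ Ioo 0 T := ⟨hsm.1, lt_of_lt_of_le (lt_of_le_of_ne hsm.2 hsne) htT⟩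
    have hsI : s ∈ Icc 0 T := ⟨hsIoo.1.le, hsIoo.2.le⟩
    have h0 := space_id s hsIoo
    have iD : IntervalIntegrable (fun x => d s x) volume a b := intX _ (xslice cd s hsI)
    have iG : IntervalIntegrable (fun x => G s x) volume a b := intX _ (xslice cG s hsI)
    rw [integral_add iD iG] at h0
    linarith
  have chain : (∫ x in a..b, f t x) - (∫ x in a..b, f 0 x)
      = - ∫ s in (0:ℝ)..t, ∫ x in a..b, G s x := by
    calc (∫ x in a..b, f t x) - (∫ x in a..b, f 0 x)
        = ∫ x in a..b, (f t x - f 0 x) := (integral_sub (intf t ht) (intf 0 h0T)).symm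
      _ = ∫ x in a..b, ∫ s in (0:ℝ)..t, d s x := integral_congr step2
      _ = ∫ s in (0:ℝ)..t, ∫ x in a..b, d s x := fubiniK cd t ht
      _ = ∫ s in (0:ℝ)..t, (- ∫ x in a..b, G s x) := step4
      _ = - ∫ s in (0:ℝ)..t, ∫ x in a..b, G s x := integral_neg
  have lhs1 := splitA t ht
  have lhs0 := splitA 0 h0T
  have hGoal : (∫ s in (0:ℝ)..t, ∫ x in a..b, (θx s x / θ s x)^2)
      = ∫ s in (0:ℝ)..t, ∫ x in a..b, G s x := rfl
  rw [hGoal]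
  linarith
end

section
/- Let $a<b$, $T>0$, $\mu\in\mathbb{R}$, and suppose $(u_1,\theta_1)$ and $(u_2,\theta_2)$ are two classical solutions ($u_i\in C^3([0,T]\times[a,b])$, $\theta_i\in C^{1,2}([0,T]\times[a,b])$) of the system $u_{tt}-u_{xx}=\mu\theta_x$, $\theta_t-\theta_{xx}=\mu\theta u_{tx}$ with boundary conditions $u(\cdot,a)=u(\cdot,b)=0$, $\theta_x(\cdot,a)=\theta_x(\cdot,b)=0$, sharing the same initial data $u_1(0,\cdot)=u_2(0,\cdot)$, $\partial_t u_1(0,\cdot)=\partial_t u_2(0,\cdot)$, $\theta_1(0,\cdot)=\theta_2(0,\cdot)$. Then $u_1=u_2$ and $\theta_1=\theta_2$ on $[0,T]\times[a,b]$. -/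
open Set MeasureTheory intervalIntegral


lemma young_abs1 {c x y C : ℝ} (hc : |c| ≤ C) : |2*(c*(x*y))| ≤ C*(x^2+y^2) := by
  have h0 : (0:ℝ) ≤ C := le_trans (abs_nonneg c) hc
  have h2 : |2*(c*(x*y))| = 2*(|c| * (|x| * |y|)) := by
    rw [abs_mul, abs_mul, abs_mul, abs_two]
  rw [h2]
  have h3 : 2*(|c| * (|x| * |y|)) ≤ 2*(C * (|x| * |y|)) := by
    gcongr
  have h4 : 2*(C * (|x| * |y|)) ≤ C*(x^2+y^2) := by
    nlinarith [sq_nonneg (|x| - |y|), sq_abs x, sq_abs y, abs_nonneg x, abs_nonneg y]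
  linarith

lemma young_abs2 {c x y C : ℝ} (hc : |c| ≤ C) : |2*(c*(x*y))| ≤ x^2 + C^2*y^2 := by
  have h0 : (0:ℝ) ≤ C := le_trans (abs_nonneg c) hc
  have h2 : |2*(c*(x*y))| = 2*(|c| * (|x| * |y|)) := by
    rw [abs_mul, abs_mul, abs_mul, abs_two]
  rw [h2]
  have h3 : 2*(|c| * (|x| * |y|)) ≤ 2*(C * (|x| * |y|)) := by
    gcongr
  have h4 : 2*(C * (|x| * |y|)) ≤ x^2 + C^2*y^2 := by
    nlinarith [sq_nonneg (|x| - C * |y|), sq_abs x, sq_abs y, abs_nonneg x, abs_nonneg y,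
      mul_nonneg h0 (abs_nonneg y)]
  linarith

lemma pointwise_bound {μ M A X W Wx Vxx Wxx Vtx P Q R Vtt Wt : ℝ}
    (e1 : Vtt = Vxx + μ * Wx) (e2 : Wt = Wxx + μ * W * P + μ * R * Vtx)
    (hb1 : |R| ≤ M) (hb2 : |Q| ≤ M) (hb3 : |P| ≤ M) (hM0 : 0 ≤ M) :
    2*A*Vtt + 2*X*Vtx + 2*W*Wt
      - (2*(Vtx*X + A*Vxx) + 2*(Wx*Wx + W*Wxx) + 2*μ*(Q*(W*A) + R*(Wx*A + W*Vtx)))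
    ≤ (μ^2 + μ^2*M^2 + 3*(abs μ)*M) * (A^2 + X^2 + W^2) := by
  subst e1 e2
  have hμM : |μ| * M = abs μ * M := rfl
  have hA1 : 2*(μ*(A*Wx)) ≤ Wx^2 + μ^2*A^2 := by
    have := young_abs2 (c := μ) (x := Wx) (y := A) (le_refl |μ|)
    have h := le_trans (le_abs_self _) this
    calc 2*(μ*(A*Wx)) = 2*(μ*(Wx*A)) := by ring
    _ ≤ Wx^2 + |μ| ^ 2*A^2 := h
    _ = Wx^2 + μ^2*A^2 := by rw [sq_abs]
  have hcμP : |μ*P| ≤ |μ| * M := by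
    rw [abs_mul]
    exact mul_le_mul_of_nonneg_left hb3 (abs_nonneg μ)
  have hA2 : 2*((μ*P)*(W*W)) ≤ |μ| * M*(W^2+W^2) :=
    le_trans (le_abs_self _) (young_abs1 hcμP)
  have hcμQ : |μ*Q| ≤ |μ| * M := by
    rw [abs_mul]
    exact mul_le_mul_of_nonneg_left hb2 (abs_nonneg μ)
  have hA3 : -(2*((μ*Q)*(W*A))) ≤ |μ| * M*(W^2+A^2) :=
    le_trans (neg_le_abs _) (young_abs1 hcμQ)
  have hcμR : |μ*R| ≤ |μ| * M := by
    rw [abs_mul]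
    exact mul_le_mul_of_nonneg_left hb1 (abs_nonneg μ)
  have hA4 : -(2*((μ*R)*(Wx*A))) ≤ Wx^2 + (|μ| * M)^2*A^2 :=
    le_trans (neg_le_abs _) (young_abs2 hcμR)
  have hsq : (|μ| * M)^2 = μ^2*M^2 := by rw [mul_pow, sq_abs]
  rw [hsq] at hA4
  have hn1 : 0 ≤ abs μ * M * A^2 :=
    mul_nonneg (mul_nonneg (abs_nonneg μ) hM0) (sq_nonneg A)
  have hn2 : 0 ≤ μ^2 * X^2 := mul_nonneg (sq_nonneg μ) (sq_nonneg X)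
  have hn3 : 0 ≤ μ^2*M^2 * X^2 := by positivity
  have hn4 : 0 ≤ 3*(abs μ)*M * X^2 := by
    have : (0:ℝ) ≤ abs μ := abs_nonneg μ
    positivity
  nlinarith [hA1, hA2, hA3, hA4, hn1, hn2, hn3, hn4]
open Set MeasureTheory intervalIntegral

section aux
variable {c d a b : ℝ}

noncomputable def clampI (c d r : ℝ) : ℝ := max c (min d r)

lemma continuous_clampI (c d : ℝ) : Continuous (clampI c d) := by
  unfold clampI; fun_prop

lemma clampI_mem (h : c ≤ d) (r : ℝ) : clampI c d r ∈ Icc c d :=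
  ⟨le_max_left _ _, max_le h (min_le_left _ _)⟩

lemma clampI_eq {r : ℝ} (h : r ∈ Icc c d) : clampI c d r = r := by
  unfold clampI
  rw [min_eq_right h.2, max_eq_right h.1]

lemma ext_continuous {h : ℝ → ℝ → ℝ}
    (hc : ContinuousOn (fun p : ℝ × ℝ => h p.1 p.2) (Icc c d ×ˢ Icc a b))
    (hcd : c ≤ d) (hab : a ≤ b) :
    Continuous (fun p : ℝ × ℝ => h (clampI c d p.1) (clampI a b p.2)) := by
  have : (fun p : ℝ × ℝ => h (clampI c d p.1) (clampI a b p.2))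
      = (fun p : ℝ × ℝ => h p.1 p.2) ∘ (fun p : ℝ × ℝ => (clampI c d p.1, clampI a b p.2)) := rfl
  rw [this]
  apply hc.comp_continuous
  · exact ((continuous_clampI c d).comp continuous_fst).prodMk
      ((continuous_clampI a b).comp continuous_snd)
  · exact fun p => ⟨clampI_mem hcd _, clampI_mem hab _⟩

lemma ftc_within_s16 (hcd : c ≤ d) {f f' : ℝ → ℝ}
    (hd : ∀ t ∈ Icc c d, HasDerivWithinAt f (f' t) (Icc c d) t)
    (hc' : ContinuousOn f' (Icc c d)) :
    ∀ t ∈ Icc c d, ∫ s in c..t, f' s = f t - f c := by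
  intro t ht
  have hsub : Icc c t ⊆ Icc c d := Icc_subset_Icc le_rfl ht.2
  have hcf : ContinuousOn f (Icc c t) :=
    fun s hs => ((hd s (hsub hs)).continuousWithinAt).mono hsub
  have hint : IntervalIntegrable f' volume c t :=
    ContinuousOn.intervalIntegrable (by rw [uIcc_of_le ht.1]; exact hc'.mono hsub)
  refine integral_eq_sub_of_hasDeriv_right_of_le ht.1 hcf ?_ hint
  intro s hs
  have hsd : s ∈ Icc c d := ⟨hs.1.le, hs.2.le.trans ht.2⟩
  refine (hd s hsd).mono_of_mem_nhdsWithin ?_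
  exact Filter.mem_of_superset (Icc_mem_nhdsGT_of_mem ⟨le_refl s, lt_of_lt_of_le hs.2 ht.2⟩)
    (Icc_subset_Icc hs.1.le le_rfl)

lemma primitive_hasDerivAt_s16 {k : ℝ → ℝ} (hk : Continuous k) (c t : ℝ) :
    HasDerivAt (fun s => ∫ r in c..s, k r) (k t) t :=
  integral_hasDerivAt_right (hk.intervalIntegrable _ _)
    (hk.stronglyMeasurable.stronglyMeasurableAtFilter) hk.continuousAt

lemma fubini_cont_s16 (hcd : c ≤ d) (hab : a ≤ b) {H : ℝ → ℝ → ℝ}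
    (hH : Continuous fun p : ℝ × ℝ => H p.1 p.2) :
    ∫ x in a..b, (∫ s in c..d, H s x) = ∫ s in c..d, (∫ x in a..b, H s x) := by
  rw [intervalIntegral.integral_of_le hab, intervalIntegral.integral_of_le hcd]
  simp_rw [intervalIntegral.integral_of_le hab, intervalIntegral.integral_of_le hcd]
  refine MeasureTheory.integral_integral_swap ?_
  rw [Measure.prod_restrict]
  have : IntegrableOn (fun p : ℝ × ℝ => H p.2 p.1) (Icc a b ×ˢ Icc c d) volume := by
    rw [MeasureTheory.Measure.volume_eq_prod]
    exact ((hH.comp (continuous_snd.prodMk continuous_fst)).continuousOn).integrableOn_compact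
      (isCompact_Icc.prod isCompact_Icc)
  rw [← MeasureTheory.Measure.volume_eq_prod]
  exact (this.mono_set (prod_mono Ioc_subset_Icc_self Ioc_subset_Icc_self))

lemma deriv_unique_Icc (hcd : c < d) {f : ℝ → ℝ} {y₁ y₂ t : ℝ} (ht : t ∈ Icc c d)
    (h1 : HasDerivWithinAt f y₁ (Icc c d) t) (h2 : HasDerivWithinAt f y₂ (Icc c d) t) :
    y₁ = y₂ := by
  have hu := (uniqueDiffOn_Icc hcd) t ht
  rw [← h1.derivWithin hu, ← h2.derivWithin hu]

lemma eq_zero_of_integral_zero (hab : a < b) {f : ℝ → ℝ}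
    (hc : ContinuousOn f (Icc a b)) (hnn : ∀ x ∈ Icc a b, 0 ≤ f x)
    (hz : (∫ x in a..b, f x) = 0) : ∀ x ∈ Icc a b, f x = 0 := by
  set fe : ℝ → ℝ := fun y => f (clampI a b y) with hfe
  have hfc : Continuous fe :=
    hc.comp_continuous (continuous_clampI a b) (fun y => clampI_mem hab.le _)
  have hfeq : ∀ y ∈ Icc a b, fe y = f y := fun y hy => by rw [hfe]; simp [clampI_eq hy]
  have hfnn : ∀ y, 0 ≤ fe y := fun y => hnn _ (clampI_mem hab.le _)
  set Φ : ℝ → ℝ := fun y => ∫ r in a..y, fe r with hΦ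
  have hmono : Monotone Φ := by
    intro y y' hyy
    have hkey : Φ y' - Φ y = ∫ r in y..y', fe r :=
      intervalIntegral.integral_interval_sub_left (hfc.intervalIntegrable _ _)
        (hfc.intervalIntegrable _ _)
    have : (0:ℝ) ≤ ∫ r in y..y', fe r :=
      intervalIntegral.integral_nonneg hyy (fun u _ => hfnn u)
    linarith
  have hΦa : Φ a = 0 := intervalIntegral.integral_same
  have hΦb : Φ b = 0 := by
    rw [hΦ]
    have : (∫ r in a..b, fe r) = ∫ r in a..b, f r := by
      apply intervalIntegral.integral_congr
      intro y hy
      exact hfeq y (by rwa [uIcc_of_le hab.le] at hy)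
    simpa [this] using hz
  have hΦ0 : ∀ x ∈ Icc a b, Φ x = 0 := fun x hx =>
    le_antisymm (hΦb ▸ hmono hx.2) (hΦa ▸ hmono hx.1)
  intro x hx
  have h1 : HasDerivWithinAt Φ (fe x) (Icc a b) x :=
    (primitive_hasDerivAt_s16 hfc a x).hasDerivWithinAt
  have h2 : HasDerivWithinAt Φ (0:ℝ) (Icc a b) x := by
    have := hasDerivWithinAt_const x (Icc a b) (0:ℝ)
    exact this.congr (fun y hy => (hΦ0 y hy)) (hΦ0 x hx)
  have := deriv_unique_Icc hab hx h1 h2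
  rw [← hfeq x hx, this]

lemma mixed_partial {T : ℝ} (hT : 0 < T) (hab : a < b)
    {f ft fx ftx : ℝ → ℝ → ℝ}
    (hft : ∀ t ∈ Icc (0:ℝ) T, ∀ x ∈ Icc a b,
      HasDerivWithinAt (fun s => f s x) (ft t x) (Icc 0 T) t)
    (hfx : ∀ t ∈ Icc (0:ℝ) T, ∀ x ∈ Icc a b, HasDerivWithinAt (f t) (fx t x) (Icc a b) x)
    (hftx : ∀ t ∈ Icc (0:ℝ) T, ∀ x ∈ Icc a b, HasDerivWithinAt (ft t) (ftx t x) (Icc a b) x)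
    (hcont : ContinuousOn (fun p : ℝ × ℝ => ft p.1 p.2) (Icc (0:ℝ) T ×ˢ Icc a b))
    (hcont' : ContinuousOn (fun p : ℝ × ℝ => ftx p.1 p.2) (Icc (0:ℝ) T ×ˢ Icc a b)) :
    ∀ t ∈ Icc (0:ℝ) T, ∀ x ∈ Icc a b,
      HasDerivWithinAt (fun s => fx s x) (ftx t x) (Icc 0 T) t := by
  set K : ℝ → ℝ → ℝ := fun s y => ftx (clampI 0 T s) (clampI a b y) with hK
  have hKc : Continuous (fun p : ℝ × ℝ => K p.1 p.2) := ext_continuous hcont' hT.le hab.le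
  have hKeq : ∀ s ∈ Icc (0:ℝ) T, ∀ y ∈ Icc a b, K s y = ftx s y := by
    intro s hs y hy
    rw [hK]; simp only; rw [clampI_eq hs, clampI_eq hy]
  have h0T : (0:ℝ) ∈ Icc (0:ℝ) T := left_mem_Icc.2 hT.le
  have haab : a ∈ Icc a b := left_mem_Icc.2 hab.le
  have hrep : ∀ t ∈ Icc (0:ℝ) T, ∀ x ∈ Icc a b,
      fx t x = fx 0 x + ∫ s in (0:ℝ)..t, K s x := by
    intro t ht x hx
    set Hfun : ℝ → ℝ := fun y => ∫ s in (0:ℝ)..t, K s y with hHfun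
    have hHc : Continuous Hfun := by
      apply intervalIntegral.continuous_parametric_intervalIntegral_of_continuous'
        (f := fun y s => K s y)
      exact hKc.comp (continuous_snd.prodMk continuous_fst)
    have claimA : ∀ z ∈ Icc a b,
        f t z - f 0 z = (f t a - f 0 a) + ∫ y in a..z, Hfun y := by
      intro z hz
      have hfub : (∫ y in a..z, Hfun y) = ∫ s in (0:ℝ)..t, (∫ y in a..z, K s y) :=
        fubini_cont_s16 ht.1 hz.1 hKc
      have hinner : ∀ s ∈ Icc (0:ℝ) t, (∫ y in a..z, K s y) = ft s z - ft s a := by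
        intro s hs
        have hsT : s ∈ Icc (0:ℝ) T := ⟨hs.1, hs.2.trans ht.2⟩
        have hd : ∀ y ∈ Icc a b, HasDerivWithinAt (ft s) (K s y) (Icc a b) y := by
          intro y hy
          rw [hKeq s hsT y hy]
          exact hftx s hsT y hy
        have hc' : ContinuousOn (fun y => K s y) (Icc a b) :=
          (hKc.comp (continuous_const.prodMk continuous_id)).continuousOn
        exact ftc_within_s16 hab.le hd hc' z hz
      have hcongr : (∫ s in (0:ℝ)..t, (∫ y in a..z, K s y))
          = ∫ s in (0:ℝ)..t, (ft s z - ft s a) := by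
        apply intervalIntegral.integral_congr
        intro s hs
        exact hinner s (by rwa [uIcc_of_le ht.1] at hs)
      have hslice : ∀ y ∈ Icc a b, ContinuousOn (fun s => ft s y) (Icc (0:ℝ) T) := by
        intro y hy
        have : (fun s => ft s y) = (fun p : ℝ × ℝ => ft p.1 p.2) ∘ (fun s => (s, y)) := rfl
        rw [this]
        exact hcont.comp (Continuous.continuousOn (by fun_prop)) (fun s hs => ⟨hs, hy⟩)
      have hz1 : (∫ s in (0:ℝ)..t, ft s z) = f t z - f 0 z :=
        ftc_within_s16 hT.le (fun s hs => hft s hs z hz) (hslice z hz) t ht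
      have ha1 : (∫ s in (0:ℝ)..t, ft s a) = f t a - f 0 a :=
        ftc_within_s16 hT.le (fun s hs => hft s hs a haab) (hslice a haab) t ht
      have hintz : IntervalIntegrable (fun s => ft s z) volume 0 t :=
        ContinuousOn.intervalIntegrable
          (by rw [uIcc_of_le ht.1]
              exact (hslice z hz).mono (Icc_subset_Icc le_rfl ht.2))
      have hinta : IntervalIntegrable (fun s => ft s a) volume 0 t :=
        ContinuousOn.intervalIntegrable
          (by rw [uIcc_of_le ht.1]
              exact (hslice a haab).mono (Icc_subset_Icc le_rfl ht.2))
      have hsplit : (∫ s in (0:ℝ)..t, (ft s z - ft s a))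
          = (∫ s in (0:ℝ)..t, ft s z) - ∫ s in (0:ℝ)..t, ft s a :=
        intervalIntegral.integral_sub hintz hinta
      rw [hfub, hcongr, hsplit, hz1, ha1]
      ring
    have hP : HasDerivWithinAt (fun z => ∫ y in a..z, Hfun y) (Hfun x) (Icc a b) x :=
      (primitive_hasDerivAt_s16 hHc a x).hasDerivWithinAt
    have hL : HasDerivWithinAt (fun z => f t z - f 0 z) (fx t x - fx 0 x) (Icc a b) x :=
      (hfx t ht x hx).sub (hfx 0 h0T x hx)
    have hL' : HasDerivWithinAt (fun z => f t z - f 0 z) (Hfun x) (Icc a b) x := by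
      have h2 := hP.const_add (f t a - f 0 a)
      exact h2.congr (fun z hz => claimA z hz) (claimA x hx)
    have := deriv_unique_Icc hab hx hL hL'
    linarith
  intro t ht x hx
  have hkc : Continuous (fun s => K s x) :=
    hKc.comp (continuous_id.prodMk continuous_const)
  have hprim : HasDerivAt (fun s => fx 0 x + ∫ r in (0:ℝ)..s, K r x) (K t x) t :=
    (primitive_hasDerivAt_s16 hkc 0 t).const_add _
  have hres := (hprim.hasDerivWithinAt (s := Icc 0 T)).congr
    (fun s hs => hrep s hs x hx) (hrep t ht x hx)
  rwa [hKeq t ht x hx] at hres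

end aux
lemma slice_left {S1 S2 : Set ℝ} {h : ℝ → ℝ → ℝ}
    (hc : ContinuousOn (fun p : ℝ × ℝ => h p.1 p.2) (S1 ×ˢ S2)) {x : ℝ} (hx : x ∈ S2) :
    ContinuousOn (fun s => h s x) S1 := by
  have he : (fun s => h s x) = (fun p : ℝ × ℝ => h p.1 p.2) ∘ (fun s => (s, x)) := rfl
  rw [he]
  exact hc.comp (Continuous.continuousOn (by fun_prop)) (fun s hs => ⟨hs, hx⟩)

lemma slice_right {S1 S2 : Set ℝ} {h : ℝ → ℝ → ℝ}
    (hc : ContinuousOn (fun p : ℝ × ℝ => h p.1 p.2) (S1 ×ˢ S2)) {t : ℝ} (ht : t ∈ S1) :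
    ContinuousOn (fun y => h t y) S2 := by
  have he : (fun y => h t y) = (fun p : ℝ × ℝ => h p.1 p.2) ∘ (fun y => (t, y)) := rfl
  rw [he]
  exact hc.comp (Continuous.continuousOn (by fun_prop)) (fun y hy => ⟨ht, hy⟩)

open Set

/-- A classical solution of the 1d minimal thermoelasticity system on
`[0,T] × [a,b]`, with the named functions being the relevant partial
derivatives of `u` and `θ`. -/
def IsThermoSolution (a b T μ : ℝ)
    (u ut utt ux uxx utx θ θt θx θxx : ℝ → ℝ → ℝ) : Prop :=
  (∀ t ∈ Icc 0 T, ∀ x ∈ Icc a b,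
      HasDerivWithinAt (fun s => u s x) (ut t x) (Icc 0 T) t)
  ∧ (∀ t ∈ Icc 0 T, ∀ x ∈ Icc a b,
      HasDerivWithinAt (fun s => ut s x) (utt t x) (Icc 0 T) t)
  ∧ (∀ t ∈ Icc 0 T, ∀ x ∈ Icc a b,
      HasDerivWithinAt (u t) (ux t x) (Icc a b) x)
  ∧ (∀ t ∈ Icc 0 T, ∀ x ∈ Icc a b,
      HasDerivWithinAt (ux t) (uxx t x) (Icc a b) x)
  ∧ (∀ t ∈ Icc 0 T, ∀ x ∈ Icc a b,
      HasDerivWithinAt (ut t) (utx t x) (Icc a b) x)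
  ∧ (∀ t ∈ Icc 0 T, ∀ x ∈ Icc a b,
      HasDerivWithinAt (fun s => θ s x) (θt t x) (Icc 0 T) t)
  ∧ (∀ t ∈ Icc 0 T, ∀ x ∈ Icc a b,
      HasDerivWithinAt (θ t) (θx t x) (Icc a b) x)
  ∧ (∀ t ∈ Icc 0 T, ∀ x ∈ Icc a b,
      HasDerivWithinAt (θx t) (θxx t x) (Icc a b) x)
  ∧ ContinuousOn (fun p : ℝ × ℝ =>
      (utt p.1 p.2, uxx p.1 p.2, utx p.1 p.2, θt p.1 p.2, θxx p.1 p.2, θx p.1 p.2,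
        ut p.1 p.2, ux p.1 p.2, θ p.1 p.2)) (Icc 0 T ×ˢ Icc a b)
  ∧ (∀ t ∈ Ioo 0 T, ∀ x ∈ Ioo a b, utt t x - uxx t x = μ * θx t x)
  ∧ (∀ t ∈ Ioo 0 T, ∀ x ∈ Ioo a b, θt t x - θxx t x = μ * θ t x * utx t x)
  ∧ (∀ t ∈ Icc 0 T, u t a = 0 ∧ u t b = 0 ∧ θx t a = 0 ∧ θx t b = 0)

theorem stmt_16 (a b T μ : ℝ) (hab : a < b) (hT : 0 < T)
    (u₁ u₁t u₁tt u₁x u₁xx u₁tx θ₁ θ₁t θ₁x θ₁xx : ℝ → ℝ → ℝ)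
    (u₂ u₂t u₂tt u₂x u₂xx u₂tx θ₂ θ₂t θ₂x θ₂xx : ℝ → ℝ → ℝ)
    (hsol₁ : IsThermoSolution a b T μ u₁ u₁t u₁tt u₁x u₁xx u₁tx θ₁ θ₁t θ₁x θ₁xx)
    (hsol₂ : IsThermoSolution a b T μ u₂ u₂t u₂tt u₂x u₂xx u₂tx θ₂ θ₂t θ₂x θ₂xx)
    (hui : ∀ x ∈ Icc a b, u₁ 0 x = u₂ 0 x)
    (hvi : ∀ x ∈ Icc a b, u₁t 0 x = u₂t 0 x)
    (hθi : ∀ x ∈ Icc a b, θ₁ 0 x = θ₂ 0 x) :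
    ∀ t ∈ Icc 0 T, ∀ x ∈ Icc a b, u₁ t x = u₂ t x ∧ θ₁ t x = θ₂ t x := by
  obtain ⟨h1ut, h1utt, h1ux, h1uxx, h1utx, h1tht, h1thx, h1thxx, h1cont, h1pde1, h1pde2, h1bc⟩ :=
    hsol₁
  obtain ⟨h2ut, h2utt, h2ux, h2uxx, h2utx, h2tht, h2thx, h2thxx, h2cont, h2pde1, h2pde2, h2bc⟩ :=
    hsol₂
  have h0T : (0:ℝ) ∈ Icc (0:ℝ) T := left_mem_Icc.2 hT.le
  have haab : a ∈ Icc a b := left_mem_Icc.2 hab.le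
  have hbab : b ∈ Icc a b := right_mem_Icc.2 hab.le
  -- continuity of the individual fields
  have c1utt : ContinuousOn (fun p : ℝ × ℝ => u₁tt p.1 p.2) (Icc 0 T ×ˢ Icc a b) :=
    continuous_fst.comp_continuousOn h1cont
  have c1uxx : ContinuousOn (fun p : ℝ × ℝ => u₁xx p.1 p.2) (Icc 0 T ×ˢ Icc a b) :=
    (continuous_fst.comp continuous_snd).comp_continuousOn h1cont
  have c1utx : ContinuousOn (fun p : ℝ × ℝ => u₁tx p.1 p.2) (Icc 0 T ×ˢ Icc a b) :=
    (continuous_fst.comp (continuous_snd.comp continuous_snd)).comp_continuousOn h1cont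
  have c1tht : ContinuousOn (fun p : ℝ × ℝ => θ₁t p.1 p.2) (Icc 0 T ×ˢ Icc a b) :=
    (continuous_fst.comp (continuous_snd.comp (continuous_snd.comp
      continuous_snd))).comp_continuousOn h1cont
  have c1thxx : ContinuousOn (fun p : ℝ × ℝ => θ₁xx p.1 p.2) (Icc 0 T ×ˢ Icc a b) :=
    (continuous_fst.comp (continuous_snd.comp (continuous_snd.comp (continuous_snd.comp
      continuous_snd)))).comp_continuousOn h1cont
  have c1thx : ContinuousOn (fun p : ℝ × ℝ => θ₁x p.1 p.2) (Icc 0 T ×ˢ Icc a b) :=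
    (continuous_fst.comp (continuous_snd.comp (continuous_snd.comp (continuous_snd.comp
      (continuous_snd.comp continuous_snd))))).comp_continuousOn h1cont
  have c1ut : ContinuousOn (fun p : ℝ × ℝ => u₁t p.1 p.2) (Icc 0 T ×ˢ Icc a b) :=
    (continuous_fst.comp (continuous_snd.comp (continuous_snd.comp (continuous_snd.comp
      (continuous_snd.comp (continuous_snd.comp continuous_snd)))))).comp_continuousOn h1cont
  have c1ux : ContinuousOn (fun p : ℝ × ℝ => u₁x p.1 p.2) (Icc 0 T ×ˢ Icc a b) :=
    (continuous_fst.comp (continuous_snd.comp (continuous_snd.comp (continuous_snd.comp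
      (continuous_snd.comp (continuous_snd.comp (continuous_snd.comp
      continuous_snd))))))).comp_continuousOn h1cont
  have c1th : ContinuousOn (fun p : ℝ × ℝ => θ₁ p.1 p.2) (Icc 0 T ×ˢ Icc a b) :=
    ((continuous_snd.comp (continuous_snd.comp (continuous_snd.comp (continuous_snd.comp
      (continuous_snd.comp (continuous_snd.comp (continuous_snd.comp
      continuous_snd))))))).comp_continuousOn h1cont)
  have c2utt : ContinuousOn (fun p : ℝ × ℝ => u₂tt p.1 p.2) (Icc 0 T ×ˢ Icc a b) :=
    continuous_fst.comp_continuousOn h2cont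
  have c2uxx : ContinuousOn (fun p : ℝ × ℝ => u₂xx p.1 p.2) (Icc 0 T ×ˢ Icc a b) :=
    (continuous_fst.comp continuous_snd).comp_continuousOn h2cont
  have c2utx : ContinuousOn (fun p : ℝ × ℝ => u₂tx p.1 p.2) (Icc 0 T ×ˢ Icc a b) :=
    (continuous_fst.comp (continuous_snd.comp continuous_snd)).comp_continuousOn h2cont
  have c2tht : ContinuousOn (fun p : ℝ × ℝ => θ₂t p.1 p.2) (Icc 0 T ×ˢ Icc a b) :=
    (continuous_fst.comp (continuous_snd.comp (continuous_snd.comp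
      continuous_snd))).comp_continuousOn h2cont
  have c2thxx : ContinuousOn (fun p : ℝ × ℝ => θ₂xx p.1 p.2) (Icc 0 T ×ˢ Icc a b) :=
    (continuous_fst.comp (continuous_snd.comp (continuous_snd.comp (continuous_snd.comp
      continuous_snd)))).comp_continuousOn h2cont
  have c2thx : ContinuousOn (fun p : ℝ × ℝ => θ₂x p.1 p.2) (Icc 0 T ×ˢ Icc a b) :=
    (continuous_fst.comp (continuous_snd.comp (continuous_snd.comp (continuous_snd.comp
      (continuous_snd.comp continuous_snd))))).comp_continuousOn h2cont
  have c2ut : ContinuousOn (fun p : ℝ × ℝ => u₂t p.1 p.2) (Icc 0 T ×ˢ Icc a b) :=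
    (continuous_fst.comp (continuous_snd.comp (continuous_snd.comp (continuous_snd.comp
      (continuous_snd.comp (continuous_snd.comp continuous_snd)))))).comp_continuousOn h2cont
  have c2ux : ContinuousOn (fun p : ℝ × ℝ => u₂x p.1 p.2) (Icc 0 T ×ˢ Icc a b) :=
    (continuous_fst.comp (continuous_snd.comp (continuous_snd.comp (continuous_snd.comp
      (continuous_snd.comp (continuous_snd.comp (continuous_snd.comp
      continuous_snd))))))).comp_continuousOn h2cont
  have c2th : ContinuousOn (fun p : ℝ × ℝ => θ₂ p.1 p.2) (Icc 0 T ×ˢ Icc a b) :=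
    ((continuous_snd.comp (continuous_snd.comp (continuous_snd.comp (continuous_snd.comp
      (continuous_snd.comp (continuous_snd.comp (continuous_snd.comp
      continuous_snd))))))).comp_continuousOn h2cont)
  -- difference fields
  set v : ℝ → ℝ → ℝ := fun t x => u₁ t x - u₂ t x with hv_def
  set vt : ℝ → ℝ → ℝ := fun t x => u₁t t x - u₂t t x with hvt_def
  set vtt : ℝ → ℝ → ℝ := fun t x => u₁tt t x - u₂tt t x with hvtt_def
  set vx : ℝ → ℝ → ℝ := fun t x => u₁x t x - u₂x t x with hvx_def
  set vxx : ℝ → ℝ → ℝ := fun t x => u₁xx t x - u₂xx t x with hvxx_def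
  set vtx : ℝ → ℝ → ℝ := fun t x => u₁tx t x - u₂tx t x with hvtx_def
  set w : ℝ → ℝ → ℝ := fun t x => θ₁ t x - θ₂ t x with hw_def
  set wt : ℝ → ℝ → ℝ := fun t x => θ₁t t x - θ₂t t x with hwt_def
  set wx : ℝ → ℝ → ℝ := fun t x => θ₁x t x - θ₂x t x with hwx_def
  set wxx : ℝ → ℝ → ℝ := fun t x => θ₁xx t x - θ₂xx t x with hwxx_def
  -- derivative facts for differences
  have hdvt : ∀ t ∈ Icc (0:ℝ) T, ∀ x ∈ Icc a b,
      HasDerivWithinAt (fun s => v s x) (vt t x) (Icc 0 T) t :=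
    fun t ht x hx => (h1ut t ht x hx).sub (h2ut t ht x hx)
  have hdvtt : ∀ t ∈ Icc (0:ℝ) T, ∀ x ∈ Icc a b,
      HasDerivWithinAt (fun s => vt s x) (vtt t x) (Icc 0 T) t :=
    fun t ht x hx => (h1utt t ht x hx).sub (h2utt t ht x hx)
  have hdvx : ∀ t ∈ Icc (0:ℝ) T, ∀ x ∈ Icc a b,
      HasDerivWithinAt (fun y => v t y) (vx t x) (Icc a b) x :=
    fun t ht x hx => (h1ux t ht x hx).sub (h2ux t ht x hx)
  have hdvxx : ∀ t ∈ Icc (0:ℝ) T, ∀ x ∈ Icc a b,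
      HasDerivWithinAt (fun y => vx t y) (vxx t x) (Icc a b) x :=
    fun t ht x hx => (h1uxx t ht x hx).sub (h2uxx t ht x hx)
  have hdvtx : ∀ t ∈ Icc (0:ℝ) T, ∀ x ∈ Icc a b,
      HasDerivWithinAt (fun y => vt t y) (vtx t x) (Icc a b) x :=
    fun t ht x hx => (h1utx t ht x hx).sub (h2utx t ht x hx)
  have hdwt : ∀ t ∈ Icc (0:ℝ) T, ∀ x ∈ Icc a b,
      HasDerivWithinAt (fun s => w s x) (wt t x) (Icc 0 T) t :=
    fun t ht x hx => (h1tht t ht x hx).sub (h2tht t ht x hx)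
  have hdwx : ∀ t ∈ Icc (0:ℝ) T, ∀ x ∈ Icc a b,
      HasDerivWithinAt (fun y => w t y) (wx t x) (Icc a b) x :=
    fun t ht x hx => (h1thx t ht x hx).sub (h2thx t ht x hx)
  have hdwxx : ∀ t ∈ Icc (0:ℝ) T, ∀ x ∈ Icc a b,
      HasDerivWithinAt (fun y => wx t y) (wxx t x) (Icc a b) x :=
    fun t ht x hx => (h1thxx t ht x hx).sub (h2thxx t ht x hx)
  -- mixed partial: t-derivative of vx is vtx
  have hdmix : ∀ t ∈ Icc (0:ℝ) T, ∀ x ∈ Icc a b,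
      HasDerivWithinAt (fun s => vx s x) (vtx t x) (Icc 0 T) t := by
    intro t ht x hx
    have m1 := mixed_partial hT hab h1ut h1ux h1utx c1ut c1utx t ht x hx
    have m2 := mixed_partial hT hab h2ut h2ux h2utx c2ut c2utx t ht x hx
    exact m1.sub m2
  -- continuity of difference fields
  have cvt : ContinuousOn (fun p : ℝ × ℝ => vt p.1 p.2) (Icc 0 T ×ˢ Icc a b) := c1ut.sub c2ut
  have cvtt : ContinuousOn (fun p : ℝ × ℝ => vtt p.1 p.2) (Icc 0 T ×ˢ Icc a b) := c1utt.sub c2utt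
  have cvx : ContinuousOn (fun p : ℝ × ℝ => vx p.1 p.2) (Icc 0 T ×ˢ Icc a b) := c1ux.sub c2ux
  have cvxx : ContinuousOn (fun p : ℝ × ℝ => vxx p.1 p.2) (Icc 0 T ×ˢ Icc a b) := c1uxx.sub c2uxx
  have cvtx : ContinuousOn (fun p : ℝ × ℝ => vtx p.1 p.2) (Icc 0 T ×ˢ Icc a b) := c1utx.sub c2utx
  have cw : ContinuousOn (fun p : ℝ × ℝ => w p.1 p.2) (Icc 0 T ×ˢ Icc a b) := c1th.sub c2th
  have cwt : ContinuousOn (fun p : ℝ × ℝ => wt p.1 p.2) (Icc 0 T ×ˢ Icc a b) := c1tht.sub c2tht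
  have cwx : ContinuousOn (fun p : ℝ × ℝ => wx p.1 p.2) (Icc 0 T ×ˢ Icc a b) := c1thx.sub c2thx
  have cwxx : ContinuousOn (fun p : ℝ × ℝ => wxx p.1 p.2) (Icc 0 T ×ˢ Icc a b) :=
    c1thxx.sub c2thxx
  -- boundary and initial conditions for differences
  have hva : ∀ t ∈ Icc (0:ℝ) T, v t a = 0 := by
    intro t ht
    have b1 := (h1bc t ht).1
    have b2 := (h2bc t ht).1
    simp [hv_def, b1, b2]
  have hvb : ∀ t ∈ Icc (0:ℝ) T, v t b = 0 := by
    intro t ht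
    have b1 := (h1bc t ht).2.1
    have b2 := (h2bc t ht).2.1
    simp [hv_def, b1, b2]
  have hwxa : ∀ t ∈ Icc (0:ℝ) T, wx t a = 0 := by
    intro t ht
    have b1 := (h1bc t ht).2.2.1
    have b2 := (h2bc t ht).2.2.1
    simp [hwx_def, b1, b2]
  have hwxb : ∀ t ∈ Icc (0:ℝ) T, wx t b = 0 := by
    intro t ht
    have b1 := (h1bc t ht).2.2.2
    have b2 := (h2bc t ht).2.2.2
    simp [hwx_def, b1, b2]
  have hvta : ∀ t ∈ Icc (0:ℝ) T, vt t a = 0 := by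
    intro t ht
    have h0 : HasDerivWithinAt (fun _ : ℝ => (0:ℝ)) (vt t a) (Icc 0 T) t :=
      (hdvt t ht a haab).congr (fun s hs => (hva s hs).symm) (hva t ht).symm
    exact (deriv_unique_Icc hT ht h0 (hasDerivWithinAt_const t _ 0))
  have hvtb : ∀ t ∈ Icc (0:ℝ) T, vt t b = 0 := by
    intro t ht
    have h0 : HasDerivWithinAt (fun _ : ℝ => (0:ℝ)) (vt t b) (Icc 0 T) t :=
      (hdvt t ht b hbab).congr (fun s hs => (hvb s hs).symm) (hvb t ht).symm
    exact (deriv_unique_Icc hT ht h0 (hasDerivWithinAt_const t _ 0))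
  have hv0 : ∀ x ∈ Icc a b, v 0 x = 0 := by
    intro x hx; simp [hv_def, hui x hx]
  have hvt0 : ∀ x ∈ Icc a b, vt 0 x = 0 := by
    intro x hx; simp [hvt_def, hvi x hx]
  have hw0 : ∀ x ∈ Icc a b, w 0 x = 0 := by
    intro x hx; simp [hw_def, hθi x hx]
  have hvx0 : ∀ x ∈ Icc a b, vx 0 x = 0 := by
    intro x hx
    have h0 : HasDerivWithinAt (fun _ : ℝ => (0:ℝ)) (vx 0 x) (Icc a b) x :=
      (hdvx 0 h0T x hx).congr (fun y hy => (hv0 y hy).symm) (hv0 x hx).symm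
    exact (deriv_unique_Icc hab hx h0 (hasDerivWithinAt_const x _ 0))
  -- PDEs for differences
  have hpdev : ∀ t ∈ Ioo (0:ℝ) T, ∀ x ∈ Ioo a b, vtt t x = vxx t x + μ * wx t x := by
    intro t ht x hx
    have e1 := h1pde1 t ht x hx
    have e2 := h2pde1 t ht x hx
    simp only [hvtt_def, hvxx_def, hwx_def]
    linarith [e1, e2]
  have hpdew : ∀ t ∈ Ioo (0:ℝ) T, ∀ x ∈ Ioo a b,
      wt t x = wxx t x + μ * w t x * u₁tx t x + μ * θ₂ t x * vtx t x := by
    intro t ht x hx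
    have e1 := h1pde2 t ht x hx
    have e2 := h2pde2 t ht x hx
    simp only [hwt_def, hwxx_def, hw_def, hvtx_def]
    linear_combination e1 - e2
  -- uniform bounds
  obtain ⟨M1, hM1⟩ := (isCompact_Icc.prod isCompact_Icc).exists_bound_of_continuousOn c2th
  obtain ⟨M2, hM2⟩ := (isCompact_Icc.prod isCompact_Icc).exists_bound_of_continuousOn c2thx
  obtain ⟨M3, hM3⟩ := (isCompact_Icc.prod isCompact_Icc).exists_bound_of_continuousOn c1utx
  set M : ℝ := |M1| + |M2| + |M3| + 1 with hM_def
  have hM0 : (0:ℝ) ≤ M := by positivity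
  have hbθ2 : ∀ t ∈ Icc (0:ℝ) T, ∀ x ∈ Icc a b, |θ₂ t x| ≤ M := by
    intro t ht x hx
    have := hM1 (t, x) ⟨ht, hx⟩
    rw [Real.norm_eq_abs] at this
    have h1 : M1 ≤ |M1| := le_abs_self _
    have h2 : (0:ℝ) ≤ |M2| := abs_nonneg _
    have h3 : (0:ℝ) ≤ |M3| := abs_nonneg _
    simp only [hM_def]; linarith
  have hbθ2x : ∀ t ∈ Icc (0:ℝ) T, ∀ x ∈ Icc a b, |θ₂x t x| ≤ M := by
    intro t ht x hx
    have := hM2 (t, x) ⟨ht, hx⟩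
    rw [Real.norm_eq_abs] at this
    have h1 : M2 ≤ |M2| := le_abs_self _
    have h2 : (0:ℝ) ≤ |M1| := abs_nonneg _
    have h3 : (0:ℝ) ≤ |M3| := abs_nonneg _
    simp only [hM_def]; linarith
  have hbu1tx : ∀ t ∈ Icc (0:ℝ) T, ∀ x ∈ Icc a b, |u₁tx t x| ≤ M := by
    intro t ht x hx
    have := hM3 (t, x) ⟨ht, hx⟩
    rw [Real.norm_eq_abs] at this
    have h1 : M3 ≤ |M3| := le_abs_self _
    have h2 : (0:ℝ) ≤ |M1| := abs_nonneg _
    have h3 : (0:ℝ) ≤ |M2| := abs_nonneg _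
    simp only [hM_def]; linarith
  set CC : ℝ := μ^2 + μ^2*M^2 + 3 * abs μ * M with hCC_def
  have hCC0 : (0:ℝ) ≤ CC := by
    have := abs_nonneg μ
    simp only [hCC_def]; positivity
  -- energy
  set efun : ℝ → ℝ → ℝ := fun t x => vt t x ^ 2 + vx t x ^ 2 + w t x ^ 2 with he_def
  set gfun : ℝ → ℝ → ℝ := fun t x =>
    2 * vt t x * vtt t x + 2 * vx t x * vtx t x + 2 * w t x * wt t x with hg_def
  have ce : ContinuousOn (fun p : ℝ × ℝ => efun p.1 p.2) (Icc 0 T ×ˢ Icc a b) := by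
    simp only [he_def]
    exact ((cvt.pow 2).add (cvx.pow 2)).add (cw.pow 2)
  have cg : ContinuousOn (fun p : ℝ × ℝ => gfun p.1 p.2) (Icc 0 T ×ˢ Icc a b) := by
    simp only [hg_def]
    exact (((continuousOn_const.mul cvt).mul cvtt).add
      ((continuousOn_const.mul cvx).mul cvtx)).add ((continuousOn_const.mul cw).mul cwt)
  have hde : ∀ t ∈ Icc (0:ℝ) T, ∀ x ∈ Icc a b,
      HasDerivWithinAt (fun s => efun s x) (gfun t x) (Icc 0 T) t := by
    intro t ht x hx
    have d1 := (hdvtt t ht x hx).pow 2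
    have d2 := (hdmix t ht x hx).pow 2
    have d3 := (hdwt t ht x hx).pow 2
    have := (d1.add d2).add d3
    refine this.congr_deriv ?_
    simp only [hg_def]
    ring
  have he0 : ∀ x ∈ Icc a b, efun 0 x = 0 := by
    intro x hx
    simp [he_def, hvt0 x hx, hvx0 x hx, hw0 x hx]
  -- extended g and the integrated quantities
  set gc : ℝ → ℝ → ℝ := fun s y => gfun (clampI 0 T s) (clampI a b y) with hgc_def
  have hgcc : Continuous (fun p : ℝ × ℝ => gc p.1 p.2) := ext_continuous cg hT.le hab.le
  have hgceq : ∀ s ∈ Icc (0:ℝ) T, ∀ y ∈ Icc a b, gc s y = gfun s y := by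
    intro s hs y hy
    simp only [hgc_def]
    rw [clampI_eq hs, clampI_eq hy]
  set E : ℝ → ℝ := fun t => ∫ x in a..b, efun t x with hE_def
  set G : ℝ → ℝ := fun s => ∫ x in a..b, gc s x with hG_def
  have hGcont : Continuous G := by
    simp only [hG_def]
    exact continuous_parametric_intervalIntegral_of_continuous' (f := gc)
      (by exact hgcc) a b
  -- Step 1 : E t = ∫_0^t G
  have hEeq : ∀ t ∈ Icc (0:ℝ) T, E t = ∫ s in (0:ℝ)..t, G s := by
    intro t ht
    have hpt : ∀ x ∈ Icc a b, efun t x = ∫ s in (0:ℝ)..t, gc s x := by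
      intro x hx
      have hfe := ftc_within_s16 hT.le (fun s hs => hde s hs x hx) (slice_left cg hx) t ht
      have hcongr : (∫ s in (0:ℝ)..t, gc s x) = ∫ s in (0:ℝ)..t, gfun s x := by
        apply intervalIntegral.integral_congr
        intro s hs
        rw [uIcc_of_le ht.1] at hs
        exact hgceq s ⟨hs.1, hs.2.trans ht.2⟩ x hx
      rw [hcongr, hfe, he0 x hx]
      ring
    have h1 : E t = ∫ x in a..b, (∫ s in (0:ℝ)..t, gc s x) := by
      simp only [hE_def]
      apply intervalIntegral.integral_congr
      intro x hx
      rw [uIcc_of_le hab.le] at hx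
      exact hpt x hx
    rw [h1, fubini_cont_s16 ht.1 hab.le hgcc]
  -- Step 2 : G s ≤ CC * E s on the open interval
  have hGE : ∀ s ∈ Ioo (0:ℝ) T, G s ≤ CC * E s := by
    intro s hs
    have hsIcc : s ∈ Icc (0:ℝ) T := Ioo_subset_Icc_self hs
    have svt := slice_right cvt hsIcc
    have svx := slice_right cvx hsIcc
    have svtx := slice_right cvtx hsIcc
    have svxx := slice_right cvxx hsIcc
    have sw := slice_right cw hsIcc
    have swx := slice_right cwx hsIcc
    have swxx := slice_right cwxx hsIcc
    have sθ2 := slice_right c2th hsIcc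
    have sθ2x := slice_right c2thx hsIcc
    have sg := slice_right cg hsIcc
    have se := slice_right ce hsIcc
    set Bff : ℝ → ℝ := fun y =>
      2 * (vt s y * vx s y) + 2 * (w s y * wx s y) + 2 * μ * (θ₂ s y * (w s y * vt s y))
      with hBff_def
    set Bxf : ℝ → ℝ := fun y =>
      2 * (vtx s y * vx s y + vt s y * vxx s y) + 2 * (wx s y * wx s y + w s y * wxx s y)
        + 2 * μ * (θ₂x s y * (w s y * vt s y) + θ₂ s y * (wx s y * vt s y + w s y * vtx s y))
      with hBxf_def
    have hdB : ∀ x ∈ Icc a b, HasDerivWithinAt Bff (Bxf x) (Icc a b) x := by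
      intro x hx
      have p1 := (hdvtx s hsIcc x hx).mul (hdvxx s hsIcc x hx)
      have p2 := (hdwx s hsIcc x hx).mul (hdwxx s hsIcc x hx)
      have pin := (hdwx s hsIcc x hx).mul (hdvtx s hsIcc x hx)
      have p3 := (h2thx s hsIcc x hx).mul pin
      have hsum := ((p1.const_mul (2:ℝ)).add (p2.const_mul (2:ℝ))).add (p3.const_mul (2*μ))
      refine hsum.congr_deriv ?_
      simp only [hBxf_def, Pi.mul_apply]
    have cBx : ContinuousOn Bxf (Icc a b) := by
      simp only [hBxf_def]
      exact ((continuousOn_const.mul ((svtx.mul svx).add (svt.mul svxx))).add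
        (continuousOn_const.mul ((swx.mul swx).add (sw.mul swxx)))).add
        (continuousOn_const.mul ((sθ2x.mul (sw.mul svt)).add
          (sθ2.mul ((swx.mul svt).add (sw.mul svtx)))))
    have hIBP : (∫ x in a..b, Bxf x) = 0 := by
      have h := ftc_within_s16 hab.le hdB cBx b hbab
      have hBb : Bff b = 0 := by
        simp only [hBff_def]
        rw [hvtb s hsIcc, hwxb s hsIcc]
        ring
      have hBa : Bff a = 0 := by
        simp only [hBff_def]
        rw [hvta s hsIcc, hwxa s hsIcc]
        ring
      rw [h, hBb, hBa]
      ring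
    have hptIoo : ∀ x ∈ Ioo a b, gfun s x - Bxf x ≤ CC * efun s x := by
      intro x hx
      have hxI : x ∈ Icc a b := Ioo_subset_Icc_self hx
      have e1 := hpdev s hs x hx
      have e2 := hpdew s hs x hx
      have hb1 := hbθ2 s hsIcc x hxI
      have hb2 := hbθ2x s hsIcc x hxI
      have hb3 := hbu1tx s hsIcc x hxI
      simp only [hBxf_def, hg_def, he_def, hCC_def]
      exact pointwise_bound e1 e2 hb1 hb2 hb3 hM0
    have hpt2 : ∀ x ∈ Icc a b, gfun s x - Bxf x ≤ CC * efun s x := by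
      have hc1 : ContinuousOn (fun x => gfun s x - Bxf x) (closure (Ioo a b)) := by
        rw [closure_Ioo hab.ne]
        exact sg.sub cBx
      have hc2 : ContinuousOn (fun x => CC * efun s x) (closure (Ioo a b)) := by
        rw [closure_Ioo hab.ne]
        exact continuousOn_const.mul se
      intro x hx
      have hx' : x ∈ closure (Ioo a b) := by rwa [closure_Ioo hab.ne]
      exact le_on_closure hptIoo hc1 hc2 hx'
    have hGs : G s = ∫ x in a..b, gfun s x := by
      simp only [hG_def]
      apply intervalIntegral.integral_congr
      intro x hx
      rw [uIcc_of_le hab.le] at hx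
      exact hgceq s hsIcc x hx
    have hint1 : IntervalIntegrable (fun x => gfun s x) volume a b :=
      ContinuousOn.intervalIntegrable (by rw [uIcc_of_le hab.le]; exact sg)
    have hintBx : IntervalIntegrable Bxf volume a b :=
      ContinuousOn.intervalIntegrable (by rw [uIcc_of_le hab.le]; exact cBx)
    have hinte : IntervalIntegrable (fun x => efun s x) volume a b :=
      ContinuousOn.intervalIntegrable (by rw [uIcc_of_le hab.le]; exact se)
    have hsplit : (∫ x in a..b, (gfun s x - Bxf x))
        = (∫ x in a..b, gfun s x) - ∫ x in a..b, Bxf x :=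
      intervalIntegral.integral_sub hint1 hintBx
    have hmono : (∫ x in a..b, (gfun s x - Bxf x)) ≤ ∫ x in a..b, CC * efun s x :=
      intervalIntegral.integral_mono_on hab.le (hint1.sub hintBx) (hinte.const_mul CC) hpt2
    have hconst : (∫ x in a..b, CC * efun s x) = CC * E s := by
      rw [intervalIntegral.integral_const_mul]
    rw [hGs]
    linarith only [hIBP, hsplit, hmono, hconst]
  -- Step 3 : E ≡ 0 via a Gronwall-type argument
  set Φ : ℝ → ℝ := fun t => ∫ s in (0:ℝ)..t, G s with hΦ_def
  have hΦd : ∀ t : ℝ, HasDerivAt Φ (G t) t := fun t => primitive_hasDerivAt_s16 hGcont 0 t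
  have hΦc : Continuous Φ := by
    rw [continuous_iff_continuousAt]
    exact fun t => (hΦd t).continuousAt
  set F : ℝ → ℝ := fun t => Φ t * Real.exp (-(CC * t)) with hF_def
  have hFd : ∀ t : ℝ, HasDerivAt F
      (G t * Real.exp (-(CC * t)) + Φ t * (Real.exp (-(CC * t)) * -CC)) t := by
    intro t
    have h1 : HasDerivAt (fun r : ℝ => -(CC * r)) (-CC) t := by
      have h := ((hasDerivAt_id t).const_mul CC).neg
      rw [mul_one] at h
      exact h
    have h2 := h1.exp
    exact (hΦd t).mul h2
  have hanti : AntitoneOn F (Icc 0 T) := by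
    apply antitoneOn_of_deriv_nonpos (convex_Icc 0 T)
    · exact (hΦc.mul (by fun_prop)).continuousOn
    · intro t _
      exact ((hFd t).differentiableAt).differentiableWithinAt
    · intro t htint
      rw [interior_Icc] at htint
      rw [(hFd t).deriv]
      have hGs := hGE t htint
      have hEq := hEeq t (Ioo_subset_Icc_self htint)
      have hexp : 0 < Real.exp (-(CC * t)) := Real.exp_pos _
      have hGΦ : G t ≤ CC * Φ t := by
        rw [hEq] at hGs
        exact hGs
      nlinarith [mul_le_mul_of_nonneg_right hGΦ hexp.le]
  have hE0 : ∀ t ∈ Icc (0:ℝ) T, E t = 0 := by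
    intro t ht
    have h1 : F t ≤ F 0 := hanti h0T ht ht.1
    have hF0 : F 0 = 0 := by
      have hΦ0 : Φ 0 = 0 := intervalIntegral.integral_same
      simp only [hF_def]
      rw [hΦ0, zero_mul]
    have hexp : 0 < Real.exp (-(CC * t)) := Real.exp_pos _
    have hΦt : Φ t ≤ 0 := by
      by_contra hcon
      push_neg at hcon
      have : 0 < F t := by
        simp only [hF_def]
        positivity
      linarith
    have hEt : E t = Φ t := hEeq t ht
    have hEnn : 0 ≤ E t := by
      simp only [hE_def]
      apply intervalIntegral.integral_nonneg hab.le
      intro x hx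
      simp only [he_def]
      positivity
    linarith
  -- Step 4 : pointwise vanishing of the energy density
  have hez : ∀ t ∈ Icc (0:ℝ) T, ∀ x ∈ Icc a b, efun t x = 0 := by
    intro t ht
    apply eq_zero_of_integral_zero hab (slice_right ce ht)
    · intro x hx
      simp only [he_def]
      positivity
    · exact hE0 t ht
  have hvtz : ∀ t ∈ Icc (0:ℝ) T, ∀ x ∈ Icc a b, vt t x = 0 := by
    intro t ht x hx
    have h := hez t ht x hx
    simp only [he_def] at h
    have h1 : vt t x ^ 2 = 0 := by
      linarith only [h, sq_nonneg (vt t x), sq_nonneg (vx t x), sq_nonneg (w t x)]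
    exact pow_eq_zero_iff two_ne_zero |>.mp h1
  have hwz : ∀ t ∈ Icc (0:ℝ) T, ∀ x ∈ Icc a b, w t x = 0 := by
    intro t ht x hx
    have h := hez t ht x hx
    simp only [he_def] at h
    have h1 : w t x ^ 2 = 0 := by
      linarith only [h, sq_nonneg (vt t x), sq_nonneg (vx t x), sq_nonneg (w t x)]
    exact pow_eq_zero_iff two_ne_zero |>.mp h1
  -- conclusion
  intro t ht x hx
  constructor
  · have hslice : ContinuousOn (fun s => vt s x) (Icc (0:ℝ) T) := slice_left cvt hx
    have hfe := ftc_within_s16 hT.le (fun s hs => hdvt s hs x hx) hslice t ht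
    have hzero : (∫ s in (0:ℝ)..t, vt s x) = 0 := by
      have heqon : EqOn (fun s => vt s x) (fun _ => (0:ℝ)) (uIcc 0 t) := by
        intro s hs
        rw [uIcc_of_le ht.1] at hs
        exact hvtz s ⟨hs.1, hs.2.trans ht.2⟩ x hx
      rw [intervalIntegral.integral_congr heqon]
      simp
    have hv0' : u₁ 0 x - u₂ 0 x = 0 := hv0 x hx
    have hvv : u₁ t x - u₂ t x = 0 := by
      have hfe' : (∫ s in (0:ℝ)..t, vt s x) = (u₁ t x - u₂ t x) - (u₁ 0 x - u₂ 0 x) := hfe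
      linarith only [hfe', hzero, hv0']
    linarith only [hvv]
  · have hww : θ₁ t x - θ₂ t x = 0 := hwz t ht x hx
    linarith only [hww]
end
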